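/- arXiv:1703.10101 — 7 statements merged into one kernel-verified Lean document; each statement's English description precedes it below -/
import Mathlib

section
/- Let π : Y → X be a surjective homomorphism of finite groups and k ≥ 1. Then p_k(Y) ≥ (1 - Σ_{[M]} 1/[Y:M]^{k-1}) · p_k(X), where p_k(G) denotes the probability that a uniformly random k-tuple of elements of G generates G, and the sum runs over Y-conjugacy classes [M] of proper maximal subgroups M of Y with π(M) = X. -/
open Pointwise

/-- The probability that a uniformly random `k`-tuple of elements of `G` generates `G`. -/
noncomputable def pgen (k : ℕ) (G : Type*) [Group G] : ℝ :=
  (Nat.card {v : Fin k → G // Subgroup.closure (Set.range v) = ⊤} : ℝ) /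
    (Nat.card G : ℝ) ^ k

/-- `R` is a set of representatives of the `Y`-conjugacy classes of proper maximal
subgroups of `Y` surjecting onto `X` (the set `G(Y|X)` of the paper). -/
def IsConjClassReps {Y X : Type*} [Group Y] [Group X] (π : Y →* X)
    (R : Finset (Subgroup Y)) : Prop :=
  (∀ M ∈ R, IsCoatom M ∧ M.map π = ⊤) ∧
    ∀ N : Subgroup Y, IsCoatom N → N.map π = ⊤ →
      ∃! M, M ∈ R ∧ ∃ y : Y, Subgroup.map (MulAut.conj y).toMonoidHom N = M

section Aux

variable {A B : Type*} [Group A] [Group B]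

/-- Counting preimage of a set under a surjective homomorphism. -/
lemma aux_card_preimage (f : A →* B) (hf : Function.Surjective f) (s : Set B) :
    Nat.card (f ⁻¹' s) = Nat.card s * Nat.card f.ker := by
  classical
  choose r hr using hf
  have e : (f ⁻¹' s) ≃ s × f.ker :=
  { toFun := fun a => (⟨f a, a.2⟩, ⟨(r (f a))⁻¹ * a, by
      simp [MonoidHom.mem_ker, hr]⟩)
    invFun := fun p => ⟨r p.1 * p.2, by
      have h2 : f (p.2 : A) = 1 := p.2.2
      simp only [Set.mem_preimage, map_mul, hr, h2, mul_one]
      exact p.1.2⟩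
    left_inv := fun a => by
      ext
      simp
    right_inv := fun p => by
      obtain ⟨⟨b, hb⟩, ⟨c, hc⟩⟩ := p
      have hc' : f c = 1 := hc
      have key : f (r b * c) = b := by simp [map_mul, hr, hc']
      refine Prod.ext (Subtype.ext ?_) (Subtype.ext ?_)
      · exact key
      · simp only [key]
        group }
  rw [Nat.card_congr e, Nat.card_prod]

lemma aux_card_eq (f : A →* B) (hf : Function.Surjective f) :
    Nat.card A = Nat.card B * Nat.card f.ker := by
  have h := aux_card_preimage f hf Set.univ
  simpa [Nat.card_congr (Equiv.Set.univ A), Nat.card_congr (Equiv.Set.univ B)] using h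

lemma aux_key (f : A →* B) (hf : Function.Surjective f) (s : Set B) :
    Nat.card (f ⁻¹' s) * Nat.card B = Nat.card s * Nat.card A := by
  rw [aux_card_preimage f hf s, aux_card_eq f hf]
  ring

/-- Counting generating tuples through a surjection. -/
lemma aux_tuples [Finite A] [Finite B] (f : A →* B) (hf : Function.Surjective f) (k : ℕ) :
    Nat.card {v : Fin k → A // Subgroup.closure (Set.range (f ∘ v)) = ⊤} * (Nat.card B) ^ k
      = Nat.card {w : Fin k → B // Subgroup.closure (Set.range w) = ⊤} * (Nat.card A) ^ k := by
  have hsurj : Function.Surjective (f.compLeft (Fin k)) := fun w =>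
    ⟨fun i => (hf (w i)).choose, funext fun i => (hf (w i)).choose_spec⟩
  have key := aux_key (f.compLeft (Fin k)) hsurj
    {w : Fin k → B | Subgroup.closure (Set.range w) = ⊤}
  have hcongr : Nat.card ((f.compLeft (Fin k)) ⁻¹'
        {w : Fin k → B | Subgroup.closure (Set.range w) = ⊤})
      = Nat.card {v : Fin k → A // Subgroup.closure (Set.range (f ∘ v)) = ⊤} :=
    Nat.card_congr (Equiv.subtypeEquivRight (fun v => Iff.rfl))
  rw [hcongr] at key
  have hA : Nat.card (Fin k → A) = (Nat.card A) ^ k := by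
    rw [Nat.card_fun]; simp
  have hB : Nat.card (Fin k → B) = (Nat.card B) ^ k := by
    rw [Nat.card_fun]; simp
  rw [hA, hB] at key
  exact key

end Aux

section Subgp

variable {Y X : Type*} [Group Y] [Group X]

/-- Counting tuples that lie in a subgroup `M` surjecting onto `X` and generate `X`. -/
lemma aux_subgroup_tuples [Finite Y] [Finite X] (π : Y →* X)
    (M : Subgroup Y) (hM : M.map π = ⊤) (k : ℕ) :
    Nat.card {v : Fin k → Y // (∀ i, v i ∈ M) ∧
        Subgroup.closure (Set.range (π ∘ v)) = ⊤} * (Nat.card X) ^ k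
      = Nat.card {w : Fin k → X // Subgroup.closure (Set.range w) = ⊤}
          * (Nat.card M) ^ k := by
  set g : ↥M →* X := π.comp M.subtype with hg_def
  have hg : Function.Surjective g := by
    intro x
    have hx : x ∈ M.map π := hM ▸ Subgroup.mem_top x
    obtain ⟨m, hm, hmx⟩ := hx
    exact ⟨⟨m, hm⟩, hmx⟩
  have key := aux_tuples g hg k
  have e : {w : Fin k → ↥M // Subgroup.closure (Set.range (g ∘ w)) = ⊤} ≃
      {v : Fin k → Y // (∀ i, v i ∈ M) ∧ Subgroup.closure (Set.range (π ∘ v)) = ⊤} :=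
  { toFun := fun w => ⟨fun i => (w.1 i : Y), fun i => (w.1 i).2, w.2⟩
    invFun := fun v => ⟨fun i => ⟨v.1 i, v.2.1 i⟩, v.2.2⟩
    left_inv := fun w => rfl
    right_inv := fun v => rfl }
  rw [Nat.card_congr e] at key
  exact key

lemma aux_map_conj_self (M : Subgroup Y) {n : Y} (hn : n ∈ (Subgroup.normalizer (M : Set Y))) :
    M.map (MulAut.conj n).toMonoidHom = M := by
  ext x
  simp only [Subgroup.mem_map, MulEquiv.coe_toMonoidHom, MulAut.conj_apply]
  constructor
  · rintro ⟨m, hm, rfl⟩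
    exact (Subgroup.mem_normalizer_iff.mp hn m).mp hm
  · intro hx
    refine ⟨n⁻¹ * x * n, (Subgroup.mem_normalizer_iff''.mp hn x).mp hx, ?_⟩
    group

lemma aux_map_conj_inv (N M : Subgroup Y) (y : Y)
    (h : N.map (MulAut.conj y).toMonoidHom = M) :
    M.map (MulAut.conj y⁻¹).toMonoidHom = N := by
  subst h
  ext x
  simp only [Subgroup.mem_map, MulEquiv.coe_toMonoidHom, MulAut.conj_apply]
  constructor
  · rintro ⟨a, ⟨b, hb, rfl⟩, rfl⟩
    have : y⁻¹ * (y * b * y⁻¹) * y⁻¹⁻¹ = b := by group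
    rwa [this]
  · intro hx
    refine ⟨y * x * y⁻¹, ⟨x, hx, rfl⟩, by group⟩

lemma aux_card_conj (M : Subgroup Y) (y : Y) :
    Nat.card (M.map (MulAut.conj y).toMonoidHom) = Nat.card M := by
  have hinj : Function.Injective (MulAut.conj y).toMonoidHom := (MulAut.conj y).injective
  exact (Nat.card_congr (Subgroup.equivMapOfInjective M _ hinj).toEquiv).symm

/-- The number of conjugates of `M` is at most the index of `M`. -/
lemma aux_card_conjugates_le [Fintype Y] (M : Subgroup Y) (s : Finset (Subgroup Y))
    (hs : ∀ N ∈ s, ∃ y : Y, M.map (MulAut.conj y).toMonoidHom = N) :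
    s.card ≤ M.index := by
  classical
  have : Fintype (Y ⧸ (Subgroup.normalizer (M : Set Y))) := Fintype.ofFinite _
  set F : Y → Subgroup Y := fun y => M.map (MulAut.conj y).toMonoidHom with hF
  have hlift : ∀ a b : Y, @Setoid.r Y (QuotientGroup.leftRel (Subgroup.normalizer (M : Set Y))) a b → F a = F b := by
    intro a b hab
    have hab' : a⁻¹ * b ∈ (Subgroup.normalizer (M : Set Y)) := (QuotientGroup.leftRel_apply).mp hab
    have hb : b = a * (a⁻¹ * b) := by group
    rw [hF]
    simp only
    rw [hb, show MulAut.conj (a * (a⁻¹ * b)) = MulAut.conj a * MulAut.conj (a⁻¹ * b) from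
      map_mul (MulAut.conj) a (a⁻¹ * b)]
    have : (MulAut.conj a * MulAut.conj (a⁻¹ * b)).toMonoidHom
        = (MulAut.conj a).toMonoidHom.comp (MulAut.conj (a⁻¹ * b)).toMonoidHom := rfl
    rw [this, ← Subgroup.map_map, aux_map_conj_self M hab']
  set Fbar : Y ⧸ (Subgroup.normalizer (M : Set Y)) → Subgroup Y := fun q => Quotient.liftOn' q F hlift with hFbar
  have hsub : s ⊆ Finset.image Fbar Finset.univ := by
    intro N hN
    obtain ⟨y, hy⟩ := hs N hN
    refine Finset.mem_image.mpr ⟨QuotientGroup.mk y, Finset.mem_univ _, ?_⟩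
    simpa [hFbar, hF] using hy
  calc s.card ≤ (Finset.image Fbar Finset.univ).card := Finset.card_le_card hsub
    _ ≤ Finset.univ.card := Finset.card_image_le
    _ = Nat.card (Y ⧸ (Subgroup.normalizer (M : Set Y))) := by
        rw [Finset.card_univ, Nat.card_eq_fintype_card]
    _ = (Subgroup.normalizer (M : Set Y)).index := rfl
    _ ≤ M.index := Nat.le_of_dvd
        (Nat.pos_of_ne_zero Subgroup.index_ne_zero_of_finite)
        (Subgroup.index_dvd_of_le Subgroup.le_normalizer)

end Subgp

/-- Bhattacharjee's inequality: for a surjective homomorphism `π : Y → X`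
of finite groups and `k ≥ 1`,
`p_k(Y) ≥ (1 - Σ_{[M] ∈ G(Y|X)} [Y:M]^{-(k-1)}) ⬝ p_k(X)`, the sum being over the
`Y`-conjugacy classes of proper maximal subgroups of `Y` surjecting onto `X`. -/
theorem bhattacharjee_inequality {Y X : Type*} [Group Y] [Group X] [Fintype Y] [Fintype X]
    (π : Y →* X) (hπ : Function.Surjective π) (k : ℕ) (hk : 1 ≤ k)
    (R : Finset (Subgroup Y)) (hR : IsConjClassReps π R) :
    pgen k Y ≥ (1 - ∑ M ∈ R, (1 : ℝ) / (M.index : ℝ) ^ (k - 1)) * pgen k X := by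
  classical
  obtain ⟨hR1, hR2⟩ := hR
  have : Fintype (Subgroup Y) := Fintype.ofFinite _
  set K : ℕ := k - 1 with hK
  have hkK : k = K + 1 := by omega
  -- cardinalities
  set gX : ℕ := Nat.card {w : Fin k → X // Subgroup.closure (Set.range w) = ⊤} with hgX
  set gY : ℕ := Nat.card {v : Fin k → Y // Subgroup.closure (Set.range v) = ⊤} with hgY
  set x : ℝ := (Nat.card X : ℝ) with hx_def
  set y : ℝ := (Nat.card Y : ℝ) with hy_def
  have hx : 0 < x := by
    rw [hx_def]
    exact_mod_cast Nat.card_pos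
  have hy : 0 < y := by
    rw [hy_def]
    exact_mod_cast Nat.card_pos
  -- Finsets of tuples
  set Tf : Finset (Fin k → Y) :=
    Finset.univ.filter (fun v => Subgroup.closure (Set.range (π ∘ v)) = ⊤) with hTf
  set Gf : Finset (Fin k → Y) :=
    Finset.univ.filter (fun v => Subgroup.closure (Set.range v) = ⊤) with hGf
  set Bf : Finset (Fin k → Y) :=
    Finset.univ.filter (fun v => Subgroup.closure (Set.range (π ∘ v)) = ⊤ ∧
      Subgroup.closure (Set.range v) ≠ ⊤) with hBf
  set Cf : Subgroup Y → Finset (Fin k → Y) := fun N =>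
    Finset.univ.filter (fun v => (∀ i, v i ∈ N) ∧
      Subgroup.closure (Set.range (π ∘ v)) = ⊤) with hCf
  -- subtype card = filter card
  have card_filter : ∀ (p : (Fin k → Y) → Prop) [DecidablePred p],
      Nat.card {v : Fin k → Y // p v} = (Finset.univ.filter p).card := by
    intro p _
    rw [Nat.card_eq_fintype_card, Fintype.card_subtype]
  have hgY_eq : gY = Gf.card := by
    rw [hgY, hGf]; exact card_filter _
  -- (1) Tf.card ≤ gY + Bf.card
  have h1 : Tf.card ≤ gY + Bf.card := by
    have hsub : Tf ⊆ Gf ∪ Bf := by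
      intro v hv
      rw [hTf, Finset.mem_filter] at hv
      by_cases hcl : Subgroup.closure (Set.range v) = ⊤
      · exact Finset.mem_union_left _ (by rw [hGf, Finset.mem_filter]; exact ⟨hv.1, hcl⟩)
      · exact Finset.mem_union_right _
          (by rw [hBf, Finset.mem_filter]; exact ⟨hv.1, hv.2, hcl⟩)
    calc Tf.card ≤ (Gf ∪ Bf).card := Finset.card_le_card hsub
      _ ≤ Gf.card + Bf.card := Finset.card_union_le _ _
      _ = gY + Bf.card := by rw [hgY_eq]
  -- (2) Tf.card * |X|^k = gX * |Y|^k
  have h2 : Tf.card * (Nat.card X) ^ k = gX * (Nat.card Y) ^ k := by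
    have := aux_tuples π hπ k
    rw [hTf]
    rw [← card_filter (fun v => Subgroup.closure (Set.range (π ∘ v)) = ⊤)]
    exact this
  -- the set of maximal subgroups surjecting onto X
  set maxS : Finset (Subgroup Y) :=
    Finset.univ.filter (fun N => IsCoatom N ∧ N.map π = ⊤) with hmaxS
  -- (3) Bf ⊆ union of Cf N
  have h3 : Bf ⊆ maxS.biUnion Cf := by
    intro v hv
    rw [hBf, Finset.mem_filter] at hv
    obtain ⟨-, hgen, hne⟩ := hv
    have hcoatomic : IsCoatomic (Subgroup Y) :=
      isCoatomic_of_orderTop_gt_wellFounded (wellFounded_gt)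
    obtain hT | ⟨N, hN, hle⟩ := hcoatomic.eq_top_or_exists_le_coatom
      (Subgroup.closure (Set.range v))
    · exact absurd hT hne
    · have hmapN : N.map π = ⊤ := by
        have h1' : Subgroup.closure (Set.range (π ∘ v)) ≤ N.map π := by
          rw [Set.range_comp, ← MonoidHom.map_closure]
          exact Subgroup.map_mono hle
        rw [hgen] at h1'
        exact top_le_iff.mp h1'
      refine Finset.mem_biUnion.mpr ⟨N, ?_, ?_⟩
      · rw [hmaxS, Finset.mem_filter]; exact ⟨Finset.mem_univ _, hN, hmapN⟩
      · rw [hCf]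
        simp only [Finset.mem_filter, Finset.mem_univ, true_and]
        exact ⟨fun i => hle (Subgroup.subset_closure (Set.mem_range_self i)), hgen⟩
  -- (4) Bf.card ≤ Σ_{N ∈ maxS} (Cf N).card
  have h4 : Bf.card ≤ ∑ N ∈ maxS, (Cf N).card :=
    le_trans (Finset.card_le_card h3) Finset.card_biUnion_le
  -- (5) choose representatives
  set rep : Subgroup Y → Subgroup Y := fun N =>
    if h : IsCoatom N ∧ N.map π = ⊤ then (hR2 N h.1 h.2).exists.choose else ⊥ with hrep
  have hrep_spec : ∀ N, IsCoatom N → N.map π = ⊤ →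
      rep N ∈ R ∧ ∃ y : Y, N.map (MulAut.conj y).toMonoidHom = rep N := by
    intro N h1' h2'
    have := (hR2 N h1' h2').exists.choose_spec
    rw [hrep]
    simp only [dif_pos (And.intro h1' h2')]
    exact this
  have hrep_maps : ∀ N ∈ maxS, rep N ∈ R := by
    intro N hN
    rw [hmaxS, Finset.mem_filter] at hN
    exact (hrep_spec N hN.2.1 hN.2.2).1
  have h5 : ∑ N ∈ maxS, (Cf N).card
      = ∑ M ∈ R, ∑ N ∈ maxS.filter (fun N => rep N = M), (Cf N).card :=
    (Finset.sum_fiberwise_of_maps_to hrep_maps _).symm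
  -- (6) per-fiber bounds
  have h6 : ∀ M ∈ R, ∀ N ∈ maxS.filter (fun N => rep N = M),
      (Cf N).card * (Nat.card X) ^ k = gX * (Nat.card M) ^ k := by
    intro M hM N hN
    rw [Finset.mem_filter, hmaxS, Finset.mem_filter] at hN
    obtain ⟨⟨-, hNco, hNmap⟩, hNrep⟩ := hN
    have hcard : Nat.card N = Nat.card M := by
      obtain ⟨-, z, hz⟩ := hrep_spec N hNco hNmap
      rw [hNrep] at hz
      rw [← hz, aux_card_conj]
    have := aux_subgroup_tuples π N hNmap k
    rw [hCf]
    rw [← card_filter (fun v => (∀ i, v i ∈ N) ∧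
      Subgroup.closure (Set.range (π ∘ v)) = ⊤)]
    rw [this, hcard]
  have h6' : ∀ M ∈ R, (maxS.filter (fun N => rep N = M)).card ≤ M.index := by
    intro M hM
    refine aux_card_conjugates_le M _ ?_
    intro N hN
    rw [Finset.mem_filter, hmaxS, Finset.mem_filter] at hN
    obtain ⟨⟨-, hNco, hNmap⟩, hNrep⟩ := hN
    obtain ⟨-, z, hz⟩ := hrep_spec N hNco hNmap
    rw [hNrep] at hz
    exact ⟨z⁻¹, aux_map_conj_inv N M z hz⟩
  -- index and card positivity per M
  have hidx_pos : ∀ M ∈ R, (0 : ℝ) < (M.index : ℝ) := by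
    intro M hM
    have : M.index ≠ 0 := Subgroup.index_ne_zero_of_finite
    exact_mod_cast Nat.pos_of_ne_zero this
  have hm_pos : ∀ M : Subgroup Y, (0 : ℝ) < (Nat.card M : ℝ) := by
    intro M
    have : 0 < Nat.card M := Nat.card_pos
    exact_mod_cast this
  have hD : ∀ M : Subgroup Y, (Nat.card M : ℝ) * (M.index : ℝ) = y := by
    intro M
    rw [hy_def]
    exact_mod_cast congrArg (Nat.cast : ℕ → ℝ) (Subgroup.card_mul_index (H := M))
  -- real versions
  have h2R : (Tf.card : ℝ) * x ^ k = (gX : ℝ) * y ^ k := by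
    rw [hx_def, hy_def]
    exact_mod_cast congrArg Nat.cast h2
  -- bound on Bf in ℝ
  have h7 : (Bf.card : ℝ) * x ^ k
      ≤ ∑ M ∈ R, (M.index : ℝ) * (gX : ℝ) * (Nat.card M : ℝ) ^ k := by
    have step : (Bf.card : ℝ) ≤ ∑ M ∈ R,
        (maxS.filter (fun N => rep N = M)).card * ((gX : ℝ) * (Nat.card M : ℝ) ^ k / x ^ k) := by
      have hBf_le : (Bf.card : ℝ) ≤ ∑ M ∈ R,
          ∑ N ∈ maxS.filter (fun N => rep N = M), ((Cf N).card : ℝ) := by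
        have := h4
        rw [h5] at this
        exact_mod_cast this
      refine hBf_le.trans (Finset.sum_le_sum ?_)
      intro M hM
      rw [Finset.card_eq_sum_ones (maxS.filter (fun N => rep N = M))]
      push_cast
      rw [Finset.sum_mul]
      refine Finset.sum_le_sum ?_
      intro N hN
      have heq := h6 M hM N hN
      have : ((Cf N).card : ℝ) * x ^ k = (gX : ℝ) * (Nat.card M : ℝ) ^ k := by
        rw [hx_def]
        exact_mod_cast congrArg Nat.cast heq
      rw [one_mul, le_div_iff₀ (by positivity)]
      exact le_of_eq this
    calc (Bf.card : ℝ) * x ^ k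
        ≤ (∑ M ∈ R, (maxS.filter (fun N => rep N = M)).card *
            ((gX : ℝ) * (Nat.card M : ℝ) ^ k / x ^ k)) * x ^ k := by
          exact mul_le_mul_of_nonneg_right step (by positivity)
      _ = ∑ M ∈ R, (maxS.filter (fun N => rep N = M)).card *
            ((gX : ℝ) * (Nat.card M : ℝ) ^ k) := by
          rw [Finset.sum_mul]
          refine Finset.sum_congr rfl ?_
          intro M hM
          have hxk0 : x ^ k ≠ 0 := by positivity
          rw [mul_assoc, div_mul_cancel₀ _ hxk0]
      _ ≤ ∑ M ∈ R, (M.index : ℝ) * (gX : ℝ) * (Nat.card M : ℝ) ^ k := by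
          refine Finset.sum_le_sum ?_
          intro M hM
          have hle : ((maxS.filter (fun N => rep N = M)).card : ℝ) ≤ (M.index : ℝ) := by
            exact_mod_cast h6' M hM
          calc ((maxS.filter (fun N => rep N = M)).card : ℝ) *
                ((gX : ℝ) * (Nat.card M : ℝ) ^ k)
              ≤ (M.index : ℝ) * ((gX : ℝ) * (Nat.card M : ℝ) ^ k) := by
                refine mul_le_mul_of_nonneg_right hle (by positivity)
            _ = (M.index : ℝ) * (gX : ℝ) * (Nat.card M : ℝ) ^ k := by ring
  -- final assembly
  have pgenX_eq : pgen k X = (gX : ℝ) / x ^ k := rfl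
  have pgenY_eq : pgen k Y = (gY : ℝ) / y ^ k := rfl
  have hTy : (Tf.card : ℝ) / y ^ k = (gX : ℝ) / x ^ k := by
    rw [div_eq_div_iff (by positivity) (by positivity)]
    linarith [h2R]
  have hBy : (Bf.card : ℝ) / y ^ k ≤ ∑ M ∈ R, (gX : ℝ) / x ^ k * (1 / (M.index : ℝ) ^ K) := by
    have hstep : (Bf.card : ℝ) / y ^ k
        ≤ (∑ M ∈ R, (M.index : ℝ) * (gX : ℝ) * (Nat.card M : ℝ) ^ k) / (x ^ k * y ^ k) := by
      rw [div_le_div_iff₀ (by positivity) (by positivity)]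
      calc (Bf.card : ℝ) * (x ^ k * y ^ k) = ((Bf.card : ℝ) * x ^ k) * y ^ k := by ring
        _ ≤ (∑ M ∈ R, (M.index : ℝ) * (gX : ℝ) * (Nat.card M : ℝ) ^ k) * y ^ k :=
            mul_le_mul_of_nonneg_right h7 (by positivity)
    refine hstep.trans (le_of_eq ?_)
    rw [Finset.sum_div]
    refine Finset.sum_congr rfl ?_
    intro M hM
    have hiM := hidx_pos M hM
    have hiK : ((M.index : ℝ)) ^ K ≠ 0 := by positivity
    have hxk : x ^ k ≠ 0 := by positivity
    have hykne : y ^ k ≠ 0 := by positivity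
    have key : (M.index : ℝ) * (Nat.card M : ℝ) ^ k = y ^ k / (M.index : ℝ) ^ K := by
      rw [eq_div_iff hiK]
      have hyk : (Nat.card M : ℝ) ^ k * (M.index : ℝ) ^ k = y ^ k := by
        rw [← mul_pow, hD M]
      rw [← hyk, hkK]; ring
    calc (M.index : ℝ) * (gX : ℝ) * (Nat.card M : ℝ) ^ k / (x ^ k * y ^ k)
        = (gX : ℝ) * (((M.index : ℝ) * (Nat.card M : ℝ) ^ k) / (x ^ k * y ^ k)) := by ring
      _ = (gX : ℝ) * ((y ^ k / (M.index : ℝ) ^ K) / (x ^ k * y ^ k)) := by rw [key]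
      _ = (gX : ℝ) / x ^ k * (1 / (M.index : ℝ) ^ K) := by
          field_simp
  have hmain : (gY : ℝ) / y ^ k
      ≥ (gX : ℝ) / x ^ k - ∑ M ∈ R, (gX : ℝ) / x ^ k * (1 / (M.index : ℝ) ^ K) := by
    have h1R : (Tf.card : ℝ) ≤ (gY : ℝ) + (Bf.card : ℝ) := by exact_mod_cast h1
    have hGy : (gY : ℝ) / y ^ k ≥ (Tf.card : ℝ) / y ^ k - (Bf.card : ℝ) / y ^ k := by
      rw [ge_iff_le, sub_le_iff_le_add, ← add_div, div_le_div_iff_of_pos_right]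
      · exact h1R
      · positivity
    calc (gY : ℝ) / y ^ k ≥ (Tf.card : ℝ) / y ^ k - (Bf.card : ℝ) / y ^ k := hGy
      _ ≥ (gX : ℝ) / x ^ k - ∑ M ∈ R, (gX : ℝ) / x ^ k * (1 / (M.index : ℝ) ^ K) := by
          rw [hTy]
          exact sub_le_sub_left hBy _
  rw [pgenY_eq, pgenX_eq]
  calc (1 - ∑ M ∈ R, (1 : ℝ) / (M.index : ℝ) ^ (k - 1)) * ((gX : ℝ) / x ^ k)
      = (gX : ℝ) / x ^ k - ∑ M ∈ R, (gX : ℝ) / x ^ k * (1 / (M.index : ℝ) ^ K) := by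
        rw [← hK, sub_mul, one_mul, Finset.sum_mul]
        congr 1
        refine Finset.sum_congr rfl ?_
        intro M hM
        ring
    _ ≤ (gY : ℝ) / y ^ k := hmain
end

section
/- Let L < Sym(D) be a nontrivial permutation group on a finite set D fixing some point j ∈ D. Then for every n ≥ 1 the iterated wreath product L_n has L^n as a quotient, and hence L_∞ admits L^ℕ as a quotient and is not topologically finitely generated. -/
variable {D : Type*}

/-- Splitting off the last letter: `D^{n+1} ≃ D^n × D`. -/
def snocEquiv (D : Type*) (n : ℕ) : (Fin (n + 1) → D) ≃ (Fin n → D) × D where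
  toFun v := (Fin.init v, v (Fin.last n))
  invFun p := Fin.snoc p.1 p.2
  left_inv v := Fin.snoc_init_self v
  right_inv p := by
    refine Prod.ext ?_ ?_
    · simp
    · simp

/-- The permutation `(v, d) ↦ (x v, f v d)` of `D^{n+1} = D^n × D`. -/
def twist {n : ℕ} (x : Equiv.Perm (Fin n → D)) (f : (Fin n → D) → Equiv.Perm D) :
    Equiv.Perm (Fin (n + 1) → D) :=
  (snocEquiv D n).trans (((x.prodShear f).trans (snocEquiv D n).symm))

lemma twist_mul {n : ℕ} (x₁ x₂ : Equiv.Perm (Fin n → D))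
    (f₁ f₂ : (Fin n → D) → Equiv.Perm D) :
    twist x₁ f₁ * twist x₂ f₂ = twist (x₁ * x₂) (fun v => f₁ (x₂ v) * f₂ v) := by
  ext w
  simp [twist, Equiv.prodShear, Equiv.Perm.mul_apply]

lemma twist_one {n : ℕ} :
    (twist (1 : Equiv.Perm (Fin n → D)) (fun _ => 1)) = 1 := by
  ext w
  simp [twist, Equiv.prodShear, snocEquiv]

lemma twist_inv {n : ℕ} (x : Equiv.Perm (Fin n → D)) (f : (Fin n → D) → Equiv.Perm D) :
    (twist x f)⁻¹ = twist x⁻¹ (fun v => (f (x⁻¹ v))⁻¹) := by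
  apply inv_eq_of_mul_eq_one_left
  rw [twist_mul]
  simp [twist_one]

/-- The `n`-fold iterated wreath product `L_n = F ≀ ⋯ ≀ F` of a permutation group
`F ≤ Sym(D)`, realized as a group of permutations of `D^n`; it is defined recursively
by `L_0 = 1` and `L_{n+1} = L_n ⋉ F^{D^n}`, where `(x, f)` acts on
`D^{n+1} = D^n × D` by `(v, d) ↦ (x v, f v d)`. -/
def IW (F : Subgroup (Equiv.Perm D)) : (n : ℕ) → Subgroup (Equiv.Perm (Fin n → D))
  | 0 => ⊤
  | (n + 1) =>
    { carrier := {π | ∃ x ∈ IW F n, ∃ f : (Fin n → D) → Equiv.Perm D,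
        (∀ v, f v ∈ F) ∧ π = twist x f}
      one_mem' := ⟨1, (IW F n).one_mem, fun _ => 1, fun _ => F.one_mem, twist_one.symm⟩
      mul_mem' := by
        rintro a b ⟨x₁, hx₁, f₁, hf₁, rfl⟩ ⟨x₂, hx₂, f₂, hf₂, rfl⟩
        exact ⟨x₁ * x₂, (IW F n).mul_mem hx₁ hx₂, fun v => f₁ (x₂ v) * f₂ v,
          fun v => F.mul_mem (hf₁ _) (hf₂ _), twist_mul x₁ x₂ f₁ f₂⟩
      inv_mem' := by
        rintro a ⟨x, hx, f, hf, rfl⟩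
        exact ⟨x⁻¹, (IW F n).inv_mem hx, fun v => (f (x⁻¹ v))⁻¹,
          fun v => F.inv_mem (hf _), twist_inv x f⟩ }

/-- The profinite group `L_∞ = lim← L_n`, realized concretely as the group of
compatible sequences `(g_n)_n` with `g_n ∈ L_n`: `g_n` is the permutation of `D^n`
induced by `g_{n+1}` by forgetting the last letter. -/
def IWlim (F : Subgroup (Equiv.Perm D)) : Subgroup (∀ n, Equiv.Perm (Fin n → D)) where
  carrier := {g | (∀ n, g n ∈ IW F n) ∧
    ∀ (n : ℕ) (v : Fin n → D) (d : D), Fin.init (g (n + 1) (Fin.snoc v d)) = g n v}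
  one_mem' := ⟨fun n => (IW F n).one_mem, fun n v d => by simp⟩
  mul_mem' := by
    rintro a b ⟨ha1, ha2⟩ ⟨hb1, hb2⟩
    refine ⟨fun n => (IW F n).mul_mem (ha1 n) (hb1 n), fun n v d => ?_⟩
    have h1 := hb2 n v d
    have : (a * b) (n + 1) (Fin.snoc v d) =
        a (n + 1) (Fin.snoc (Fin.init (b (n + 1) (Fin.snoc v d)))
          ((b (n + 1) (Fin.snoc v d)) (Fin.last n))) := by
      rw [Fin.snoc_init_self]
      rfl
    rw [this, ha2, h1]
    rfl
  inv_mem' := by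
    rintro a ⟨ha1, ha2⟩
    refine ⟨fun n => (IW F n).inv_mem (ha1 n), fun n v d => ?_⟩
    have key : a (n + 1) ((a⁻¹ (n + 1)) (Fin.snoc v d)) = Fin.snoc v d := by
      simp [Equiv.Perm.inv_def]
    have h2 : Fin.init (a (n + 1) (Fin.snoc (Fin.init ((a⁻¹ (n + 1)) (Fin.snoc v d)))
        (((a⁻¹ (n + 1)) (Fin.snoc v d)) (Fin.last n)))) =
        a n (Fin.init ((a⁻¹ (n + 1)) (Fin.snoc v d))) := ha2 n _ _
    rw [Fin.snoc_init_self, key] at h2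
    have h2' : a n (Fin.init ((a⁻¹ (n + 1)) (Fin.snoc v d))) = v := by
      rw [← h2]; simp
    have h3 := congrArg (⇑(a n)⁻¹) h2'
    simpa using h3

instance (priority := 50) discretePermTopology (α : Type*) :
    TopologicalSpace (Equiv.Perm α) := ⊥

instance (α : Type*) : DiscreteTopology (Equiv.Perm α) := ⟨rfl⟩

instance (priority := 50) discreteTopologicalGroup (G : Type*) [Group G]
    [TopologicalSpace G] [DiscreteTopology G] : IsTopologicalGroup G :=
  { toContinuousMul := inferInstance, toContinuousInv := inferInstance }


section Aux

variable {D : Type*}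

lemma twist_apply {n : ℕ} (x : Equiv.Perm (Fin n → D)) (f : (Fin n → D) → Equiv.Perm D)
    (v : Fin n → D) (d : D) :
    twist x f (Fin.snoc v d) = Fin.snoc (x v) (f v d) := by
  simp [twist, snocEquiv, Equiv.prodShear]

lemma twist_inj {n : ℕ} (d0 : D) {x x' : Equiv.Perm (Fin n → D)}
    {f f' : (Fin n → D) → Equiv.Perm D} (h : twist x f = twist x' f') :
    x = x' ∧ f = f' := by
  have key : ∀ v d, (Fin.snoc (x v) (f v d) : Fin (n+1) → D) = Fin.snoc (x' v) (f' v d) := by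
    intro v d
    rw [← twist_apply, ← twist_apply, h]
  constructor
  · ext v : 1
    have := congrArg Fin.init (key v d0)
    simpa using this
  · funext v
    ext d : 1
    have := congrArg (fun w => w (Fin.last n)) (key v d)
    simpa using this

lemma snoc_const {n : ℕ} (j : D) :
    (Fin.snoc (fun _ => j) j : Fin (n+1) → D) = fun _ => j := by
  funext i
  refine Fin.lastCases ?_ ?_ i <;> simp

lemma mem_IW_succ {F : Subgroup (Equiv.Perm D)} {n : ℕ} {π : Equiv.Perm (Fin (n+1) → D)} :
    π ∈ IW F (n+1) ↔ ∃ x ∈ IW F n, ∃ f : (Fin n → D) → Equiv.Perm D,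
      (∀ v, f v ∈ F) ∧ π = twist x f := Iff.rfl

lemma IW_fixes {F : Subgroup (Equiv.Perm D)} {j : D} (hj : ∀ g ∈ F, g j = j) :
    ∀ n, ∀ π ∈ IW F n, π (fun _ => j) = fun _ => j := by
  intro n
  induction n with
  | zero => intro π _; exact Subsingleton.elim _ _
  | succ n ih =>
    rintro π ⟨x, hx, f, hf, rfl⟩
    have : (fun _ : Fin (n+1) => j) = Fin.snoc (fun _ => j) j := (snoc_const j).symm
    rw [this, twist_apply, ih x hx, hj _ (hf _), snoc_const]

end Aux
section Aux2

variable {D : Type*} {F : Subgroup (Equiv.Perm D)}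

noncomputable def decompX {n : ℕ} (π : Equiv.Perm (Fin (n+1) → D)) (h : π ∈ IW F (n+1)) :
    Equiv.Perm (Fin n → D) := (mem_IW_succ.mp h).choose

noncomputable def decompF {n : ℕ} (π : Equiv.Perm (Fin (n+1) → D)) (h : π ∈ IW F (n+1)) :
    (Fin n → D) → Equiv.Perm D := (mem_IW_succ.mp h).choose_spec.2.choose

lemma decomp_spec {n : ℕ} (π : Equiv.Perm (Fin (n+1) → D)) (h : π ∈ IW F (n+1)) :
    decompX π h ∈ IW F n ∧ (∀ v, decompF π h v ∈ F) ∧ π = twist (decompX π h) (decompF π h) :=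
  ⟨(mem_IW_succ.mp h).choose_spec.1, (mem_IW_succ.mp h).choose_spec.2.choose_spec.1,
    (mem_IW_succ.mp h).choose_spec.2.choose_spec.2⟩

lemma decomp_eq {n : ℕ} (d0 : D) {π : Equiv.Perm (Fin (n+1) → D)} (h : π ∈ IW F (n+1))
    {x : Equiv.Perm (Fin n → D)} {f : (Fin n → D) → Equiv.Perm D}
    (hπ : π = twist x f) : decompX π h = x ∧ decompF π h = f := by
  have := (decomp_spec π h).2.2
  exact twist_inj d0 (this.symm.trans hπ)

/-- the `x` part, as element of `IW F n`. -/
noncomputable def baseHom {n : ℕ} (π : ↥(IW F (n+1))) : ↥(IW F n) :=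
  ⟨decompX π.1 π.2, (decomp_spec π.1 π.2).1⟩

/-- the label at the `j`-path. -/
noncomputable def labHom (j : D) {n : ℕ} (π : ↥(IW F (n+1))) : ↥F :=
  ⟨decompF π.1 π.2 (fun _ => j), (decomp_spec π.1 π.2).2.1 _⟩

lemma baseHom_mul (j : D) {n : ℕ} (a b : ↥(IW F (n+1))) :
    baseHom (a * b) = baseHom a * baseHom b := by
  obtain ⟨_, _, ha⟩ := decomp_spec a.1 a.2
  obtain ⟨_, _, hb⟩ := decomp_spec b.1 b.2
  have hab : (a * b : ↥(IW F (n+1))).1 =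
      twist (decompX a.1 a.2 * decompX b.1 b.2)
        (fun v => decompF a.1 a.2 (decompX b.1 b.2 v) * decompF b.1 b.2 v) := by
    show a.1 * b.1 = _
    conv_lhs => rw [ha, hb]
    rw [twist_mul]
  exact Subtype.ext ((decomp_eq j (a*b).2 hab).1)

lemma labHom_mul (j : D) (hj : ∀ g ∈ F, g j = j) {n : ℕ} (a b : ↥(IW F (n+1))) :
    labHom j (a * b) = labHom j a * labHom j b := by
  obtain ⟨hxa, _, ha⟩ := decomp_spec a.1 a.2
  obtain ⟨hxb, _, hb⟩ := decomp_spec b.1 b.2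
  have hab : (a * b : ↥(IW F (n+1))).1 =
      twist (decompX a.1 a.2 * decompX b.1 b.2)
        (fun v => decompF a.1 a.2 (decompX b.1 b.2 v) * decompF b.1 b.2 v) := by
    show a.1 * b.1 = _
    conv_lhs => rw [ha, hb]
    rw [twist_mul]
  apply Subtype.ext
  show decompF (a*b).1 (a*b).2 (fun _ => j) = _
  rw [(decomp_eq j (a*b).2 hab).2]
  show decompF a.1 a.2 (decompX b.1 b.2 (fun _ => j)) * decompF b.1 b.2 (fun _ => j) = _
  rw [IW_fixes hj n _ hxb]
  rfl

end Aux2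
section Aux3

variable {D : Type*} {F : Subgroup (Equiv.Perm D)}

noncomputable def Qfun (j : D) : ∀ n, ↥(IW F n) → (Fin n → ↥F)
  | 0 => fun _ => fun i => i.elim0
  | (n+1) => fun π => Fin.snoc (Qfun j n (baseHom π)) (labHom j π)

lemma Qfun_succ (j : D) {n : ℕ} (π : ↥(IW F (n+1))) :
    Qfun j (n+1) π = Fin.snoc (Qfun j n (baseHom π)) (labHom j π) := rfl

lemma Qfun_mul (j : D) (hj : ∀ g ∈ F, g j = j) :
    ∀ n (a b : ↥(IW F n)), Qfun j n (a * b) = Qfun j n a * Qfun j n b := by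
  intro n
  induction n with
  | zero => intro a b; funext i; exact i.elim0
  | succ n ih =>
    intro a b
    rw [Qfun_succ, Qfun_succ, Qfun_succ, baseHom_mul j, labHom_mul j hj, ih]
    funext i
    refine Fin.lastCases ?_ ?_ i
    · simp [Pi.mul_apply]
    · intro i; simp [Pi.mul_apply]

lemma Qfun_surj (j : D) : ∀ n, Function.Surjective (Qfun (F := F) j n) := by
  intro n
  induction n with
  | zero => intro t; exact ⟨1, funext fun i => i.elim0⟩
  | succ n ih =>
    intro t
    obtain ⟨x, hx⟩ := ih (Fin.init t)
    have hmem : twist x.1 (fun _ => (t (Fin.last n) : Equiv.Perm D)) ∈ IW F (n+1) :=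
      ⟨x.1, x.2, _, fun _ => (t (Fin.last n)).2, rfl⟩
    refine ⟨⟨_, hmem⟩, ?_⟩
    obtain ⟨h1, h2⟩ := decomp_eq (F := F) j hmem rfl
    have hb : baseHom (⟨_, hmem⟩ : ↥(IW F (n+1))) = x := Subtype.ext h1
    have hl : labHom j (⟨_, hmem⟩ : ↥(IW F (n+1))) = t (Fin.last n) := by
      apply Subtype.ext
      show decompF _ hmem (fun _ => j) = _
      rw [h2]
    rw [Qfun_succ, hb, hl, hx, Fin.snoc_init_self]

end Aux3
section Aux4

variable {D : Type*} {F : Subgroup (Equiv.Perm D)}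

lemma mem_IWlim {g : ∀ n, Equiv.Perm (Fin n → D)} :
    g ∈ IWlim F ↔ (∀ n, g n ∈ IW F n) ∧
      ∀ (n : ℕ) (v : Fin n → D) (d : D),
        Fin.init (g (n + 1) (Fin.snoc v d)) = g n v := Iff.rfl

noncomputable def Qseq (j : D) (g : ↥(IWlim F)) : ℕ → ↥F :=
  fun n => labHom j ⟨g.1 (n+1), g.2.1 (n+1)⟩

lemma Qseq_mul (j : D) (hj : ∀ g ∈ F, g j = j) (a b : ↥(IWlim F)) :
    Qseq j (a * b) = Qseq j a * Qseq j b := by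
  funext n
  have : (⟨(a * b).1 (n+1), (a * b).2.1 (n+1)⟩ : ↥(IW F (n+1))) =
      ⟨a.1 (n+1), a.2.1 (n+1)⟩ * ⟨b.1 (n+1), b.2.1 (n+1)⟩ := Subtype.ext rfl
  show labHom j _ = _
  rw [this, labHom_mul j hj]
  rfl

lemma Qseq_surj (j : D) : Function.Surjective (Qseq (F := F) j) := by
  intro t
  let g : ∀ n, Equiv.Perm (Fin n → D) := fun n =>
    Nat.rec 1 (fun n gn => twist gn (fun _ => (t n : Equiv.Perm D))) n
  have hg : ∀ n, g n ∈ IW F n := by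
    intro n
    induction n with
    | zero => exact Subgroup.mem_top _
    | succ n ih => exact ⟨g n, ih, _, fun _ => (t n).2, rfl⟩
  have hcompat : ∀ (n : ℕ) (v : Fin n → D) (d : D),
      Fin.init (g (n + 1) (Fin.snoc v d)) = g n v := by
    intro n v d
    show Fin.init (twist (g n) (fun _ => (t n : Equiv.Perm D)) (Fin.snoc v d)) = _
    rw [twist_apply]
    simp
  refine ⟨⟨g, hg, hcompat⟩, ?_⟩
  funext n
  apply Subtype.ext
  show decompF (g (n+1)) (hg (n+1)) (fun _ => j) = ((t n : ↥F) : Equiv.Perm D)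
  have hrec : g (n+1) = twist (g n) (fun _ => (t n : Equiv.Perm D)) := rfl
  rw [(decomp_eq j (hg (n+1)) hrec).2]

end Aux4

/-- if the nontrivial finite permutation group `L = F ≤ Sym(D)` fixes a
point `j ∈ D`, then for every `n ≥ 1` the `n`-fold iterated wreath product `L_n`
admits `L^n` as a quotient; consequently the profinite group `L_∞ = lim← L_n` admits
`L^ℕ` as a (topological) quotient and is not topologically finitely generated. -/
theorem iterated_wreath_not_topFG_of_fixed_point
    (D : Type) [Fintype D] (F : Subgroup (Equiv.Perm D)) [Nontrivial ↥F]
    (j : D) (hj : ∀ g ∈ F, g j = j) :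
    (∀ n : ℕ, 1 ≤ n → ∃ q : ↥(IW F n) →* (Fin n → ↥F), Function.Surjective q) ∧
    (∃ q : ↥(IWlim F) →* (ℕ → ↥F), Function.Surjective q ∧ Continuous q) ∧
    ¬ ∃ S : Finset ↥(IWlim F),
        (Subgroup.closure (S : Set ↥(IWlim F))).topologicalClosure = ⊤ := by
  set q : ↥(IWlim F) →* (ℕ → ↥F) := MonoidHom.mk' (Qseq j) (Qseq_mul j hj) with hq
  have hqsurj : Function.Surjective q := Qseq_surj j
  have hqcont : Continuous q := by
    apply continuous_pi
    intro n
    have h1 : Continuous (fun g : ↥(IWlim F) =>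
        (⟨g.1 (n+1), g.2.1 (n+1)⟩ : ↥(IW F (n+1)))) :=
      Continuous.subtype_mk ((continuous_apply (n+1)).comp continuous_subtype_val) _
    exact (continuous_of_discreteTopology
      (f := fun π : ↥(IW F (n+1)) => labHom j π)).comp h1
  refine ⟨fun n _ => ⟨MonoidHom.mk' (Qfun j n) (Qfun_mul j hj n), Qfun_surj j n⟩,
    ⟨q, hqsurj, hqcont⟩, ?_⟩
  rintro ⟨S, hS⟩
  let p : ℕ → (↥(IWlim F) →* ↥F) := fun n => (Pi.evalMonoidHom (fun _ => ↥F) n).comp q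
  have hpcont : ∀ n, Continuous (p n) := fun n => (continuous_apply n).comp hqcont
  obtain ⟨n, m, hnm, hsame⟩ : ∃ n m, n ≠ m ∧ ∀ s ∈ S, p n s = p m s := by
    obtain ⟨n, m, hne, h⟩ :=
      Finite.exists_ne_map_eq_of_infinite (fun n : ℕ => fun s : S => p n s)
    exact ⟨n, m, hne, fun s hs => congrFun h ⟨s, hs⟩⟩
  have hall : ∀ g, p n g = p m g := by
    let K : Subgroup ↥(IWlim F) :=
      { carrier := {g | p n g = p m g}
        one_mem' := by simp
        mul_mem' := by
          intro a b ha hb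
          simp only [Set.mem_setOf_eq, map_mul] at *
          rw [ha, hb]
        inv_mem' := by
          intro a ha
          simp only [Set.mem_setOf_eq, map_inv] at *
          rw [ha] }
    have hKclosed : IsClosed (K : Set ↥(IWlim F)) := isClosed_eq (hpcont n) (hpcont m)
    have h1 : Subgroup.closure (S : Set ↥(IWlim F)) ≤ K :=
      (Subgroup.closure_le K).mpr (fun s hs => hsame s hs)
    have h2 : (Subgroup.closure (S : Set ↥(IWlim F))).topologicalClosure ≤ K :=
      Subgroup.topologicalClosure_minimal _ h1 hKclosed
    rw [hS] at h2
    exact fun g => h2 (Subgroup.mem_top g)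
  obtain ⟨a, ha⟩ := exists_ne (1 : ↥F)
  obtain ⟨g, hg⟩ := hqsurj (Pi.mulSingle n a)
  have h1 : p n g = a := by
    show q g n = a
    rw [hg, Pi.mulSingle_eq_same]
  have h2 : p m g = 1 := by
    show q g m = 1
    rw [hg, Pi.mulSingle_eq_of_ne (Ne.symm hnm)]
  rw [hall g, h2] at h1
  exact ha h1.symm
end

section
/- Let (L_n) be an inverse system of finite groups with surjective transition maps L_{n+1} → L_n and limit L_∞. Suppose k ≥ 2, and for all n ≥ n_1 the quantities ζ_n(k-1) := Σ_{[M] ∈ G(L_{n+1}|L_n)} 1/[L_{n+1}:M]^{k-1} satisfy ζ_n(k-1) < 1 and Σ_{n ≥ n_1} ζ_n(k-1) < ∞, and L_{n_1} is generated by k elements. Then inf_n p_k(L_n) ≥ ∏_{n ≥ n_1}(1 - ζ_n(k-1)) · p_k(L_{n_1}) > 0; hence L_∞ is positively finitely generated. -/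
section Aux
open Subgroup Finset

noncomputable def fiber_equiv {G H : Type*} [Group G] [Group H] (π : G →* H) (c : H)
    (g₀ : G) (hg₀ : π g₀ = c) : {g : G // π g = c} ≃ π.ker where
  toFun g := ⟨g₀⁻¹ * g.1, by simp [MonoidHom.mem_ker, g.2, hg₀]⟩
  invFun x := ⟨g₀ * x.1, by
    have := x.2
    simp only [MonoidHom.mem_ker] at this
    simp [this, hg₀]⟩
  left_inv g := by simp
  right_inv x := by simp

lemma card_tuple_fiber {G H : Type*} [Group G] [Group H] [Fintype G]
    (π : G →* H) (hπ : Function.Surjective π) (k : ℕ) (v : Fin k → H) :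
    Nat.card {w : Fin k → G // ∀ i, π (w i) = v i} = Nat.card π.ker ^ k := by
  classical
  rw [Nat.card_congr (Equiv.subtypePiEquivPi (p := fun i (g : G) => π g = v i))]
  rw [Nat.card_pi]
  have h : ∀ i : Fin k, Nat.card {g : G // π g = v i} = Nat.card π.ker := by
    intro i
    obtain ⟨g₀, hg₀⟩ := hπ (v i)
    exact Nat.card_congr (fiber_equiv π (v i) g₀ hg₀)
  rw [Finset.prod_congr rfl fun i _ => h i, Finset.prod_const, Finset.card_univ,
    Fintype.card_fin]

lemma card_eq_ker_mul {G H : Type*} [Group G] [Group H] [Fintype G]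
    (π : G →* H) (hπ : Function.Surjective π) :
    Nat.card G = Nat.card π.ker * Nat.card H := by
  rw [Subgroup.card_eq_card_quotient_mul_card_subgroup π.ker,
    Nat.card_congr (QuotientGroup.quotientKerEquivOfSurjective π hπ).toEquiv, mul_comm]

lemma index_conj {G : Type*} [Group G] (M : Subgroup G) (y : G) :
    (M.map (MulAut.conj y).toMonoidHom).index = M.index :=
  M.index_map_eq (MulEquiv.surjective _) (by
    rw [(MonoidHom.ker_eq_bot_iff _).2 (MulEquiv.injective _)]; exact bot_le)

lemma conj_map_eq_of_mem_normalizer {G : Type*} [Group G] (M : Subgroup G) (n : G)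
    (hn : n ∈ (Subgroup.normalizer (M : Set G))) : M.map (MulAut.conj n).toMonoidHom = M := by
  ext x
  simp only [Subgroup.mem_map, MulAut.conj_apply, MulEquiv.coe_toMonoidHom]
  constructor
  · rintro ⟨m, hm, rfl⟩
    exact (Subgroup.mem_normalizer_iff.1 hn m).1 hm
  · intro hx
    exact ⟨n⁻¹ * x * n, by
      have := (Subgroup.mem_normalizer_iff.1 ((Subgroup.normalizer (M : Set G)).inv_mem hn) x).1 hx
      simpa [mul_assoc] using this, by group⟩

lemma conj_map_comp {G : Type*} [Group G] (M : Subgroup G) (a b : G) :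
    (M.map (MulAut.conj b).toMonoidHom).map (MulAut.conj a).toMonoidHom
      = M.map (MulAut.conj (a * b)).toMonoidHom := by
  rw [Subgroup.map_map]
  congr 1
  ext x
  simp [mul_assoc]

lemma conj_map_one {G : Type*} [Group G] (M : Subgroup G) :
    M.map (MulAut.conj (1 : G)).toMonoidHom = M := by
  ext x
  simp [Subgroup.mem_map]

lemma card_conjFinset_le {G : Type*} [Group G] [Fintype G] [DecidableEq (Subgroup G)]
    (M : Subgroup G) :
    (Finset.image (fun y : G => M.map (MulAut.conj y).toMonoidHom) Finset.univ).card
      ≤ M.index := by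
  classical
  have hwd : ∀ y₁ y₂ : G, QuotientGroup.mk (s := (Subgroup.normalizer (M : Set G))) y₁ = QuotientGroup.mk y₂ →
      M.map (MulAut.conj y₁).toMonoidHom = M.map (MulAut.conj y₂).toMonoidHom := by
    intro y₁ y₂ h
    have hmem : y₁⁻¹ * y₂ ∈ (Subgroup.normalizer (M : Set G)) := QuotientGroup.eq.1 h
    calc M.map (MulAut.conj y₁).toMonoidHom
        = (M.map (MulAut.conj (y₁⁻¹ * y₂)).toMonoidHom).map (MulAut.conj y₁).toMonoidHom := by
          rw [conj_map_eq_of_mem_normalizer M _ hmem]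
      _ = M.map (MulAut.conj (y₁ * (y₁⁻¹ * y₂))).toMonoidHom := conj_map_comp _ _ _
      _ = M.map (MulAut.conj y₂).toMonoidHom := by rw [mul_inv_cancel_left]
  let q : G ⧸ (Subgroup.normalizer (M : Set G)) → Subgroup G :=
    Quotient.lift (fun y : G => M.map (MulAut.conj y).toMonoidHom)
      (fun a b hab => hwd a b (Quotient.sound hab))
  calc (Finset.image (fun y : G => M.map (MulAut.conj y).toMonoidHom) Finset.univ).card
      = (Finset.image (q ∘ QuotientGroup.mk) Finset.univ).card := by congr 1
    _ = (Finset.image q (Finset.image QuotientGroup.mk Finset.univ)).card := by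
        rw [Finset.image_image]
    _ ≤ (Finset.image (QuotientGroup.mk (s := (Subgroup.normalizer (M : Set G)))) Finset.univ).card :=
        Finset.card_image_le
    _ ≤ Fintype.card (G ⧸ (Subgroup.normalizer (M : Set G))) := Finset.card_le_univ _
    _ = (Subgroup.normalizer (M : Set G)).index := by rw [Subgroup.index, Nat.card_eq_fintype_card]
    _ ≤ M.index := Nat.le_of_dvd (Nat.pos_of_ne_zero (Subgroup.index_ne_zero_of_finite))
        (Subgroup.index_dvd_of_le Subgroup.le_normalizer)

def tupleSubEquiv {G H : Type*} [Group G] [Group H] (π : G →* H) (N : Subgroup G)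
    (k : ℕ) (v : Fin k → H) :
    {w : Fin k → G // (∀ i, w i ∈ N) ∧ π ∘ w = v} ≃
      {u : Fin k → N // ∀ i, (π.comp N.subtype) (u i) = v i} where
  toFun w := ⟨fun i => ⟨w.1 i, w.2.1 i⟩, fun i => congrFun w.2.2 i⟩
  invFun u := ⟨fun i => (u.1 i : G), ⟨fun i => (u.1 i).2, funext fun i => u.2 i⟩⟩
  left_inv _ := rfl
  right_inv _ := rfl

lemma range_closure_top {G H : Type*} [Group G] [Group H] {k : ℕ} (π : G →* H)
    (hπ : Function.Surjective π)
    (w : Fin k → G) (hw : Subgroup.closure (Set.range w) = ⊤) :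
    Subgroup.closure (Set.range (π ∘ w)) = ⊤ := by
  rw [Set.range_comp, ← MonoidHom.map_closure, hw]
  exact Subgroup.map_top_of_surjective π hπ

lemma liftsIn_card {G H : Type*} [Group G] [Group H] [Fintype G] [Fintype H]
    (π : G →* H) (hπ : Function.Surjective π) (N : Subgroup G) (hN : N.map π = ⊤)
    (k : ℕ) (v : Fin k → H) :
    Nat.card {w : Fin k → G // (∀ i, w i ∈ N) ∧ π ∘ w = v} * N.index ^ k
      = Nat.card π.ker ^ k := by
  classical
  set π' := π.comp N.subtype with hπ'def
  have hπ' : Function.Surjective π' := by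
    intro h
    have : h ∈ N.map π := by rw [hN]; trivial
    obtain ⟨n, hn, rfl⟩ := Subgroup.mem_map.1 this
    exact ⟨⟨n, hn⟩, rfl⟩
  have h1 : Nat.card {w : Fin k → G // (∀ i, w i ∈ N) ∧ π ∘ w = v}
      = Nat.card π'.ker ^ k := by
    rw [Nat.card_congr (tupleSubEquiv π N k v)]
    exact card_tuple_fiber π' hπ' k v
  have h2 : Nat.card π'.ker * N.index = Nat.card π.ker := by
    have e1 : Nat.card N = Nat.card π'.ker * Nat.card H := card_eq_ker_mul π' hπ'
    have e2 : Nat.card G = Nat.card π.ker * Nat.card H := card_eq_ker_mul π hπ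
    have e3 : N.index * Nat.card N = Nat.card G := N.index_mul_card
    have hH : 0 < Nat.card H := Nat.card_pos
    apply Nat.eq_of_mul_eq_mul_right hH
    calc Nat.card π'.ker * N.index * Nat.card H
        = N.index * (Nat.card π'.ker * Nat.card H) := by ring
      _ = N.index * Nat.card N := by rw [e1]
      _ = Nat.card G := e3
      _ = Nat.card π.ker * Nat.card H := e2
  rw [h1, ← mul_pow, h2]

lemma pgen_nonneg (k : ℕ) (G : Type*) [Group G] : 0 ≤ pgen k G := by
  unfold pgen; positivity

lemma conj_surj_of_surj {G H : Type*} [Group G] [Group H] (π : G →* H)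
    (M : Subgroup G) (hM : M.map π = ⊤) (y : G) :
    (M.map (MulAut.conj y).toMonoidHom).map π = ⊤ := by
  rw [Subgroup.map_map]
  have hcomm : π.comp (MulAut.conj y).toMonoidHom
      = (MulAut.conj (π y)).toMonoidHom.comp π := by
    ext m; simp [MulAut.conj_apply]
  rw [hcomm, ← Subgroup.map_map, hM]
  exact Subgroup.map_top_of_surjective _ (MulEquiv.surjective _)

lemma pgen_step {G H : Type*} [Group G] [Group H] [Fintype G] [Fintype H]
    (π : G →* H) (hπ : Function.Surjective π) (k : ℕ) (hk : 1 ≤ k)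
    (R : Finset (Subgroup G)) (hR : IsConjClassReps π R)
    (ζ : ℝ) (hζ : ζ = ∑ M ∈ R, (1 : ℝ) / (M.index : ℝ) ^ (k - 1)) :
    (1 - ζ) * pgen k H ≤ pgen k G := by
  classical
  set cK : ℕ := Nat.card π.ker with hcK
  have hcKpos : 0 < cK := Nat.card_pos
  have hcHpos : 0 < Nat.card H := Nat.card_pos
  set B : Finset (Fin k → H) :=
    Finset.univ.filter (fun v => Subgroup.closure (Set.range v) = ⊤) with hB
  set A : Finset (Fin k → G) :=
    Finset.univ.filter (fun w => Subgroup.closure (Set.range w) = ⊤) with hA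
  have hmapsto : ∀ w ∈ A, π ∘ w ∈ B := by
    intro w hw
    simp only [hA, hB, Finset.mem_filter, Finset.mem_univ, true_and] at hw ⊢
    exact range_closure_top π hπ w hw
  have hcard : A.card = ∑ v ∈ B, (A.filter fun w => π ∘ w = v).card :=
    Finset.card_eq_sum_card_fiberwise hmapsto
  have key : ∀ v ∈ B, (cK : ℝ) ^ k * (1 - ζ) ≤ ((A.filter fun w => π ∘ w = v).card : ℝ) := by
    intro v hv
    have hvgen : Subgroup.closure (Set.range v) = ⊤ := by simpa [hB] using hv
    set F : Finset (Fin k → G) := Finset.univ.filter (fun w => π ∘ w = v) with hF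
    have hFcard : F.card = cK ^ k := by
      rw [hF, ← Fintype.card_subtype, ← Nat.card_eq_fintype_card]
      rw [Nat.card_congr (Equiv.subtypeEquivRight (q := fun w => ∀ i, π (w i) = v i)
        (fun w => by simp [funext_iff]))]
      exact card_tuple_fiber π hπ k v
    set Bad : Finset (Fin k → G) :=
      F.filter (fun w => ¬ Subgroup.closure (Set.range w) = ⊤) with hBad
    have hsplit : (A.filter fun w => π ∘ w = v).card + Bad.card = F.card := by
      have h1 : (A.filter fun w => π ∘ w = v)
          = F.filter (fun w => Subgroup.closure (Set.range w) = ⊤) := by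
        rw [hA, hF, Finset.filter_filter, Finset.filter_filter]
        exact Finset.filter_congr (fun w _ => by constructor <;> exact fun h => ⟨h.2, h.1⟩)
      rw [h1]
      exact Finset.card_filter_add_card_filter_not _
    have hBadsub : Bad ⊆ R.biUnion (fun M =>
        (Finset.image (fun y : G => M.map (MulAut.conj y).toMonoidHom) Finset.univ).biUnion
          (fun N => Finset.univ.filter (fun w => (∀ i, w i ∈ N) ∧ π ∘ w = v))) := by
      intro w hw
      simp only [hBad, hF, Finset.mem_filter, Finset.mem_univ, true_and] at hw
      obtain ⟨hwv, hwgen⟩ := hw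
      obtain hcl | ⟨N, hNco, hNle⟩ := eq_top_or_exists_le_coatom
        (Subgroup.closure (Set.range w))
      · exact absurd hcl hwgen
      have hNmap : N.map π = ⊤ := by
        apply top_le_iff.1
        calc (⊤ : Subgroup H) = Subgroup.closure (Set.range (π ∘ w)) := by
              rw [hwv, hvgen]
          _ = (Subgroup.closure (Set.range w)).map π := by
              rw [Set.range_comp, MonoidHom.map_closure]
          _ ≤ N.map π := Subgroup.map_mono hNle
      obtain ⟨M, ⟨hMR, y, hy⟩, -⟩ := hR.2 N hNco hNmap
      have hNeq : N = M.map (MulAut.conj y⁻¹).toMonoidHom := by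
        rw [← hy, conj_map_comp, inv_mul_cancel, conj_map_one]
      rw [Finset.mem_biUnion]
      refine ⟨M, hMR, ?_⟩
      rw [Finset.mem_biUnion]
      refine ⟨N, ?_, ?_⟩
      · rw [Finset.mem_image]
        exact ⟨y⁻¹, Finset.mem_univ _, hNeq.symm⟩
      · simp only [Finset.mem_filter, Finset.mem_univ, true_and]
        exact ⟨fun i => hNle (Subgroup.subset_closure (Set.mem_range_self i)), hwv⟩
    have h1 : Bad.card ≤ ∑ M ∈ R, ∑ N ∈ (Finset.image
        (fun y : G => M.map (MulAut.conj y).toMonoidHom) Finset.univ),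
        (Finset.univ.filter (fun w : Fin k → G => (∀ i, w i ∈ N) ∧ π ∘ w = v)).card :=
      le_trans (Finset.card_le_card hBadsub)
        (le_trans Finset.card_biUnion_le
          (Finset.sum_le_sum (fun M _ => Finset.card_biUnion_le)))
    have h1' : (Bad.card : ℝ) ≤ ∑ M ∈ R, ∑ N ∈ (Finset.image
        (fun y : G => M.map (MulAut.conj y).toMonoidHom) Finset.univ),
        ((Finset.univ.filter
          (fun w : Fin k → G => (∀ i, w i ∈ N) ∧ π ∘ w = v)).card : ℝ) := by
      exact_mod_cast h1
    have h2' : ∀ M ∈ R, (∑ N ∈ (Finset.image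
        (fun y : G => M.map (MulAut.conj y).toMonoidHom) Finset.univ),
        ((Finset.univ.filter
          (fun w : Fin k → G => (∀ i, w i ∈ N) ∧ π ∘ w = v)).card : ℝ))
        ≤ (cK : ℝ) ^ k * (1 / (M.index : ℝ) ^ (k - 1)) := by
      intro M hM
      have hMidx : M.index ≠ 0 := Subgroup.index_ne_zero_of_finite
      have hMidxR : (0 : ℝ) < (M.index : ℝ) := by
        exact_mod_cast Nat.pos_of_ne_zero hMidx
      have hterm : ∀ N ∈ (Finset.image
          (fun y : G => M.map (MulAut.conj y).toMonoidHom) Finset.univ),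
          ((Finset.univ.filter
            (fun w : Fin k → G => (∀ i, w i ∈ N) ∧ π ∘ w = v)).card : ℝ)
            = ((cK : ℝ) / (M.index : ℝ)) ^ k := by
        intro N hN
        obtain ⟨y, -, rfl⟩ := Finset.mem_image.1 hN
        have hNidx : (M.map (MulAut.conj y).toMonoidHom).index = M.index := index_conj M y
        have hNmap : (M.map (MulAut.conj y).toMonoidHom).map π = ⊤ :=
          conj_surj_of_surj π M (hR.1 M hM).2 y
        have hcount := liftsIn_card π hπ (M.map (MulAut.conj y).toMonoidHom) hNmap k v
        rw [hNidx] at hcount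
        have hcard' : ((Finset.univ.filter (fun w : Fin k → G =>
            (∀ i, w i ∈ M.map (MulAut.conj y).toMonoidHom) ∧ π ∘ w = v)).card : ℝ)
            = (Nat.card {w : Fin k → G //
              (∀ i, w i ∈ M.map (MulAut.conj y).toMonoidHom) ∧ π ∘ w = v} : ℝ) := by
          rw [Nat.card_eq_fintype_card, Fintype.card_subtype]
        rw [hcard', div_pow, eq_div_iff (by positivity), ← Nat.cast_pow, ← Nat.cast_pow,
          ← Nat.cast_mul, hcount]
      rw [Finset.sum_congr rfl hterm, Finset.sum_const, nsmul_eq_mul]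
      have hconj : ((Finset.image
          (fun y : G => M.map (MulAut.conj y).toMonoidHom) Finset.univ).card : ℝ)
          ≤ (M.index : ℝ) := by exact_mod_cast card_conjFinset_le M
      have hle : ((Finset.image (fun y : G => M.map (MulAut.conj y).toMonoidHom)
            Finset.univ).card : ℝ) * ((cK : ℝ) / (M.index : ℝ)) ^ k
          ≤ (M.index : ℝ) * ((cK : ℝ) / (M.index : ℝ)) ^ k :=
        mul_le_mul_of_nonneg_right hconj (by positivity)
      refine hle.trans (le_of_eq ?_)
      rw [div_pow]
      have hdk : (M.index : ℝ) ^ k = (M.index : ℝ) ^ (k - 1) * (M.index : ℝ) := by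
        conv_lhs => rw [show k = (k - 1) + 1 from (Nat.succ_pred_eq_of_pos hk).symm]
        rw [pow_succ]
      rw [hdk]
      have h3 : ((M.index : ℝ)) ^ (k - 1) ≠ 0 := by positivity
      field_simp
    have hBadcard : (Bad.card : ℝ) ≤ (cK : ℝ) ^ k * ζ := by
      refine h1'.trans ((Finset.sum_le_sum h2').trans (le_of_eq ?_))
      rw [hζ, Finset.mul_sum]
    have hFR : ((A.filter fun w => π ∘ w = v).card : ℝ) + (Bad.card : ℝ) = (cK : ℝ) ^ k := by
      rw [← Nat.cast_add, hsplit, hFcard, Nat.cast_pow]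
    linarith
  have hA_ge : (B.card : ℝ) * ((cK : ℝ) ^ k * (1 - ζ)) ≤ (A.card : ℝ) := by
    rw [hcard]
    push_cast
    calc (B.card : ℝ) * ((cK : ℝ) ^ k * (1 - ζ))
        = ∑ _v ∈ B, (cK : ℝ) ^ k * (1 - ζ) := by rw [Finset.sum_const, nsmul_eq_mul]
      _ ≤ ∑ v ∈ B, ((A.filter fun w => π ∘ w = v).card : ℝ) := Finset.sum_le_sum key
  have hAc : (Nat.card {w : Fin k → G // Subgroup.closure (Set.range w) = ⊤} : ℝ)
      = A.card := by
    rw [Nat.card_eq_fintype_card, Fintype.card_subtype]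
  have hBc : (Nat.card {v : Fin k → H // Subgroup.closure (Set.range v) = ⊤} : ℝ)
      = B.card := by
    rw [Nat.card_eq_fintype_card, Fintype.card_subtype]
  have hGc : (Nat.card G : ℝ) = (cK : ℝ) * (Nat.card H : ℝ) := by
    exact_mod_cast congrArg (Nat.cast : ℕ → ℝ) (card_eq_ker_mul π hπ)
  unfold pgen
  rw [hAc, hBc, hGc]
  have hrw : (1 - ζ) * ((B.card : ℝ) / (Nat.card H : ℝ) ^ k)
      = ((B.card : ℝ) * ((cK : ℝ) ^ k * (1 - ζ))) / ((cK : ℝ) * (Nat.card H : ℝ)) ^ k := by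
    rw [mul_pow]
    have h1 : ((cK : ℝ)) ≠ 0 := by positivity
    have h2 : ((Nat.card H : ℝ)) ≠ 0 := by positivity
    field_simp
  rw [hrw]
  exact div_le_div_of_nonneg_right hA_ge (by positivity)

lemma pgen_antitone {G H : Type*} [Group G] [Group H] [Fintype G] [Fintype H]
    (π : G →* H) (hπ : Function.Surjective π) (k : ℕ) :
    pgen k G ≤ pgen k H := by
  classical
  set cK : ℕ := Nat.card π.ker with hcK
  have hcKpos : 0 < cK := Nat.card_pos
  have hcHpos : 0 < Nat.card H := Nat.card_pos
  set B : Finset (Fin k → H) :=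
    Finset.univ.filter (fun v => Subgroup.closure (Set.range v) = ⊤) with hB
  set A : Finset (Fin k → G) :=
    Finset.univ.filter (fun w => Subgroup.closure (Set.range w) = ⊤) with hA
  have hmapsto : ∀ w ∈ A, π ∘ w ∈ B := by
    intro w hw
    simp only [hA, hB, Finset.mem_filter, Finset.mem_univ, true_and] at hw ⊢
    exact range_closure_top π hπ w hw
  have hcard : A.card = ∑ v ∈ B, (A.filter fun w => π ∘ w = v).card :=
    Finset.card_eq_sum_card_fiberwise hmapsto
  have key : ∀ v ∈ B, (A.filter fun w => π ∘ w = v).card ≤ cK ^ k := by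
    intro v hv
    have hsub : (A.filter fun w => π ∘ w = v)
        ⊆ Finset.univ.filter (fun w => π ∘ w = v) :=
      Finset.filter_subset_filter _ (Finset.subset_univ A)
    have hFcard : (Finset.univ.filter (fun w : Fin k → G => π ∘ w = v)).card = cK ^ k := by
      rw [← Fintype.card_subtype, ← Nat.card_eq_fintype_card]
      rw [Nat.card_congr (Equiv.subtypeEquivRight (q := fun w => ∀ i, π (w i) = v i)
        (fun w => by simp [funext_iff]))]
      exact card_tuple_fiber π hπ k v
    exact hFcard ▸ Finset.card_le_card hsub
  have hA_le : (A.card : ℝ) ≤ (B.card : ℝ) * (cK : ℝ) ^ k := by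
    rw [hcard]
    push_cast
    calc (∑ v ∈ B, ((A.filter fun w => π ∘ w = v).card : ℝ))
        ≤ ∑ _v ∈ B, (cK : ℝ) ^ k :=
          Finset.sum_le_sum (fun v hv => by exact_mod_cast key v hv)
      _ = (B.card : ℝ) * (cK : ℝ) ^ k := by rw [Finset.sum_const, nsmul_eq_mul]
  have hAc : (Nat.card {w : Fin k → G // Subgroup.closure (Set.range w) = ⊤} : ℝ)
      = A.card := by rw [Nat.card_eq_fintype_card, Fintype.card_subtype]
  have hBc : (Nat.card {v : Fin k → H // Subgroup.closure (Set.range v) = ⊤} : ℝ)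
      = B.card := by rw [Nat.card_eq_fintype_card, Fintype.card_subtype]
  have hGc : (Nat.card G : ℝ) = (cK : ℝ) * (Nat.card H : ℝ) := by
    exact_mod_cast congrArg (Nat.cast : ℕ → ℝ) (card_eq_ker_mul π hπ)
  unfold pgen
  rw [hAc, hBc, hGc]
  have hrw : (B.card : ℝ) / (Nat.card H : ℝ) ^ k
      = ((B.card : ℝ) * (cK : ℝ) ^ k) / ((cK : ℝ) * (Nat.card H : ℝ)) ^ k := by
    rw [mul_pow]
    have h1 : ((cK : ℝ)) ≠ 0 := by positivity
    have h2 : ((Nat.card H : ℝ)) ≠ 0 := by positivity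
    field_simp
  rw [hrw]
  exact div_le_div_of_nonneg_right hA_le (by positivity)

-- positivity of pgen when generated by ≤ k elements
lemma pgen_pos {G : Type*} [Group G] [Fintype G] (k : ℕ)
    (hgen : ∃ S : Finset G, S.card ≤ k ∧ Subgroup.closure (S : Set G) = ⊤) :
    0 < pgen k G := by
  classical
  obtain ⟨S, hSc, hStop⟩ := hgen
  set l : List G := S.toList with hl
  set v : Fin k → G := fun i => l.getD i 1 with hv
  have hSsub : (S : Set G) ⊆ Set.range v := by
    intro x hx
    have hxl : x ∈ l := by rw [hl, Finset.mem_toList]; exact_mod_cast hx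
    obtain ⟨i, hi, hix⟩ := List.mem_iff_getElem.1 hxl
    have hlen : l.length = S.card := Finset.length_toList S
    have hik : i < k := lt_of_lt_of_le (hlen ▸ hi) hSc
    refine ⟨⟨i, hik⟩, ?_⟩
    rw [hv]
    simp only
    rw [List.getD_eq_getElem l 1 (by simpa [hlen] using hlen ▸ hi : (⟨i, hik⟩ : Fin k).1 < l.length)]
    exact hix
  have hvgen : Subgroup.closure (Set.range v) = ⊤ :=
    top_le_iff.1 (hStop ▸ Subgroup.closure_mono hSsub)
  have hpos : 0 < Nat.card {w : Fin k → G // Subgroup.closure (Set.range w) = ⊤} := by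
    have : Nonempty {w : Fin k → G // Subgroup.closure (Set.range w) = ⊤} := ⟨⟨v, hvgen⟩⟩
    exact Nat.card_pos
  unfold pgen
  apply div_pos
  · exact_mod_cast hpos
  · have : 0 < Nat.card G := Nat.card_pos
    positivity

-- Weierstrass product inequality
lemma one_sub_sum_le_prod {ι : Type*} (s : Finset ι) (x : ι → ℝ)
    (h0 : ∀ i ∈ s, 0 ≤ x i) (h1 : ∀ i ∈ s, x i ≤ 1) :
    1 - ∑ i ∈ s, x i ≤ ∏ i ∈ s, (1 - x i) := by
  classical
  induction s using Finset.induction_on with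
  | empty => simp
  | insert a s hni ih =>
    rw [Finset.sum_insert hni, Finset.prod_insert hni]
    have h0' : ∀ i ∈ s, 0 ≤ x i := fun i hi => h0 i (Finset.mem_insert_of_mem hi)
    have h1' : ∀ i ∈ s, x i ≤ 1 := fun i hi => h1 i (Finset.mem_insert_of_mem hi)
    have ha0 : 0 ≤ x a := h0 a (Finset.mem_insert_self a s)
    have ha1 : x a ≤ 1 := h1 a (Finset.mem_insert_self a s)
    have hs0 : 0 ≤ ∑ i ∈ s, x i := Finset.sum_nonneg h0'
    have := ih h0' h1'
    nlinarith

end Aux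

/-- given an inverse system of finite groups with surjective transition
maps, if for some `k ≥ 2` the zeta quantities
`ζ_n(k-1) = Σ_{[M] ∈ G(L_{n+1}|L_n)} [L_{n+1}:M]^{-(k-1)}` satisfy `ζ_n(k-1) < 1`
for all `n ≥ n₁` and have finite sum over `n ≥ n₁`, and `L_{n₁}` is generated by `k`
elements, then `inf_n p_k(L_n) ≥ ∏_{n ≥ n₁} (1 - ζ_n(k-1)) ⬝ p_k(L_{n₁}) > 0`; in
particular the inverse limit is positively finitely generated (the probabilities
`p_k(L_n)` stay bounded away from `0`). -/
theorem positively_finitely_generated_of_zeta_summable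
    (L : ℕ → Type*) [∀ n, Group (L n)] [∀ n, Fintype (L n)]
    (f : ∀ n, L (n + 1) →* L n) (hf : ∀ n, Function.Surjective (f n))
    (k : ℕ) (hk : 2 ≤ k) (n₁ : ℕ)
    (R : ∀ n, Finset (Subgroup (L (n + 1))))
    (hR : ∀ n, IsConjClassReps (f n) (R n))
    (ζ : ℕ → ℝ) (hζ : ∀ n, ζ n = ∑ M ∈ R n, (1 : ℝ) / (M.index : ℝ) ^ (k - 1))
    (hζlt : ∀ n ≥ n₁, ζ n < 1)
    (hsum : Summable fun m : ℕ => ζ (n₁ + m))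
    (hgen : ∃ S : Finset (L n₁), S.card ≤ k ∧ Subgroup.closure (S : Set (L n₁)) = ⊤) :
    (⨅ n : ℕ, pgen k (L n)) ≥ (∏' m : ℕ, (1 - ζ (n₁ + m))) * pgen k (L n₁) ∧
      0 < (∏' m : ℕ, (1 - ζ (n₁ + m))) * pgen k (L n₁) ∧
      ∃ c > 0, ∀ n, c ≤ pgen k (L n) := by
  classical
  have hk1 : 1 ≤ k := le_trans one_le_two hk
  set p : ℕ → ℝ := fun n => pgen k (L n) with hp
  have hpnonneg : ∀ n, 0 ≤ p n := fun n => pgen_nonneg k (L n)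
  have hmono : ∀ n, p (n + 1) ≤ p n := fun n => pgen_antitone (f n) (hf n) k
  have hmono' : ∀ m n, m ≤ n → p n ≤ p m := by
    intro m n hmn
    induction n, hmn using Nat.le_induction with
    | base => exact le_rfl
    | succ n hmn ih => exact le_trans (hmono n) ih
  have hstep : ∀ n, (1 - ζ n) * p n ≤ p (n + 1) := fun n =>
    pgen_step (f n) (hf n) k hk1 (R n) (hR n) (ζ n) (hζ n)
  have hζ0 : ∀ n, 0 ≤ ζ n := by
    intro n
    rw [hζ n]
    exact Finset.sum_nonneg (fun M _ => by positivity)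
  set a : ℕ → ℝ := fun m => ζ (n₁ + m) with ha
  have ha0 : ∀ m, 0 ≤ a m := fun m => hζ0 _
  have ha1 : ∀ m, a m < 1 := fun m => hζlt _ (Nat.le_add_right _ _)
  set P : ℕ → ℝ := fun m => ∏ j ∈ Finset.range m, (1 - a j) with hP
  have hPpos : ∀ m, 0 < P m := fun m =>
    Finset.prod_pos (fun j _ => by linarith [ha1 j])
  have hPanti : ∀ m n, m ≤ n → P n ≤ P m := by
    intro m n hmn
    rw [hP]
    simp only
    rw [← Finset.prod_range_mul_prod_Ico _ hmn]
    have h1 : ∏ j ∈ Finset.Ico m n, (1 - a j) ≤ 1 :=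
      Finset.prod_le_one (fun j _ => by linarith [ha1 j]) (fun j _ => by linarith [ha0 j])
    nlinarith [hPpos m, h1, Finset.prod_nonneg
      (fun j (_ : j ∈ Finset.Ico m n) => by linarith [ha1 j] : ∀ j ∈ Finset.Ico m n, 0 ≤ 1 - a j)]
  have hpP : ∀ m, P m * p n₁ ≤ p (n₁ + m) := by
    intro m
    induction m with
    | zero => simp [hP]
    | succ m ih =>
      have h1 : (1 - a m) * p (n₁ + m) ≤ p (n₁ + m + 1) := hstep (n₁ + m)
      have h2 : P (m + 1) = P m * (1 - a m) := Finset.prod_range_succ _ m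
      have h3 : 0 ≤ 1 - a m := by linarith [ha1 m]
      calc P (m + 1) * p n₁ = (1 - a m) * (P m * p n₁) := by rw [h2]; ring
        _ ≤ (1 - a m) * p (n₁ + m) := mul_le_mul_of_nonneg_left ih h3
        _ ≤ p (n₁ + m + 1) := h1
  -- uniform lower bound on partial products
  obtain ⟨m₀, hm₀⟩ : ∃ m₀, ∀ n ≥ m₀,
      ∑ j ∈ Finset.Ico m₀ n, a j ≤ 1 / 2 := by
    have hcauchy : CauchySeq (fun n => ∑ j ∈ Finset.range n, a j) :=
      hsum.hasSum.tendsto_sum_nat.cauchySeq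
    obtain ⟨m₀, hm₀⟩ := Metric.cauchySeq_iff'.1 hcauchy (1/2) (by norm_num)
    refine ⟨m₀, fun n hn => ?_⟩
    have := hm₀ n hn
    rw [Real.dist_eq, abs_lt] at this
    have hsub : ∑ j ∈ Finset.Ico m₀ n, a j
        = ∑ j ∈ Finset.range n, a j - ∑ j ∈ Finset.range m₀, a j :=
      (Finset.sum_Ico_eq_sub _ hn)
    linarith [this.2]
  set c₀ : ℝ := P m₀ / 2 with hc₀
  have hc₀pos : 0 < c₀ := by rw [hc₀]; linarith [hPpos m₀]
  have hPc : ∀ n, c₀ ≤ P n := by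
    intro n
    rcases le_or_gt n m₀ with h | h
    · have := hPanti n m₀ h
      linarith [hPpos m₀]
    · have hmn : m₀ ≤ n := le_of_lt h
      have hsplit : P n = P m₀ * ∏ j ∈ Finset.Ico m₀ n, (1 - a j) := by
        rw [hP]
        simp only
        rw [← Finset.prod_range_mul_prod_Ico _ hmn]
      have hw : 1 - ∑ j ∈ Finset.Ico m₀ n, a j ≤ ∏ j ∈ Finset.Ico m₀ n, (1 - a j) :=
        one_sub_sum_le_prod _ _ (fun j _ => ha0 j) (fun j _ => le_of_lt (ha1 j))
      have h2 : (1 : ℝ) / 2 ≤ ∏ j ∈ Finset.Ico m₀ n, (1 - a j) := by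
        have := hm₀ n hmn
        linarith
      rw [hsplit, hc₀]
      nlinarith [hPpos m₀]
  -- the infinite product
  set g : Finset ℕ → ℝ := fun s => ∏ m ∈ s, (1 - a m) with hg
  have hganti : ∀ s t : Finset ℕ, s ⊆ t → g t ≤ g s := by
    intro s t hst
    rw [hg]
    simp only
    rw [← Finset.prod_sdiff hst]
    have h1 : ∏ m ∈ t \ s, (1 - a m) ≤ 1 :=
      Finset.prod_le_one (fun j _ => by linarith [ha1 j]) (fun j _ => by linarith [ha0 j])
    have h2 : 0 ≤ ∏ m ∈ s, (1 - a m) :=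
      Finset.prod_nonneg (fun j _ => by linarith [ha1 j])
    nlinarith
  have hgbdd : BddBelow (Set.range g) := ⟨0, by
    rintro x ⟨s, rfl⟩
    exact Finset.prod_nonneg (fun j _ => by linarith [ha1 j])⟩
  have hgc : ∀ s, c₀ ≤ g s := by
    intro s
    obtain ⟨n, hn⟩ := s.exists_nat_subset_range
    exact le_trans (hPc n) (hganti s (Finset.range n) hn)
  have hhas : HasProd (fun m => 1 - a m) (⨅ s, g s) :=
    tendsto_atTop_ciInf (fun s t hst => hganti s t hst) hgbdd
  have htp : (∏' m, (1 - a m)) = ⨅ s, g s := hhas.tprod_eq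
  have htple : ∀ m, (∏' m, (1 - a m)) ≤ P m := by
    intro m
    rw [htp]
    exact le_trans (ciInf_le hgbdd (Finset.range m)) le_rfl
  have htppos : c₀ ≤ ∏' m, (1 - a m) := by
    rw [htp]
    exact le_ciInf hgc
  have hpn₁pos : 0 < p n₁ := pgen_pos k hgen
  -- the main bound
  have hbound : ∀ n, (∏' m, (1 - a m)) * p n₁ ≤ p n := by
    intro n
    rcases le_or_gt n₁ n with h | h
    · have h1 : (∏' m, (1 - a m)) * p n₁ ≤ P (n - n₁) * p n₁ :=
        mul_le_mul_of_nonneg_right (htple _) (hpnonneg n₁)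
      have h2 := hpP (n - n₁)
      rw [Nat.add_sub_cancel' h] at h2
      exact le_trans h1 h2
    · have h1 : (∏' m, (1 - a m)) ≤ 1 := by
        have := htple 0
        simpa [hP] using this
      calc (∏' m, (1 - a m)) * p n₁ ≤ 1 * p n₁ :=
            mul_le_mul_of_nonneg_right h1 (hpnonneg n₁)
        _ = p n₁ := one_mul _
        _ ≤ p n := hmono' n n₁ (le_of_lt h)
  have htpa : (∏' m : ℕ, (1 - ζ (n₁ + m))) = ∏' m, (1 - a m) := rfl
  refine ⟨?_, ?_, ?_⟩
  · rw [htpa]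
    exact le_ciInf hbound
  · rw [htpa]
    exact mul_pos (lt_of_lt_of_le hc₀pos htppos) hpn₁pos
  · exact ⟨(∏' m, (1 - a m)) * p n₁,
      mul_pos (lt_of_lt_of_le hc₀pos htppos) hpn₁pos, hbound⟩
end

section
/- Let X be a finite group acting transitively on finite nonempty sets Ω_1,…,Ω_t, let B_1,…,B_t be nontrivial perfect finite groups, and Y = X ⋉ (B_1^{Ω_1} × ⋯ × B_t^{Ω_t}), with X permuting coordinates. If M < Y is a proper maximal clean subgroup, then Z(B_i) = (e) for all i. -/
open scoped commutatorElement

private lemma pi_perfect' {ι : Type*} [Fintype ι] (H : ι → Type*) [∀ i, Group (H i)]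
    (h : ∀ i, ⁅(⊤ : Subgroup (H i)), (⊤ : Subgroup (H i))⁆ = ⊤) :
    ⁅(⊤ : Subgroup (∀ i, H i)), (⊤ : Subgroup (∀ i, H i))⁆ = ⊤ := by
  classical
  rw [eq_top_iff]
  intro f _
  have single : ∀ (a : ι) (b : H a),
      Pi.mulSingle a b ∈ ⁅(⊤ : Subgroup (∀ i, H i)), (⊤ : Subgroup (∀ i, H i))⁆ := by
    intro a b
    have hb : b ∈ ⁅(⊤ : Subgroup (H a)), (⊤ : Subgroup (H a))⁆ := (h a).symm ▸ Subgroup.mem_top b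
    have := Subgroup.mem_map_of_mem (MonoidHom.mulSingle H a) hb
    rw [Subgroup.map_commutator] at this
    exact Subgroup.commutator_mono le_top le_top this
  suffices key : ∀ s : Finset ι, ∀ g : ∀ i, H i, (∀ i ∉ s, g i = 1) →
      g ∈ ⁅(⊤ : Subgroup (∀ i, H i)), (⊤ : Subgroup (∀ i, H i))⁆ by
    exact key Finset.univ f (fun i hi => absurd (Finset.mem_univ i) hi)
  intro s
  induction s using Finset.induction_on with
  | empty =>
    intro g hg
    have : g = 1 := funext fun i => hg i (Finset.notMem_empty i)
    rw [this]; exact one_mem _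
  | insert a s ha ih =>
    intro g hg
    have hsplit : g = Pi.mulSingle a (g a) * Function.update g a 1 := by
      funext j
      by_cases hj : j = a
      · subst hj; simp
      · simp [hj, Function.update_of_ne hj]
    rw [hsplit]
    refine mul_mem (single a (g a)) (ih _ ?_)
    intro i hi
    by_cases hia : i = a
    · subst hia; simp
    · rw [Function.update_of_ne hia]
      exact hg i (by simp [hia, hi])

private lemma comm_center_left' {G : Type*} [Group G] {c : G}
    (hc : c ∈ Subgroup.center G) (h g : G) : ⁅h * c, g⁆ = ⁅h, g⁆ := by
  have hcg : c * g = g * c := (Subgroup.mem_center_iff.mp hc g).symm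
  have e : h * c * g * (h * c)⁻¹ = h * g * h⁻¹ := by
    rw [mul_inv_rev]
    have e1 : h * c * g * (c⁻¹ * h⁻¹) = h * (c * g) * c⁻¹ * h⁻¹ := by group
    rw [e1, hcg]; group
  rw [commutatorElement_def, commutatorElement_def, e]

private lemma comm_center_right' {G : Type*} [Group G] {c' : G}
    (hc' : c' ∈ Subgroup.center G) (h g : G) : ⁅h, g * c'⁆ = ⁅h, g⁆ := by
  have hch : c' * h⁻¹ = h⁻¹ * c' := (Subgroup.mem_center_iff.mp hc' h⁻¹).symm
  rw [commutatorElement_def, commutatorElement_def]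
  have e1 : h * (g * c') * h⁻¹ * (g * c')⁻¹ = h * g * (c' * h⁻¹) * (c'⁻¹ * g⁻¹) := by group
  rw [e1, hch]; group

private lemma commutator_mul_center' {G : Type*} [Group G] {c c' : G}
    (hc : c ∈ Subgroup.center G) (hc' : c' ∈ Subgroup.center G) (h h' : G) :
    ⁅h * c, h' * c'⁆ = ⁅h, h'⁆ :=
  (comm_center_left' hc h (h' * c')).trans (comm_center_right' hc' h h')


open SemidirectProduct
open scoped Pointwise

variable (X : Type*) [Group X] {t : ℕ} (Ω : Fin t → Type*) (B : Fin t → Type*)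
  [∀ i, MulAction X (Ω i)] [∀ i, Group (B i)]

/-- The action of `X` on `B₁^{Ω₁} × ⋯ × B_t^{Ω_t}` permuting the coordinates within each
factor according to the action of `X` on the `Ω_i`. -/
def permAutPi : X →* MulAut (∀ i, Ω i → B i) where
  toFun x :=
    { toFun := fun f i ω => f i (x⁻¹ • ω)
      invFun := fun f i ω => f i (x • ω)
      left_inv := fun f => by ext i ω; simp
      right_inv := fun f => by ext i ω; simp
      map_mul' := fun f g => rfl }
  map_one' := by ext f i ω; simp
  map_mul' := fun x y => by ext f i ω; simp [mul_smul]

/-- A *standard* normal subgroup of `Y = X ⋉ (B₁^{Ω₁} × ⋯ × B_t^{Ω_t})` is one of the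
form `∏ᵢ Nᵢ^{Ωᵢ}` with `Nᵢ ⊴ Bᵢ`. -/
def IsStandard (S : Subgroup ((∀ i, Ω i → B i) ⋊[permAutPi X Ω B] X)) : Prop :=
  ∃ N : ∀ i, Subgroup (B i), (∀ i, (N i).Normal) ∧
    S = Subgroup.map (inl : (∀ i, Ω i → B i) →* _)
      (Subgroup.pi Set.univ fun i => Subgroup.pi Set.univ fun _ : Ω i => N i)

/-- let `X` be a finite group acting transitively on finite nonempty sets
`Ω₁,…,Ω_t`, let `B₁,…,B_t` be nontrivial perfect finite groups, and
`Y = X ⋉ (B₁^{Ω₁} × ⋯ × B_t^{Ω_t})`.  If `M < Y` is a proper maximal clean subgroup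
then `Z(Bᵢ) = 1` for all `i`. -/
theorem center_trivial_of_clean_maximal
    [Fintype X] [∀ i, Fintype (Ω i)] [∀ i, Nonempty (Ω i)]
    [∀ i, MulAction.IsPretransitive X (Ω i)]
    [∀ i, Fintype (B i)] [∀ i, Nontrivial (B i)]
    (hperf : ∀ i, ⁅(⊤ : Subgroup (B i)), (⊤ : Subgroup (B i))⁆ = ⊤)
    (M : Subgroup ((∀ i, Ω i → B i) ⋊[permAutPi X Ω B] X))
    (hM : IsCoatom M)
    (hclean : ∀ S, IsStandard X Ω B S → S ≤ M → S = ⊥) :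
    ∀ i, Subgroup.center (B i) = ⊥ := by
  classical
  set K : Subgroup (∀ i, Ω i → B i) :=
    Subgroup.pi Set.univ fun i => Subgroup.pi Set.univ fun _ : Ω i => Subgroup.center (B i)
    with hK
  set Z : Subgroup ((∀ i, Ω i → B i) ⋊[permAutPi X Ω B] X) := Subgroup.map (inl : (∀ i, Ω i → B i) →* ((∀ i, Ω i → B i) ⋊[permAutPi X Ω B] X)) K with hZ
  have hmemK : ∀ c : (∀ i, Ω i → B i), c ∈ K ↔ ∀ (i : Fin t) (ω : Ω i), c i ω ∈ Subgroup.center (B i) := by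
    intro c
    constructor
    · intro hc i ω
      exact (Subgroup.mem_pi _).mp ((Subgroup.mem_pi _).mp hc i (Set.mem_univ i)) ω (Set.mem_univ ω)
    · intro hc
      exact (Subgroup.mem_pi _).mpr fun i _ => (Subgroup.mem_pi _).mpr fun ω _ => hc i ω
  -- `Z` is a normal subgroup of `((∀ i, Ω i → B i) ⋊[permAutPi X Ω B] X)`
  haveI hZnorm : Z.Normal := by
    constructor
    intro n hn g
    obtain ⟨k, hk, rfl⟩ := hn
    have hconj : g * inl k * g⁻¹
        = inl (g.left * (permAutPi X Ω B g.right) k * g.left⁻¹) := by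
      apply SemidirectProduct.ext <;>
        simp [mul_assoc, map_inv, MulAut.apply_inv_self]
    rw [hconj]
    refine ⟨_, (hmemK _).mpr fun i ω => ?_, rfl⟩
    have hki : k i ((g.right)⁻¹ • ω) ∈ Subgroup.center (B i) := (hmemK k).mp hk i _
    exact Subgroup.Normal.conj_mem inferInstance _ hki _
  have hZstd : IsStandard X Ω B Z := ⟨fun i => Subgroup.center (B i), fun _ => inferInstance, rfl⟩
  -- elements of `K` are central in `(∀ i, Ω i → B i)`
  have hKcent : ∀ c ∈ K, c ∈ Subgroup.center (∀ i, Ω i → B i) := by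
    intro c hc
    rw [Subgroup.mem_center_iff]
    intro g
    funext i ω
    exact Subgroup.mem_center_iff.mp ((hmemK c).mp hc i ω) (g i ω)
  -- the key step: `Z ≤ M`
  have hZM : Z ≤ M := by
    by_contra hnle
    have hne : Z ≠ ⊥ := fun h => hnle (h ▸ bot_le)
    obtain ⟨a, ha1⟩ := Subgroup.ne_bot_iff_exists_ne_one.mp hne
    obtain ⟨c0, hc0K, hc0eq⟩ := a.2
    have hsup : M ⊔ Z = ⊤ :=
      hM.2 _ (lt_of_le_of_ne le_sup_left fun h => hnle (le_sup_right.trans h.ge))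
    -- every element of `(∀ i, Ω i → B i)` is (mod `inl`) a member of `M` times a central element
    have hHC : ∀ f : (∀ i, Ω i → B i), ∃ c ∈ K, f * c⁻¹ ∈ Subgroup.comap (inl : (∀ i, Ω i → B i) →* ((∀ i, Ω i → B i) ⋊[permAutPi X Ω B] X)) M := by
      intro f
      have hf : (inl f : ((∀ i, Ω i → B i) ⋊[permAutPi X Ω B] X)) ∈ ((M : Set ((∀ i, Ω i → B i) ⋊[permAutPi X Ω B] X)) * (Z : Set ((∀ i, Ω i → B i) ⋊[permAutPi X Ω B] X))) := by
        rw [← Subgroup.mul_normal M Z, hsup]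
        exact Subgroup.mem_top _
      obtain ⟨m, hm, zz, hzz, hmz⟩ := hf
      obtain ⟨c, hcK, rfl⟩ := hzz
      refine ⟨c, hcK, ?_⟩
      rw [Subgroup.mem_comap]
      have he : (inl (f * c⁻¹) : ((∀ i, Ω i → B i) ⋊[permAutPi X Ω B] X)) = m := by
        rw [map_mul, map_inv, ← hmz, mul_inv_cancel_right]
      rw [he]
      exact hm
    -- hence all of `inl '' (∀ i, Ω i → B i)` lies in `M`, by perfectness of `(∀ i, Ω i → B i)`
    have hGM : ∀ f : (∀ i, Ω i → B i), (inl f : ((∀ i, Ω i → B i) ⋊[permAutPi X Ω B] X)) ∈ M := by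
      have hperfG : ⁅(⊤ : Subgroup (∀ i, Ω i → B i)), (⊤ : Subgroup (∀ i, Ω i → B i))⁆ = ⊤ :=
        pi_perfect' _ (fun i => pi_perfect' (fun _ : Ω i => B i) (fun _ => hperf i))
      have hle : (⊤ : Subgroup (∀ i, Ω i → B i)) ≤ Subgroup.comap (inl : (∀ i, Ω i → B i) →* ((∀ i, Ω i → B i) ⋊[permAutPi X Ω B] X)) M := by
        rw [← hperfG, Subgroup.commutator_le]
        intro f _ g _
        obtain ⟨c, hcK, hfc⟩ := hHC f
        obtain ⟨c', hc'K, hgc⟩ := hHC g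
        have e : ⁅f, g⁆ = ⁅f * c⁻¹ * c, g * c'⁻¹ * c'⁆ := by group
        rw [e, commutator_mul_center' (hKcent c hcK) (hKcent c' hc'K)]
        rw [commutatorElement_def]
        exact mul_mem (mul_mem (mul_mem hfc hgc) (inv_mem hfc)) (inv_mem hgc)
      exact fun f => Subgroup.mem_comap.mp (hle (Subgroup.mem_top f))
    -- the full standard subgroup is then `≤ M`, contradicting cleanness
    set F : Subgroup ((∀ i, Ω i → B i) ⋊[permAutPi X Ω B] X) := Subgroup.map (inl : (∀ i, Ω i → B i) →* ((∀ i, Ω i → B i) ⋊[permAutPi X Ω B] X))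
      (Subgroup.pi Set.univ fun i => Subgroup.pi Set.univ fun _ : Ω i => (⊤ : Subgroup (B i)))
      with hF
    have hFstd : IsStandard X Ω B F := ⟨fun _ => ⊤, fun _ => inferInstance, rfl⟩
    have hFM : F ≤ M := by
      rintro y ⟨f, -, rfl⟩
      exact hGM f
    have hFbot := hclean F hFstd hFM
    have hc0F : (inl c0 : ((∀ i, Ω i → B i) ⋊[permAutPi X Ω B] X)) ∈ F :=
      ⟨c0, (Subgroup.mem_pi _).mpr fun _ _ => (Subgroup.mem_pi _).mpr fun _ _ => trivial, rfl⟩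
    rw [hFbot, Subgroup.mem_bot] at hc0F
    have hav : (a : ((∀ i, Ω i → B i) ⋊[permAutPi X Ω B] X)) = 1 := by rw [← hc0eq]; exact hc0F
    exact ha1 (Subtype.ext (by simpa using hav))
  -- cleanness forces `Z = ⊥`, whence all the centers are trivial
  have hZbot := hclean Z hZstd hZM
  intro i
  rw [eq_bot_iff]
  intro b hb
  have hfK : Pi.mulSingle i (fun _ : Ω i => b) ∈ K := by
    rw [hmemK]
    intro i' ω
    by_cases h : i' = i
    · subst h; simp only [Pi.mulSingle_eq_same]; exact hb
    · rw [Pi.mulSingle_eq_of_ne h]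
      · exact one_mem _
  have hmem : (inl (Pi.mulSingle i (fun _ : Ω i => b)) : ((∀ i, Ω i → B i) ⋊[permAutPi X Ω B] X)) ∈ Z := ⟨_, hfK, rfl⟩
  rw [hZbot, Subgroup.mem_bot] at hmem
  have h1 : Pi.mulSingle i (fun _ : Ω i => b) = (1 : (∀ i, Ω i → B i)) := inl_injective (by simpa using hmem)
  obtain ⟨ω⟩ := ‹∀ i, Nonempty (Ω i)› i
  have hbω := congrFun (congrFun h1 i) ω
  rw [Pi.mulSingle_eq_same] at hbω
  simpa [Subgroup.mem_bot] using hbω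
end

section
/- With Y = X ⋉ (B_1^{Ω_1} × ⋯ × B_t^{Ω_t}) as above, if M < Y is a proper maximal clean subgroup with π(M) = X (π : Y → X the projection), then the normal core M^0 = ∩_{y∈Y} yMy^{-1} intersects ∏_{i=1}^t B_i^{Ω_i} trivially; i.e., ∏ B_i^{Ω_i} acts faithfully on Y/M. -/
open SemidirectProduct
open commutatorElement

section AuxForStatement9

/-- A finite product of perfect groups is perfect. -/
lemma pi_perfect_aux {ι : Type*} [Fintype ι] [DecidableEq ι] {G : ι → Type*}
    [∀ i, Group (G i)] (h : ∀ i, ⁅(⊤ : Subgroup (G i)), (⊤ : Subgroup (G i))⁆ = ⊤) :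
    ⁅(⊤ : Subgroup (∀ i, G i)), (⊤ : Subgroup (∀ i, G i))⁆ = ⊤ := by
  rw [eq_top_iff]
  intro f _
  rw [← Finset.noncommProd_mulSingle f]
  refine Subgroup.noncommProd_mem _ _ fun i _ => ?_
  have hi : f i ∈ ⁅(⊤ : Subgroup (G i)), (⊤ : Subgroup (G i))⁆ := (h i).ge trivial
  have hm := Subgroup.mem_map_of_mem (MonoidHom.mulSingle G i) hi
  rw [Subgroup.map_commutator] at hm
  simpa [MonoidHom.mulSingle_apply] using
    Subgroup.commutator_mono (le_top : _ ≤ (⊤ : Subgroup (∀ i, G i))) le_top hm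

/-- Multiplying entries by central elements does not change a commutator. -/
lemma commutator_mul_central_aux {G : Type*} [Group G] (a b : G) {x y : G}
    (hx : ∀ g : G, x * g = g * x) (hy : ∀ g : G, y * g = g * y) :
    ⁅a * x, b * y⁆ = ⁅a, b⁆ := by
  have h1 : (a * x) * (b * y) * (a * x)⁻¹ = a * (b * y) * a⁻¹ := by
    rw [mul_inv_rev]
    calc a * x * (b * y) * (x⁻¹ * a⁻¹) = a * (x * (b * y) * x⁻¹) * a⁻¹ := by
          simp [mul_assoc]
      _ = a * (b * y) * a⁻¹ := by rw [hx (b * y), mul_assoc (b * y), mul_inv_cancel, mul_one]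
  calc ⁅a * x, b * y⁆ = (a * x) * (b * y) * (a * x)⁻¹ * (b * y)⁻¹ := by
        rw [commutatorElement_def]
    _ = a * (b * y) * a⁻¹ * (y⁻¹ * b⁻¹) := by rw [h1, mul_inv_rev]
    _ = a * b * (y * a⁻¹ * y⁻¹) * b⁻¹ := by simp [mul_assoc]
    _ = a * b * a⁻¹ * b⁻¹ := by rw [hy a⁻¹, mul_assoc a⁻¹, mul_inv_cancel, mul_one]
    _ = ⁅a, b⁆ := (commutatorElement_def a b).symm

end AuxForStatement9

variable (X : Type*) [Group X] {t : ℕ} (Ω : Fin t → Type*) (B : Fin t → Type*)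
  [∀ i, MulAction X (Ω i)] [∀ i, Group (B i)]

/-- with `Y = X ⋉ (B₁^{Ω₁} × ⋯ × B_t^{Ω_t})` as above, if `M < Y` is a
proper maximal clean subgroup with `π(M) = X`, then the normal core
`M⁰ = ∩_y yMy⁻¹` intersects `∏ᵢ Bᵢ^{Ωᵢ}` trivially, i.e. `∏ Bᵢ^{Ωᵢ}` acts faithfully
on `Y/M`. -/
theorem normalCore_inf_base_eq_bot_of_clean_maximal
    [Fintype X] [∀ i, Fintype (Ω i)] [∀ i, Nonempty (Ω i)]
    [∀ i, MulAction.IsPretransitive X (Ω i)]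
    [∀ i, Fintype (B i)] [∀ i, Nontrivial (B i)]
    (hperf : ∀ i, ⁅(⊤ : Subgroup (B i)), (⊤ : Subgroup (B i))⁆ = ⊤)
    (M : Subgroup ((∀ i, Ω i → B i) ⋊[permAutPi X Ω B] X))
    (hM : IsCoatom M)
    (hclean : ∀ S, IsStandard X Ω B S → S ≤ M → S = ⊥)
    (hsurj : M.map (rightHom : _ →* X) = ⊤) :
    M.normalCore ⊓ (inl : (∀ i, Ω i → B i) →* _).range = ⊥ := by
  classical
  by_contra hne
  -- extract a nontrivial element of the intersection
  obtain ⟨y, hy, hy1⟩ : ∃ y ∈ M.normalCore ⊓ (inl : (∀ i, Ω i → B i) →* _).range, y ≠ 1 := by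
    by_contra h
    push_neg at h
    exact hne ((Subgroup.eq_bot_iff_forall _).mpr h)
  obtain ⟨f₀, rfl⟩ := hy.2
  have hf₀ne : f₀ ≠ 1 := fun h => hy1 (by rw [h, map_one])
  -- the part of the normal core inside the base group
  set P₀ : Subgroup (∀ i, Ω i → B i) := M.normalCore.comap
    (inl : (∀ i, Ω i → B i) →* _) with hP₀def
  have hf₀P : f₀ ∈ P₀ := hy.1
  have hP₀M : ∀ {f}, f ∈ P₀ → inl f ∈ M := fun hf => M.normalCore_le hf
  have hP₀normal : P₀.Normal := Subgroup.normal_comap _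
  -- P₀ is invariant under the permutation action of X
  have hperm : ∀ (x : X) (f : ∀ i, Ω i → B i) (j : Fin t) (ω : Ω j),
      permAutPi X Ω B x f j ω = f j (x⁻¹ • ω) := fun _ _ _ _ => rfl
  have hP₀conjX : ∀ {f}, f ∈ P₀ → ∀ x : X, permAutPi X Ω B x f ∈ P₀ := by
    intro f hf x
    have h : (inl (permAutPi X Ω B x f) : (∀ i, Ω i → B i) ⋊[permAutPi X Ω B] X)
        = inr x * inl f * (inr x)⁻¹ := by rw [inl_aut, map_inv]
    rw [hP₀def, Subgroup.mem_comap, h]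
    exact M.normalCore_normal.conj_mem _ hf _
  -- moving single-coordinate elements of P₀ between points of Ω i
  have htrans : ∀ (i : Fin t) (ω ω' : Ω i) (b : B i),
      Pi.mulSingle i (Pi.mulSingle ω b) ∈ P₀ → Pi.mulSingle i (Pi.mulSingle ω' b) ∈ P₀ := by
    intro i ω ω' b hb
    obtain ⟨x, hx⟩ := MulAction.exists_smul_eq X ω ω'
    have := hP₀conjX hb x
    have heq : permAutPi X Ω B x (Pi.mulSingle i (Pi.mulSingle ω b))
        = Pi.mulSingle i (Pi.mulSingle ω' b) := by
      funext j ω''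
      rw [hperm]
      rcases eq_or_ne j i with rfl | hj
      · rcases eq_or_ne ω'' ω' with rfl | hω
        · rw [Pi.mulSingle_eq_same, Pi.mulSingle_eq_same]
          have : x⁻¹ • ω'' = ω := by rw [← hx, inv_smul_smul]
          rw [this, Pi.mulSingle_eq_same, Pi.mulSingle_eq_same]
        · rw [Pi.mulSingle_eq_same, Pi.mulSingle_eq_same]
          have hne' : x⁻¹ • ω'' ≠ ω := by
            intro h
            exact hω (by rw [← hx, ← h, smul_inv_smul])
          rw [Pi.mulSingle_eq_of_ne hne', Pi.mulSingle_eq_of_ne hω]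
      · rw [Pi.mulSingle_eq_of_ne hj, Pi.mulSingle_eq_of_ne hj, Pi.one_apply, Pi.one_apply]
    rwa [heq] at this
  -- the coordinate monoid homs
  let δ : ∀ i : Fin t, Ω i → (B i →* (∀ j, Ω j → B j)) := fun i ω =>
    (MonoidHom.mulSingle (fun j => Ω j → B j) i).comp
      (MonoidHom.mulSingle (fun _ : Ω i => B i) ω)
  have hδ : ∀ (i : Fin t) (ω : Ω i) (b : B i),
      δ i ω b = Pi.mulSingle i (Pi.mulSingle ω b) := fun _ _ _ => rfl
  -- the subgroup of single-coordinate elements of P₀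
  let Q : ∀ i : Fin t, Subgroup (B i) := fun i => ⨅ ω : Ω i, P₀.comap (δ i ω)
  have hQmem : ∀ (i : Fin t) (b : B i), b ∈ Q i ↔ ∀ ω : Ω i,
      Pi.mulSingle i (Pi.mulSingle ω b) ∈ P₀ := by
    intro i b
    simp only [Q, Subgroup.mem_iInf, Subgroup.mem_comap, hδ]
  have hQnormal : ∀ i, (Q i).Normal := by
    intro i
    constructor
    intro b hb c
    rw [hQmem] at hb ⊢
    intro ω
    have : Pi.mulSingle i (Pi.mulSingle ω (c * b * c⁻¹))
        = δ i ω c * δ i ω b * (δ i ω c)⁻¹ := by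
      rw [← map_inv, ← map_mul, ← map_mul, hδ]
    rw [this]
    exact hP₀normal.conj_mem _ (by rw [hδ]; exact hb ω) _
  -- decomposing an element of the base group as a product of single-coordinate elements
  have hfactor : ∀ f : (∀ i, Ω i → B i),
      (∀ (i : Fin t) (ω : Ω i), Pi.mulSingle i (Pi.mulSingle ω (f i ω)) ∈ P₀) → f ∈ P₀ := by
    intro f hf
    rw [← Finset.noncommProd_mulSingle f]
    refine Subgroup.noncommProd_mem _ _ fun i _ => ?_
    have : Pi.mulSingle i (f i)
        = (MonoidHom.mulSingle (fun j => Ω j → B j) i)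
          (Finset.univ.noncommProd (fun ω => Pi.mulSingle ω (f i ω))
            fun ω _ ω' _ _ => Pi.mulSingle_apply_commute (f i) ω ω') := by
      rw [Finset.noncommProd_mulSingle (f i), MonoidHom.mulSingle_apply]
    rw [this]
    erw [Finset.map_noncommProd]
    exact Subgroup.noncommProd_mem _ _ fun ω _ => by
      simpa [MonoidHom.mulSingle_apply] using hf i ω
  -- cleanness kills the Q i
  have hQbot : ∀ i, Q i = ⊥ := by
    have hle : Subgroup.map (inl : (∀ i, Ω i → B i) →* _)
        (Subgroup.pi Set.univ fun i => Subgroup.pi Set.univ fun _ : Ω i => Q i) ≤ M := by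
      rintro y ⟨f, hf, rfl⟩
      refine hP₀M (hfactor f fun i ω => ?_)
      have hb : f i ω ∈ Q i := by
        have hf2 : f ∈ (Subgroup.pi Set.univ fun i =>
            Subgroup.pi Set.univ fun _ : Ω i => Q i) := hf
        rw [Subgroup.mem_pi] at hf2
        have hf3 := hf2 i trivial
        rw [Subgroup.mem_pi] at hf3
        exact hf3 ω trivial
      exact (hQmem i (f i ω)).mp hb ω
    have := hclean _ ⟨Q, hQnormal, rfl⟩ hle
    rw [Subgroup.map_eq_bot_iff] at this
    intro i
    rw [eq_bot_iff]
    intro b hb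
    obtain ⟨ω⟩ := ‹∀ i, Nonempty (Ω i)› i
    have hmem : Pi.mulSingle i (Pi.mulSingle ω b)
        ∈ (Subgroup.pi Set.univ fun i => Subgroup.pi Set.univ fun _ : Ω i => Q i) := by
      rw [Subgroup.mem_pi]
      intro j _
      rw [Subgroup.mem_pi]
      intro ω' _
      rcases eq_or_ne j i with rfl | hj
      · rcases eq_or_ne ω' ω with rfl | hω
        · rw [Pi.mulSingle_eq_same, Pi.mulSingle_eq_same]; exact hb
        · rw [Pi.mulSingle_eq_same, Pi.mulSingle_eq_of_ne hω]; exact one_mem _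
      · rw [Pi.mulSingle_eq_of_ne hj, Pi.one_apply]; exact one_mem _
    have h1 : Pi.mulSingle i (Pi.mulSingle ω b) = (1 : ∀ j, Ω j → B j) := by
      have h2 := this hmem
      rw [MonoidHom.mem_ker] at h2
      exact inl_injective (by rw [map_one]; exact h2)
    have := congrFun (congrFun h1 i) ω
    rwa [Pi.mulSingle_eq_same, Pi.mulSingle_eq_same, Pi.one_apply] at this
  -- hence all values of elements of P₀ are central
  have hcentral : ∀ {f}, f ∈ P₀ → ∀ (i : Fin t) (ω : Ω i) (c : B i),
      f i ω * c = c * f i ω := by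
    intro f hf i ω c
    have hcom : ⁅f i ω, c⁆ ∈ Q i := by
      rw [hQmem]
      intro ω'
      refine htrans i ω ω' _ ?_
      have hu : ⁅f, Pi.mulSingle i (Pi.mulSingle ω c)⁆ ∈ P₀ := by
        have : ⁅f, Pi.mulSingle i (Pi.mulSingle ω c)⁆
            = f * ((Pi.mulSingle i (Pi.mulSingle ω c)) * f⁻¹
                * (Pi.mulSingle i (Pi.mulSingle ω c))⁻¹) := by
          rw [commutatorElement_def]; group
        rw [this]
        exact P₀.mul_mem hf (hP₀normal.conj_mem _ (P₀.inv_mem hf) _)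
      have heq : ⁅f, Pi.mulSingle i (Pi.mulSingle ω c)⁆
          = (Pi.mulSingle i (Pi.mulSingle ω ⁅f i ω, c⁆) : ∀ j, Ω j → B j) := by
        funext j ω''
        simp only [commutatorElement_def, Pi.mul_apply, Pi.inv_apply]
        rcases eq_or_ne j i with rfl | hj
        · rcases eq_or_ne ω'' ω with rfl | hω
          · rw [Pi.mulSingle_eq_same, Pi.mulSingle_eq_same, Pi.mulSingle_eq_same,
              Pi.mulSingle_eq_same]
          · rw [Pi.mulSingle_eq_same, Pi.mulSingle_eq_same, Pi.mulSingle_eq_of_ne hω,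
              Pi.mulSingle_eq_of_ne hω]
            simp
        · rw [Pi.mulSingle_eq_of_ne hj, Pi.mulSingle_eq_of_ne hj, Pi.one_apply]
          simp
      rwa [heq] at hu
    rw [hQbot i, Subgroup.mem_bot] at hcom
    exact commutatorElement_eq_one_iff_commute.mp hcom
  -- the standard subgroup generated by the values of P₀
  let V : ∀ i : Fin t, Set (B i) := fun i => {b | ∃ f ∈ P₀, ∃ ω : Ω i, f i ω = b}
  let N : ∀ i : Fin t, Subgroup (B i) := fun i => Subgroup.closure (V i)
  have hNcentral : ∀ (i : Fin t), ∀ b ∈ N i, ∀ c : B i, b * c = c * b := by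
    intro i
    have hsub : V i ⊆ (Subgroup.center (B i) : Set (B i)) := by
      rintro b ⟨f, hf, ω, rfl⟩
      rw [SetLike.mem_coe, Subgroup.mem_center_iff]
      intro c
      exact (hcentral hf i ω c).symm
    intro b hb c
    have : b ∈ Subgroup.center (B i) := (Subgroup.closure_le _).mpr hsub hb
    exact (Subgroup.mem_center_iff.mp this c).symm
  have hNnormal : ∀ i, (N i).Normal := by
    intro i
    constructor
    intro b hb c
    have : c * b * c⁻¹ = b := by
      rw [← hNcentral i b hb c, mul_assoc, mul_inv_cancel, mul_one]
    rwa [this]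
  -- the standard subgroup S'
  set piN : Subgroup (∀ i, Ω i → B i) :=
    Subgroup.pi Set.univ fun i => Subgroup.pi Set.univ fun _ : Ω i => N i with hpiNdef
  set S' : Subgroup ((∀ i, Ω i → B i) ⋊[permAutPi X Ω B] X) :=
    Subgroup.map (inl : (∀ i, Ω i → B i) →* _) piN with hS'def
  have hpiNmem : ∀ {f}, f ∈ piN ↔ ∀ (i : Fin t) (ω : Ω i), f i ω ∈ N i := by
    intro f
    rw [hpiNdef, Subgroup.mem_pi]
    constructor
    · intro h i ω
      have := h i trivial
      rw [Subgroup.mem_pi] at this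
      exact this ω trivial
    · intro h i _
      rw [Subgroup.mem_pi]
      exact fun ω _ => h i ω
  have hS'nle : ¬ S' ≤ M := by
    intro hle
    have hbot := hclean _ ⟨N, hNnormal, hS'def⟩ hle
    have hf₀mem : inl f₀ ∈ S' := by
      refine ⟨f₀, ?_, rfl⟩
      show f₀ ∈ piN
      rw [hpiNmem]
      exact fun i ω => Subgroup.subset_closure ⟨f₀, hf₀P, ω, rfl⟩
    rw [hbot, Subgroup.mem_bot] at hf₀mem
    exact hf₀ne (by
      have := congrArg SemidirectProduct.left hf₀mem
      simpa using this)
  have hS'normal : S'.Normal := by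
    constructor
    rintro n hn g
    obtain ⟨f, hf, rfl⟩ := hn
    have hgd : g = inl g.left * inr g.right := by ext <;> simp
    have hmem : permAutPi X Ω B g.right f ∈ piN := by
      rw [hpiNmem]
      intro i ω
      rw [hperm]
      exact hpiNmem.mp hf i _
    have hcentr : ∀ (l : ∀ i, Ω i → B i) (f' : ∀ i, Ω i → B i), f' ∈ piN →
        l * f' * l⁻¹ = f' := by
      intro l f' hf'
      funext i ω
      simp only [Pi.mul_apply, Pi.inv_apply]
      rw [← hNcentral i (f' i ω) (hpiNmem.mp hf' i ω) (l i ω), mul_assoc, mul_inv_cancel,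
        mul_one]
    have : g * inl f * g⁻¹ = inl (permAutPi X Ω B g.right f) := by
      conv_lhs => rw [hgd]
      calc inl g.left * inr g.right * inl f * (inl g.left * inr g.right)⁻¹
          = inl g.left * (inr g.right * inl f * (inr g.right)⁻¹) * (inl g.left)⁻¹ := by
            rw [mul_inv_rev]; simp only [mul_assoc]
        _ = inl g.left * inl (permAutPi X Ω B g.right f) * (inl g.left)⁻¹ := by
            rw [← map_inv, ← inl_aut]
        _ = inl (g.left * permAutPi X Ω B g.right f * g.left⁻¹) := by
            rw [map_mul, map_mul, map_inv]
        _ = inl (permAutPi X Ω B g.right f) := by rw [hcentr _ _ hmem]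
    rw [this]
    exact ⟨_, hmem, rfl⟩
  -- maximality gives M ⊔ S' = ⊤
  have hsup : M ⊔ S' = ⊤ := hM.2 _ (left_lt_sup.mpr hS'nle)
  -- every commutator of base elements lies in M
  have hdecomp : ∀ g : (∀ i, Ω i → B i), ∃ g₁ s, g = g₁ * s ∧ inl g₁ ∈ M ∧ s ∈ piN := by
    intro g
    have : (inl g : (∀ i, Ω i → B i) ⋊[permAutPi X Ω B] X) ∈ (↑(M ⊔ S') : Set _) := by
      rw [hsup]; trivial
    rw [Subgroup.mul_normal] at this
    obtain ⟨m, hm, s, hs, hms⟩ := this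
    obtain ⟨s₀, hs₀, rfl⟩ := hs
    refine ⟨g * s₀⁻¹, s₀, by group, ?_, hs₀⟩
    have : inl (g * s₀⁻¹) = m := by
      rw [map_mul, map_inv, ← hms, mul_assoc, mul_inv_cancel, mul_one]
    rwa [this]
  have hcommM : ∀ g h : (∀ i, Ω i → B i), (inl ⁅g, h⁆ :
      (∀ i, Ω i → B i) ⋊[permAutPi X Ω B] X) ∈ M := by
    intro g h
    obtain ⟨g₁, s₁, rfl, hg₁, hs₁⟩ := hdecomp g
    obtain ⟨h₁, s₂, rfl, hh₁, hs₂⟩ := hdecomp h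
    have hx : ∀ c : (∀ i, Ω i → B i), s₁ * c = c * s₁ := by
      intro c; funext i ω
      simp only [Pi.mul_apply]
      exact hNcentral i (s₁ i ω) (hpiNmem.mp hs₁ i ω) (c i ω)
    have hy : ∀ c : (∀ i, Ω i → B i), s₂ * c = c * s₂ := by
      intro c; funext i ω
      simp only [Pi.mul_apply]
      exact hNcentral i (s₂ i ω) (hpiNmem.mp hs₂ i ω) (c i ω)
    rw [commutator_mul_central_aux g₁ h₁ hx hy, map_commutatorElement,
      commutatorElement_def]
    exact M.mul_mem (M.mul_mem (M.mul_mem hg₁ hh₁) (M.inv_mem hg₁)) (M.inv_mem hh₁)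
  -- the whole base group lies in M
  have hbase : ∀ g : (∀ i, Ω i → B i),
      (inl g : (∀ i, Ω i → B i) ⋊[permAutPi X Ω B] X) ∈ M := by
    have hbperf : ⁅(⊤ : Subgroup (∀ i, Ω i → B i)), (⊤ : Subgroup (∀ i, Ω i → B i))⁆ = ⊤ :=
      pi_perfect_aux fun i => pi_perfect_aux fun _ => hperf i
    have hcle : ⁅Subgroup.map
          (inl : (∀ i, Ω i → B i) →* ((∀ i, Ω i → B i) ⋊[permAutPi X Ω B] X)) ⊤,
        Subgroup.map
          (inl : (∀ i, Ω i → B i) →* ((∀ i, Ω i → B i) ⋊[permAutPi X Ω B] X)) ⊤⁆ ≤ M := by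
      rw [Subgroup.commutator_le]
      rintro u ⟨g, -, rfl⟩ v ⟨h, -, rfl⟩
      rw [← map_commutatorElement]
      exact hcommM g h
    intro g
    have : (inl g : (∀ i, Ω i → B i) ⋊[permAutPi X Ω B] X)
        ∈ Subgroup.map
          (inl : (∀ i, Ω i → B i) →* ((∀ i, Ω i → B i) ⋊[permAutPi X Ω B] X)) ⊤ :=
      ⟨g, trivial, rfl⟩
    rw [← hbperf, Subgroup.map_commutator] at this
    exact hcle this
  -- conclude M = ⊤, contradiction
  refine hM.1 (top_unique fun y _ => ?_)
  have hyd : y = inl y.left * inr y.right := by ext <;> simp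
  have hr : inr y.right ∈ M := by
    have : y.right ∈ M.map (rightHom : _ →* X) := by rw [hsurj]; trivial
    obtain ⟨m, hm, hmr⟩ := this
    have h3 : (inr (rightHom m) : (∀ i, Ω i → B i) ⋊[permAutPi X Ω B] X)
        = (inl m.left)⁻¹ * m := by
      ext <;> simp
    rw [← hmr, h3]
    exact M.mul_mem (M.inv_mem (hbase m.left)) hm
  rw [hyd]
  exact M.mul_mem (hbase y.left) hr
end

section
/- Let X act transitively on finite sets Ω_1, Ω_2, let B_1, B_2 be nontrivial perfect finite groups with trivial center, and Y = X ⋉ (B_1^{Ω_1} × B_2^{Ω_2}). If M < Y is a proper maximal clean subgroup surjecting onto X, then B_1 and B_2 are non-abelian simple, M ∩ (B_1^{Ω_1} × B_2^{Ω_2}) is the graph of an isomorphism B_1^{Ω_1} → B_2^{Ω_2}, M = N_Y(M ∩ (B_1^{Ω_1} × B_2^{Ω_2})), and [Y : M] ≥ |B_1|^{|Ω_1|}. -/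
open SemidirectProduct
open Pointwise
open scoped commutatorElement

variable (X : Type*) [Group X] (Ω₁ Ω₂ : Type*) (B₁ B₂ : Type*)
  [MulAction X Ω₁] [MulAction X Ω₂] [Group B₁] [Group B₂]

/-- The action of `X` on `B₁^{Ω₁} × B₂^{Ω₂}` permuting coordinates. -/
def permAut₂ : X →* MulAut ((Ω₁ → B₁) × (Ω₂ → B₂)) where
  toFun x :=
    { toFun := fun f => (fun ω => f.1 (x⁻¹ • ω), fun ω => f.2 (x⁻¹ • ω))
      invFun := fun f => (fun ω => f.1 (x • ω), fun ω => f.2 (x • ω))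
      left_inv := fun f => by ext ω <;> simp
      right_inv := fun f => by ext ω <;> simp
      map_mul' := fun f g => rfl }
  map_one' := by ext f ω <;> simp
  map_mul' := fun x y => by ext f ω <;> simp [mul_smul]

set_option maxHeartbeats 1000000

/-- let `X` act transitively on the finite sets `Ω₁, Ω₂`, let `B₁, B₂`
be nontrivial perfect finite groups with trivial center, and
`Y = X ⋉ (B₁^{Ω₁} × B₂^{Ω₂})`.  If `M < Y` is a proper maximal clean subgroup
surjecting onto `X`, then `B₁` and `B₂` are non-abelian simple,
`M ∩ (B₁^{Ω₁} × B₂^{Ω₂})` is the graph of an isomorphism `B₁^{Ω₁} → B₂^{Ω₂}`,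
`M = N_Y(M ∩ (B₁^{Ω₁} × B₂^{Ω₂}))`, and `[Y : M] ≥ |B₁|^{|Ω₁|}`. -/
theorem two_factor_clean_maximal
    [Fintype X] [Fintype Ω₁] [Fintype Ω₂] [Nonempty Ω₁] [Nonempty Ω₂]
    [MulAction.IsPretransitive X Ω₁] [MulAction.IsPretransitive X Ω₂]
    [Fintype B₁] [Fintype B₂] [Nontrivial B₁] [Nontrivial B₂]
    (hperf₁ : ⁅(⊤ : Subgroup B₁), (⊤ : Subgroup B₁)⁆ = ⊤)
    (hperf₂ : ⁅(⊤ : Subgroup B₂), (⊤ : Subgroup B₂)⁆ = ⊤)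
    (hz₁ : Subgroup.center B₁ = ⊥) (hz₂ : Subgroup.center B₂ = ⊥)
    (M : Subgroup (((Ω₁ → B₁) × (Ω₂ → B₂)) ⋊[permAut₂ X Ω₁ Ω₂ B₁ B₂] X))
    (hM : IsCoatom M)
    (hclean : ∀ (N₁ : Subgroup B₁) (N₂ : Subgroup B₂), N₁.Normal → N₂.Normal →
      Subgroup.map (inl : ((Ω₁ → B₁) × (Ω₂ → B₂)) →* _)
        ((Subgroup.pi Set.univ fun _ : Ω₁ => N₁).prod
          (Subgroup.pi Set.univ fun _ : Ω₂ => N₂)) ≤ M →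
      N₁ = ⊥ ∧ N₂ = ⊥)
    (hsurj : M.map (rightHom : _ →* X) = ⊤) :
    (IsSimpleGroup B₁ ∧ ∃ a b : B₁, a * b ≠ b * a) ∧
    (IsSimpleGroup B₂ ∧ ∃ a b : B₂, a * b ≠ b * a) ∧
    (∃ e : (Ω₁ → B₁) ≃* (Ω₂ → B₂),
      M ⊓ (inl : ((Ω₁ → B₁) × (Ω₂ → B₂)) →* _).range =
        Subgroup.map (inl : ((Ω₁ → B₁) × (Ω₂ → B₂)) →* _)
          (MonoidHom.eqLocus (e.toMonoidHom.comp (MonoidHom.fst _ _)) (MonoidHom.snd _ _))) ∧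
    M = Subgroup.normalizer ((M ⊓ (inl : ((Ω₁ → B₁) × (Ω₂ → B₂)) →* _).range : Subgroup _) : Set _) ∧
    (Fintype.card B₁) ^ (Fintype.card Ω₁) ≤ M.index := by
  classical
  let φ := permAut₂ X Ω₁ Ω₂ B₁ B₂
  let D : Subgroup ((Ω₁ → B₁) × (Ω₂ → B₂)) := M.comap inl
  have hDmem : ∀ p : (Ω₁ → B₁) × (Ω₂ → B₂), p ∈ D ↔ inl p ∈ M := fun p => Iff.rfl
  -- conjugation formula
  have hconj : ∀ (y : ((Ω₁ → B₁) × (Ω₂ → B₂)) ⋊[φ] X) (p : (Ω₁ → B₁) × (Ω₂ → B₂)),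
      y * inl p * y⁻¹ = inl (y.left * φ y.right p * y.left⁻¹) := by
    intro y p
    ext <;> simp [mul_left, mul_right, inv_left, inv_right, mul_assoc]
  -- elements of M over each x
  have hMright : ∀ x : X, ∃ m ∈ M, rightHom m = x := by
    intro x
    have : x ∈ M.map (rightHom : _ →* X) := by rw [hsurj]; trivial
    obtain ⟨m, hm, hmx⟩ := this
    exact ⟨m, hm, hmx⟩
  -- decomposition via a φ-invariant normal subgroup of the base not inside M
  have hdec : ∀ S : Subgroup ((Ω₁ → B₁) × (Ω₂ → B₂)),
      (∀ q : (Ω₁ → B₁) × (Ω₂ → B₂), ∀ p ∈ S, q * p * q⁻¹ ∈ S) →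
      (∀ x : X, ∀ p ∈ S, φ x p ∈ S) →
      ¬ (S.map inl ≤ M) →
      ∀ y : ((Ω₁ → B₁) × (Ω₂ → B₂)) ⋊[φ] X, ∃ m ∈ M, ∃ p ∈ S, y = m * inl p := by
    intro S hSconj hSperm hSnle y
    haveI hLnorm : (S.map inl : Subgroup (((Ω₁ → B₁) × (Ω₂ → B₂)) ⋊[φ] X)).Normal := by
      constructor
      intro n hn g
      obtain ⟨p, hp, rfl⟩ := hn
      rw [hconj]
      exact ⟨_, hSconj g.left _ (hSperm g.right p hp), rfl⟩
    have hlt : M < M ⊔ S.map inl := by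
      refine lt_of_le_of_ne le_sup_left fun h => hSnle ?_
      rw [h]; exact le_sup_right
    have htop : M ⊔ S.map inl = ⊤ := hM.2 _ hlt
    have : y ∈ ((M : Set (((Ω₁ → B₁) × (Ω₂ → B₂)) ⋊[φ] X)) * ((S.map inl : Subgroup (((Ω₁ → B₁) × (Ω₂ → B₂)) ⋊[φ] X)) : Set (((Ω₁ → B₁) × (Ω₂ → B₂)) ⋊[φ] X))) := by
      rw [← Subgroup.mul_normal, htop]; trivial
    obtain ⟨m, hm, l, hl, rfl⟩ := this
    obtain ⟨p, hp, rfl⟩ := hl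
    exact ⟨m, hm, p, hp, rfl⟩
  -- surjectivity of both projections of D
  have hDfull₁ : ∀ f : Ω₁ → B₁, ∃ g : Ω₂ → B₂, ((f, g) : (Ω₁ → B₁) × (Ω₂ → B₂)) ∈ D := by
    intro f
    have hdec2 := hdec ((⊥ : Subgroup (Ω₁ → B₁)).prod ⊤) ?_ ?_ ?_
    rotate_left
    · rintro q p hp
      rw [Subgroup.mem_prod] at hp ⊢
      rw [Subgroup.mem_bot] at hp ⊢
      simp [hp.1]
    · intro x p hp
      rw [Subgroup.mem_prod] at hp ⊢
      rw [Subgroup.mem_bot] at hp ⊢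
      obtain ⟨hp1, -⟩ := hp
      refine ⟨?_, trivial⟩
      show (fun ω => p.1 (x⁻¹ • ω)) = 1
      funext ω
      rw [hp1]
      rfl
    · intro hle
      have hb : ∃ b : B₂, b ≠ 1 := exists_ne 1
      obtain ⟨b, hb⟩ := hb
      have h2 := (hclean ⊥ ⊤ inferInstance inferInstance ?_).2
      · exact hb (by rw [← Subgroup.mem_bot, ← h2]; trivial)
      · refine le_trans (Subgroup.map_mono (Subgroup.prod_mono ?_ ?_)) hle
        · intro f hf
          rw [Subgroup.mem_bot]
          funext ω
          exact hf ω trivial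
        · exact le_top
    obtain ⟨m, hm, p, hp, hy⟩ := hdec2 (inl (f, (1 : Ω₂ → B₂)))
    have hm' : m = inl ((f, (1 : Ω₂ → B₂)) * p⁻¹) := by rw [map_mul, map_inv, hy]; group
    rw [Subgroup.mem_prod, Subgroup.mem_bot] at hp
    have hp' : ((f, (1 : Ω₂ → B₂)) * p⁻¹) = (f, p.2⁻¹) := by
      simp [Prod.ext_iff, hp.1]
    refine ⟨p.2⁻¹, ?_⟩
    rw [hDmem, ← hp', ← hm']
    exact hm
  have hDfull₂ : ∀ g : Ω₂ → B₂, ∃ f : Ω₁ → B₁, ((f, g) : (Ω₁ → B₁) × (Ω₂ → B₂)) ∈ D := by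
    intro g
    have hdec2 := hdec ((⊤ : Subgroup (Ω₁ → B₁)).prod ⊥) ?_ ?_ ?_
    rotate_left
    · rintro q p hp
      rw [Subgroup.mem_prod] at hp ⊢
      rw [Subgroup.mem_bot] at hp ⊢
      simp [hp.2]
    · intro x p hp
      rw [Subgroup.mem_prod] at hp ⊢
      rw [Subgroup.mem_bot] at hp ⊢
      obtain ⟨-, hp2⟩ := hp
      refine ⟨trivial, ?_⟩
      show (fun ω => p.2 (x⁻¹ • ω)) = 1
      funext ω
      rw [hp2]
      rfl
    · intro hle
      have hb : ∃ b : B₁, b ≠ 1 := exists_ne 1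
      obtain ⟨b, hb⟩ := hb
      have h2 := (hclean ⊤ ⊥ inferInstance inferInstance ?_).1
      · exact hb (by rw [← Subgroup.mem_bot, ← h2]; trivial)
      · refine le_trans (Subgroup.map_mono (Subgroup.prod_mono ?_ ?_)) hle
        · exact le_top
        · intro f hf
          rw [Subgroup.mem_bot]
          funext ω
          exact hf ω trivial
    obtain ⟨m, hm, p, hp, hy⟩ := hdec2 (inl ((1 : Ω₁ → B₁), g))
    have hm' : m = inl (((1 : Ω₁ → B₁), g) * p⁻¹) := by rw [map_mul, map_inv, hy]; group
    rw [Subgroup.mem_prod, Subgroup.mem_bot] at hp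
    have hp' : (((1 : Ω₁ → B₁), g) * p⁻¹) = (p.1⁻¹, g) := by
      simp [Prod.ext_iff, hp.2]
    refine ⟨p.1⁻¹, ?_⟩
    rw [hDmem, ← hp', ← hm']
    exact hm
  -- conjugation closure of the first leg
  have hS1conj : ∀ q f : Ω₁ → B₁, (((f, (1:Ω₂→B₂))) ∈ D) → (((q*f*q⁻¹, (1:Ω₂→B₂))) ∈ D) := by
    intro q f hf
    obtain ⟨g, hg⟩ := hDfull₁ q
    have h := D.mul_mem (D.mul_mem hg hf) (D.inv_mem hg)
    have he : ((q, g) * (f, (1:Ω₂→B₂)) * (q, g)⁻¹) = (q * f * q⁻¹, (1:Ω₂→B₂)) := by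
      simp [Prod.ext_iff, mul_assoc]
    rwa [he] at h
  have hS1perm : ∀ (x : X) (f : Ω₁ → B₁), (((f, (1:Ω₂→B₂))) ∈ D) →
      ((((fun ω => f (x⁻¹ • ω)) : Ω₁ → B₁), (1:Ω₂→B₂)) ∈ D) := by
    intro x f hf
    obtain ⟨m, hm, hmx⟩ := hMright x
    have h := M.mul_mem (M.mul_mem hm ((hDmem _).1 hf)) (M.inv_mem hm)
    rw [hconj] at h
    have hright : m.right = x := hmx
    rw [hright] at h
    have hφ : (φ x ((f, (1:Ω₂→B₂)))) = (((fun ω => f (x⁻¹ • ω)) : Ω₁ → B₁), (1:Ω₂→B₂)) := rfl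
    rw [hφ] at h
    have he : (m.left * (((fun ω => f (x⁻¹ • ω)) : Ω₁ → B₁), (1:Ω₂→B₂)) * m.left⁻¹) =
        ((m.left.1 * (fun ω => f (x⁻¹ • ω)) * m.left.1⁻¹ : Ω₁ → B₁), (1:Ω₂→B₂)) := by
      simp [Prod.ext_iff, mul_assoc]
    rw [he] at h
    have h2 := hS1conj m.left.1⁻¹ _ ((hDmem _).2 h)
    have he2 : m.left.1⁻¹ * (m.left.1 * (fun ω => f (x⁻¹ • ω)) * m.left.1⁻¹) * (m.left.1⁻¹)⁻¹
        = (fun ω => f (x⁻¹ • ω)) := by group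
    rwa [he2] at h2
  have hT : ∀ (x : X) (ω : Ω₁) (t : B₁),
      (∃ f : Ω₁ → B₁, (((f, (1:Ω₂→B₂))) ∈ D) ∧ f ω = t) →
      (∃ f : Ω₁ → B₁, (((f, (1:Ω₂→B₂))) ∈ D) ∧ f (x • ω) = t) := by
    rintro x ω t ⟨f, hf, rfl⟩
    exact ⟨_, hS1perm x f hf, by simp⟩
  obtain ⟨ω₀⟩ := (inferInstance : Nonempty Ω₁)
  let S₁ : Subgroup (Ω₁ → B₁) := D.comap (MonoidHom.inl (Ω₁ → B₁) (Ω₂ → B₂))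
  have hS₁mem : ∀ f : Ω₁ → B₁, f ∈ S₁ ↔ (((f, (1:Ω₂→B₂))) ∈ D) := fun f => Iff.rfl
  let T : Subgroup B₁ := S₁.map (Pi.evalMonoidHom (fun _ : Ω₁ => B₁) ω₀)
  have hTmem : ∀ t : B₁, t ∈ T ↔ ∃ f ∈ S₁, f ω₀ = t := by
    intro t
    constructor
    · rintro ⟨f, hf, rfl⟩; exact ⟨f, hf, rfl⟩
    · rintro ⟨f, hf, h⟩; exact ⟨f, hf, h⟩
  have hTω : ∀ (ω : Ω₁) (t : B₁), t ∈ T → ∃ f ∈ S₁, f ω = t := by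
    intro ω t ht
    obtain ⟨x, hx⟩ := MulAction.exists_smul_eq X ω₀ ω
    rw [hTmem] at ht
    obtain ⟨f, hf, h⟩ := ht
    obtain ⟨f', hf', h'⟩ := hT x ω₀ t ⟨f, (hS₁mem f).1 hf, h⟩
    exact ⟨f', (hS₁mem f').2 hf', by rwa [hx] at h'⟩
  haveI hTnormal : T.Normal := by
    constructor
    intro t ht b
    obtain ⟨f, hf, hfω⟩ := hTω ω₀ t ht
    refine (hTmem _).2 ⟨Pi.mulSingle ω₀ b * f * (Pi.mulSingle ω₀ b)⁻¹, ?_, ?_⟩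
    · exact (hS₁mem _).2 (hS1conj _ f ((hS₁mem f).1 hf))
    · simp [hfω]
  have hsingle : ∀ (ω : Ω₁) (n : B₁), n ∈ ⁅T, (⊤ : Subgroup B₁)⁆ → Pi.mulSingle ω n ∈ S₁ := by
    intro ω
    have hmap : Subgroup.map (MonoidHom.mulSingle (fun _ : Ω₁ => B₁) ω) ⁅T, (⊤ : Subgroup B₁)⁆ ≤ S₁ := by
      rw [Subgroup.map_commutator, Subgroup.commutator_le]
      rintro g₁ ⟨t, ht, rfl⟩ g₂ ⟨b, -, rfl⟩
      obtain ⟨f, hf, hfω⟩ := hTω ω t ht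
      have key : ⁅f, Pi.mulSingle ω b⁆ ∈ S₁ := by
        have h1 : Pi.mulSingle ω b * f⁻¹ * (Pi.mulSingle ω b)⁻¹ ∈ S₁ :=
          (hS₁mem _).2 (hS1conj _ _ ((hS₁mem _).1 (S₁.inv_mem hf)))
        have h2 := S₁.mul_mem hf h1
        have he : f * (Pi.mulSingle ω b * f⁻¹ * (Pi.mulSingle ω b)⁻¹) = ⁅f, Pi.mulSingle ω b⁆ := by
          rw [commutatorElement_def]; group
        rwa [he] at h2
      have he2 : ⁅f, Pi.mulSingle ω b⁆ = (Pi.mulSingle ω ⁅t, b⁆ : Ω₁ → B₁) := by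
        funext ω'
        rcases eq_or_ne ω' ω with rfl | hne
        · simp [commutatorElement_def, hfω]
        · simp [commutatorElement_def, Pi.mulSingle_eq_of_ne hne]
      have he3 : ⁅(MonoidHom.mulSingle (fun _ : Ω₁ => B₁) ω) t,
          (MonoidHom.mulSingle (fun _ : Ω₁ => B₁) ω) b⁆ = (Pi.mulSingle ω ⁅t, b⁆ : Ω₁ → B₁) := by
        funext ω'
        rcases eq_or_ne ω' ω with rfl | hne
        · simp [commutatorElement_def]
        · simp [commutatorElement_def, Pi.mulSingle_eq_of_ne hne]
      rw [he3, ← he2]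
      exact key
    intro n hn
    exact hmap ⟨n, hn, rfl⟩
  have hpi : Subgroup.pi Set.univ (fun _ : Ω₁ => ⁅T, (⊤ : Subgroup B₁)⁆) ≤ S₁ := by
    intro f hf
    rw [Subgroup.mem_pi] at hf
    have hfe := Finset.noncommProd_mulSingle (M := fun _ : Ω₁ => B₁) f
    rw [← hfe]
    exact Subgroup.noncommProd_mem _ _ (fun ω _ => hsingle ω (f ω) (hf ω trivial))
  have hN₁bot : ⁅T, (⊤ : Subgroup B₁)⁆ = ⊥ := by
    refine (hclean ⁅T, (⊤ : Subgroup B₁)⁆ ⊥ inferInstance inferInstance ?_).1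
    rintro y ⟨p, hp, rfl⟩
    simp only [SetLike.mem_coe, Subgroup.mem_prod] at hp
    obtain ⟨hp1, hp2⟩ := hp
    rw [Subgroup.mem_pi] at hp2
    have hp2' : p.2 = 1 := by
      funext ω
      exact Subgroup.mem_bot.1 (hp2 ω trivial)
    have hmem := (hS₁mem p.1).1 (hpi hp1)
    rw [hDmem] at hmem
    have hpeta : p = (p.1, (1 : Ω₂ → B₂)) := by rw [← hp2']
    rw [hpeta]
    exact hmem
  have hS₁bot : ∀ f : Ω₁ → B₁, (((f, (1:Ω₂→B₂))) ∈ D) → f = 1 := by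
    have hTbot : ∀ t : B₁, t ∈ T → t = 1 := by
      intro t ht
      have hc : t ∈ Subgroup.center B₁ := by
        rw [Subgroup.mem_center_iff]
        intro b
        have hcc := Subgroup.commutator_mem_commutator ht (Subgroup.mem_top b)
        rw [hN₁bot, Subgroup.mem_bot] at hcc
        exact ((commutatorElement_eq_one_iff_commute.1 hcc).symm).eq
      rw [hz₁] at hc
      exact Subgroup.mem_bot.1 hc
    intro f hf
    funext ω
    obtain ⟨x, hx⟩ := MulAction.exists_smul_eq X ω ω₀
    obtain ⟨f', hf', hfω⟩ := hT x ω (f ω) ⟨f, hf, rfl⟩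
    refine hTbot _ ((hTmem _).2 ⟨f', (hS₁mem f').2 hf', by rwa [hx] at hfω⟩)
  -- symmetric pipeline for the second factor
  have hS2conj : ∀ q f : Ω₂ → B₂, ((((1:Ω₁→B₁), f)) ∈ D) → ((((1:Ω₁→B₁), q*f*q⁻¹)) ∈ D) := by
    intro q f hf
    obtain ⟨g, hg⟩ := hDfull₂ q
    have h := D.mul_mem (D.mul_mem hg hf) (D.inv_mem hg)
    have he : ((g, q) * ((1:Ω₁→B₁), f) * (g, q)⁻¹) = ((1:Ω₁→B₁), q * f * q⁻¹) := by
      simp [Prod.ext_iff, mul_assoc]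
    rwa [he] at h
  have hS2perm : ∀ (x : X) (f : Ω₂ → B₂), ((((1:Ω₁→B₁), f)) ∈ D) →
      (((1:Ω₁→B₁), ((fun ω => f (x⁻¹ • ω)) : Ω₂ → B₂)) ∈ D) := by
    intro x f hf
    obtain ⟨m, hm, hmx⟩ := hMright x
    have h := M.mul_mem (M.mul_mem hm ((hDmem _).1 hf)) (M.inv_mem hm)
    rw [hconj] at h
    have hright : m.right = x := hmx
    rw [hright] at h
    have hφ : (φ x (((1:Ω₁→B₁), f))) = ((1:Ω₁→B₁), ((fun ω => f (x⁻¹ • ω)) : Ω₂ → B₂)) := rfl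
    rw [hφ] at h
    have he : (m.left * ((1:Ω₁→B₁), ((fun ω => f (x⁻¹ • ω)) : Ω₂ → B₂)) * m.left⁻¹) =
        ((1:Ω₁→B₁), (m.left.2 * (fun ω => f (x⁻¹ • ω)) * m.left.2⁻¹ : Ω₂ → B₂)) := by
      simp [Prod.ext_iff, mul_assoc]
    rw [he] at h
    have h2 := hS2conj m.left.2⁻¹ _ ((hDmem _).2 h)
    have he2 : m.left.2⁻¹ * (m.left.2 * (fun ω => f (x⁻¹ • ω)) * m.left.2⁻¹) * (m.left.2⁻¹)⁻¹
        = (fun ω => f (x⁻¹ • ω)) := by group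
    rwa [he2] at h2
  have hT2 : ∀ (x : X) (ω : Ω₂) (t : B₂),
      (∃ f : Ω₂ → B₂, ((((1:Ω₁→B₁), f)) ∈ D) ∧ f ω = t) →
      (∃ f : Ω₂ → B₂, ((((1:Ω₁→B₁), f)) ∈ D) ∧ f (x • ω) = t) := by
    rintro x ω t ⟨f, hf, rfl⟩
    exact ⟨_, hS2perm x f hf, by simp⟩
  obtain ⟨ψ₀⟩ := (inferInstance : Nonempty Ω₂)
  let S₂ : Subgroup (Ω₂ → B₂) := D.comap (MonoidHom.inr (Ω₁ → B₁) (Ω₂ → B₂))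
  have hS₂mem : ∀ f : Ω₂ → B₂, f ∈ S₂ ↔ ((((1:Ω₁→B₁), f)) ∈ D) := fun f => Iff.rfl
  let T₂ : Subgroup B₂ := S₂.map (Pi.evalMonoidHom (fun _ : Ω₂ => B₂) ψ₀)
  have hT₂mem : ∀ t : B₂, t ∈ T₂ ↔ ∃ f ∈ S₂, f ψ₀ = t := by
    intro t
    constructor
    · rintro ⟨f, hf, rfl⟩; exact ⟨f, hf, rfl⟩
    · rintro ⟨f, hf, h⟩; exact ⟨f, hf, h⟩
  have hT₂ω : ∀ (ω : Ω₂) (t : B₂), t ∈ T₂ → ∃ f ∈ S₂, f ω = t := by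
    intro ω t ht
    obtain ⟨x, hx⟩ := MulAction.exists_smul_eq X ψ₀ ω
    rw [hT₂mem] at ht
    obtain ⟨f, hf, h⟩ := ht
    obtain ⟨f', hf', h'⟩ := hT2 x ψ₀ t ⟨f, (hS₂mem f).1 hf, h⟩
    exact ⟨f', (hS₂mem f').2 hf', by rwa [hx] at h'⟩
  haveI hT₂normal : T₂.Normal := by
    constructor
    intro t ht b
    obtain ⟨f, hf, hfω⟩ := hT₂ω ψ₀ t ht
    refine (hT₂mem _).2 ⟨Pi.mulSingle ψ₀ b * f * ((Pi.mulSingle ψ₀ b : Ω₂ → B₂))⁻¹, ?_, ?_⟩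
    · exact (hS₂mem _).2 (hS2conj _ f ((hS₂mem f).1 hf))
    · simp [hfω]
  have hsingle2 : ∀ (ω : Ω₂) (n : B₂), n ∈ ⁅T₂, (⊤ : Subgroup B₂)⁆ → Pi.mulSingle ω n ∈ S₂ := by
    intro ω
    have hmap : Subgroup.map (MonoidHom.mulSingle (fun _ : Ω₂ => B₂) ω) ⁅T₂, (⊤ : Subgroup B₂)⁆ ≤ S₂ := by
      rw [Subgroup.map_commutator, Subgroup.commutator_le]
      rintro g₁ ⟨t, ht, rfl⟩ g₂ ⟨b, -, rfl⟩
      obtain ⟨f, hf, hfω⟩ := hT₂ω ω t ht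
      have key : ⁅f, Pi.mulSingle ω b⁆ ∈ S₂ := by
        have h1 : Pi.mulSingle ω b * f⁻¹ * (Pi.mulSingle ω b)⁻¹ ∈ S₂ :=
          (hS₂mem _).2 (hS2conj _ _ ((hS₂mem _).1 (S₂.inv_mem hf)))
        have h2 := S₂.mul_mem hf h1
        have he : f * (Pi.mulSingle ω b * f⁻¹ * (Pi.mulSingle ω b)⁻¹) = ⁅f, Pi.mulSingle ω b⁆ := by
          rw [commutatorElement_def]; group
        rwa [he] at h2
      have he2 : ⁅f, Pi.mulSingle ω b⁆ = (Pi.mulSingle ω ⁅t, b⁆ : Ω₂ → B₂) := by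
        funext ω'
        rcases eq_or_ne ω' ω with rfl | hne
        · simp [commutatorElement_def, hfω]
        · simp [commutatorElement_def, Pi.mulSingle_eq_of_ne hne]
      have he3 : ⁅(MonoidHom.mulSingle (fun _ : Ω₂ => B₂) ω) t,
          (MonoidHom.mulSingle (fun _ : Ω₂ => B₂) ω) b⁆ = (Pi.mulSingle ω ⁅t, b⁆ : Ω₂ → B₂) := by
        funext ω'
        rcases eq_or_ne ω' ω with rfl | hne
        · simp [commutatorElement_def]
        · simp [commutatorElement_def, Pi.mulSingle_eq_of_ne hne]
      rw [he3, ← he2]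
      exact key
    intro n hn
    exact hmap ⟨n, hn, rfl⟩
  have hpi2 : Subgroup.pi Set.univ (fun _ : Ω₂ => ⁅T₂, (⊤ : Subgroup B₂)⁆) ≤ S₂ := by
    intro f hf
    rw [Subgroup.mem_pi] at hf
    have hfe := Finset.noncommProd_mulSingle (M := fun _ : Ω₂ => B₂) f
    rw [← hfe]
    exact Subgroup.noncommProd_mem _ _ (fun ω _ => hsingle2 ω (f ω) (hf ω trivial))
  have hN₂bot : ⁅T₂, (⊤ : Subgroup B₂)⁆ = ⊥ := by
    refine (hclean ⊥ ⁅T₂, (⊤ : Subgroup B₂)⁆ inferInstance inferInstance ?_).2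
    rintro y ⟨p, hp, rfl⟩
    simp only [SetLike.mem_coe, Subgroup.mem_prod] at hp
    obtain ⟨hp1, hp2⟩ := hp
    rw [Subgroup.mem_pi] at hp1
    have hp1' : p.1 = 1 := by
      funext ω
      exact Subgroup.mem_bot.1 (hp1 ω trivial)
    have hmem := (hS₂mem p.2).1 (hpi2 hp2)
    rw [hDmem] at hmem
    have hpeta : p = ((1 : Ω₁ → B₁), p.2) := by rw [← hp1']
    rw [hpeta]
    exact hmem
  have hS₂bot : ∀ f : Ω₂ → B₂, ((((1:Ω₁→B₁), f)) ∈ D) → f = 1 := by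
    have hTbot : ∀ t : B₂, t ∈ T₂ → t = 1 := by
      intro t ht
      have hc : t ∈ Subgroup.center B₂ := by
        rw [Subgroup.mem_center_iff]
        intro b
        have hcc := Subgroup.commutator_mem_commutator ht (Subgroup.mem_top b)
        rw [hN₂bot, Subgroup.mem_bot] at hcc
        exact ((commutatorElement_eq_one_iff_commute.1 hcc).symm).eq
      rw [hz₂] at hc
      exact Subgroup.mem_bot.1 hc
    intro f hf
    funext ω
    obtain ⟨x, hx⟩ := MulAction.exists_smul_eq X ω ψ₀
    obtain ⟨f', hf', hfω⟩ := hT2 x ω (f ω) ⟨f, hf, rfl⟩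
    refine hTbot _ ((hT₂mem _).2 ⟨f', (hS₂mem f').2 hf', by rwa [hx] at hfω⟩)
  -- uniqueness of the graph components
  have hUniqR : ∀ (f : Ω₁ → B₁) (g g' : Ω₂ → B₂), ((f, g)) ∈ D → ((f, g')) ∈ D → g = g' := by
    intro f g g' h1 h2
    have h := D.mul_mem (D.inv_mem h1) h2
    have he : ((f, g)⁻¹ * (f, g')) = ((1:Ω₁→B₁), g⁻¹ * g') := by
      simp [Prod.ext_iff]
    rw [he] at h
    exact inv_mul_eq_one.1 (hS₂bot _ h)
  have hUniqL : ∀ (f f' : Ω₁ → B₁) (g : Ω₂ → B₂), ((f, g)) ∈ D → ((f', g)) ∈ D → f = f' := by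
    intro f f' g h1 h2
    have h := D.mul_mem (D.inv_mem h1) h2
    have he : ((f, g)⁻¹ * (f', g)) = ((f⁻¹ * f' : Ω₁ → B₁), (1:Ω₂→B₂)) := by
      simp [Prod.ext_iff]
    rw [he] at h
    exact inv_mul_eq_one.1 (hS₁bot _ h)
  choose E hE using hDfull₁
  choose F hF using hDfull₂
  have hEmul : ∀ f₁ f₂, E (f₁ * f₂) = E f₁ * E f₂ := by
    intro f₁ f₂
    have h := D.mul_mem (hE f₁) (hE f₂)
    exact hUniqR _ _ _ (hE (f₁ * f₂)) h
  have hEinv : ∀ f : Ω₁ → B₁, E f⁻¹ = (E f)⁻¹ :=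
    fun f => hUniqR _ _ _ (hE f⁻¹) (D.inv_mem (hE f))
  have hFE : ∀ f, F (E f) = f := fun f => hUniqL _ _ _ (hF (E f)) (hE f)
  have hEF : ∀ g, E (F g) = g := fun g => hUniqR _ _ _ (hE (F g)) (hF g)
  let e : (Ω₁ → B₁) ≃* (Ω₂ → B₂) := MulEquiv.mk' ⟨E, F, hFE, hEF⟩ hEmul
  have hgraph : ∀ p : (Ω₁ → B₁) × (Ω₂ → B₂), p ∈ D ↔ E p.1 = p.2 := by
    intro p
    constructor
    · intro hp
      exact hUniqR p.1 _ _ (hE p.1) hp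
    · intro hp
      have h := hE p.1
      rw [hp] at h
      exact h
  have hclaim2 : M ⊓ (inl : ((Ω₁ → B₁) × (Ω₂ → B₂)) →* _).range =
      Subgroup.map (inl : ((Ω₁ → B₁) × (Ω₂ → B₂)) →* _)
        (MonoidHom.eqLocus (e.toMonoidHom.comp (MonoidHom.fst _ _)) (MonoidHom.snd _ _)) := by
    ext y
    simp only [Subgroup.mem_inf, MonoidHom.mem_range, Subgroup.mem_map]
    constructor
    · rintro ⟨hyM, p, rfl⟩
      exact ⟨p, (hgraph p).1 ((hDmem p).2 hyM), rfl⟩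
    · rintro ⟨p, hp, rfl⟩
      have hpD : p ∈ D := (hgraph p).2 hp
      exact ⟨(hDmem p).1 hpD, p, rfl⟩
  -- simplicity of B₁
  have hfull : ∀ N : Subgroup B₁, N.Normal → N ≠ ⊥ → N = ⊤ := by
    intro N hN hNbot
    have hdecN := hdec ((Subgroup.pi Set.univ fun _ : Ω₁ => N).prod
        (Subgroup.pi Set.univ fun _ : Ω₂ => (⊥ : Subgroup B₂))) ?_ ?_ ?_
    rotate_left
    · rintro q p hp
      rw [Subgroup.mem_prod, Subgroup.mem_pi, Subgroup.mem_pi] at hp ⊢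
      obtain ⟨hp1, hp2⟩ := hp
      constructor
      · intro ω _
        have h := hN.conj_mem _ (hp1 ω trivial) (q.1 ω)
        simpa using h
      · intro ω _
        have h := Subgroup.mem_bot.1 (hp2 ω trivial)
        rw [Subgroup.mem_bot]
        simp [h]
    · intro x p hp
      rw [Subgroup.mem_prod, Subgroup.mem_pi, Subgroup.mem_pi] at hp ⊢
      obtain ⟨hp1, hp2⟩ := hp
      exact ⟨fun ω _ => hp1 _ trivial, fun ω _ => hp2 _ trivial⟩
    · intro hle
      exact hNbot (hclean N ⊥ hN inferInstance hle).1
    have hall : ∀ b : B₁, b ∈ N := by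
      intro b
      obtain ⟨m, hm, p, hp, hy⟩ := hdecN (inl (((fun _ => b) : Ω₁ → B₁), (1:Ω₂→B₂)))
      rw [Subgroup.mem_prod, Subgroup.mem_pi, Subgroup.mem_pi] at hp
      obtain ⟨hp1, hp2⟩ := hp
      have hp2' : p.2 = 1 := by funext ω; exact Subgroup.mem_bot.1 (hp2 ω trivial)
      have hm' : m = inl ((((fun _ => b) : Ω₁ → B₁), (1:Ω₂→B₂)) * p⁻¹) := by
        rw [map_mul, map_inv, hy]; group
      have hD' : (((fun _ => b) * p.1⁻¹ : Ω₁ → B₁), (1:Ω₂→B₂)) ∈ D := by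
        rw [hDmem]
        have he : ((((fun _ => b) : Ω₁ → B₁), (1:Ω₂→B₂)) * p⁻¹)
            = (((fun _ => b) * p.1⁻¹ : Ω₁ → B₁), (1:Ω₂→B₂)) := by
          simp [Prod.ext_iff, hp2']
        rw [← he, ← hm']
        exact hm
      have hone := hS₁bot _ hD'
      have hb : ((fun _ => b) : Ω₁ → B₁) = p.1 := mul_inv_eq_one.1 hone
      have h := hp1 ω₀ trivial
      rwa [← congrFun hb ω₀] at h
    exact (Subgroup.eq_top_iff' N).2 hall
  have hsimple1 : IsSimpleGroup B₁ := by
    refine { exists_pair_ne := exists_pair_ne B₁, eq_bot_or_eq_top_of_normal := ?_ }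
    intro N hN
    by_cases hb : N = ⊥
    · exact Or.inl hb
    · exact Or.inr (hfull N hN hb)
  have hnab1 : ∃ a b : B₁, a * b ≠ b * a := by
    by_contra h
    push_neg at h
    obtain ⟨a, ha⟩ := exists_ne (1 : B₁)
    have hc : a ∈ Subgroup.center B₁ := Subgroup.mem_center_iff.2 fun g => h g a
    rw [hz₁, Subgroup.mem_bot] at hc
    exact ha hc
  -- simplicity of B₂
  have hfull2 : ∀ N : Subgroup B₂, N.Normal → N ≠ ⊥ → N = ⊤ := by
    intro N hN hNbot
    have hdecN := hdec ((Subgroup.pi Set.univ fun _ : Ω₁ => (⊥ : Subgroup B₁)).prod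
        (Subgroup.pi Set.univ fun _ : Ω₂ => N)) ?_ ?_ ?_
    rotate_left
    · rintro q p hp
      rw [Subgroup.mem_prod, Subgroup.mem_pi, Subgroup.mem_pi] at hp ⊢
      obtain ⟨hp1, hp2⟩ := hp
      constructor
      · intro ω _
        have h := Subgroup.mem_bot.1 (hp1 ω trivial)
        rw [Subgroup.mem_bot]
        simp [h]
      · intro ω _
        have h := hN.conj_mem _ (hp2 ω trivial) (q.2 ω)
        simpa using h
    · intro x p hp
      rw [Subgroup.mem_prod, Subgroup.mem_pi, Subgroup.mem_pi] at hp ⊢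
      obtain ⟨hp1, hp2⟩ := hp
      exact ⟨fun ω _ => hp1 _ trivial, fun ω _ => hp2 _ trivial⟩
    · intro hle
      exact hNbot (hclean ⊥ N inferInstance hN hle).2
    have hall : ∀ b : B₂, b ∈ N := by
      intro b
      obtain ⟨m, hm, p, hp, hy⟩ := hdecN (inl ((1:Ω₁→B₁), ((fun _ => b) : Ω₂ → B₂)))
      rw [Subgroup.mem_prod, Subgroup.mem_pi, Subgroup.mem_pi] at hp
      obtain ⟨hp1, hp2⟩ := hp
      have hp1' : p.1 = 1 := by funext ω; exact Subgroup.mem_bot.1 (hp1 ω trivial)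
      have hm' : m = inl (((1:Ω₁→B₁), ((fun _ => b) : Ω₂ → B₂)) * p⁻¹) := by
        rw [map_mul, map_inv, hy]; group
      have hD' : ((1:Ω₁→B₁), ((fun _ => b) * p.2⁻¹ : Ω₂ → B₂)) ∈ D := by
        rw [hDmem]
        have he : (((1:Ω₁→B₁), ((fun _ => b) : Ω₂ → B₂)) * p⁻¹)
            = ((1:Ω₁→B₁), ((fun _ => b) * p.2⁻¹ : Ω₂ → B₂)) := by
          simp [Prod.ext_iff, hp1']
        rw [← he, ← hm']
        exact hm
      have hone := hS₂bot _ hD'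
      have hb : ((fun _ => b) : Ω₂ → B₂) = p.2 := mul_inv_eq_one.1 hone
      have h := hp2 ψ₀ trivial
      rwa [← congrFun hb ψ₀] at h
    exact (Subgroup.eq_top_iff' N).2 hall
  have hsimple2 : IsSimpleGroup B₂ := by
    refine { exists_pair_ne := exists_pair_ne B₂, eq_bot_or_eq_top_of_normal := ?_ }
    intro N hN
    by_cases hb : N = ⊥
    · exact Or.inl hb
    · exact Or.inr (hfull2 N hN hb)
  have hnab2 : ∃ a b : B₂, a * b ≠ b * a := by
    by_contra h
    push_neg at h
    obtain ⟨a, ha⟩ := exists_ne (1 : B₂)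
    have hc : a ∈ Subgroup.center B₂ := Subgroup.mem_center_iff.2 fun g => h g a
    rw [hz₂, Subgroup.mem_bot] at hc
    exact ha hc
  -- the normalizer claim
  have hrange : ∀ y : ((Ω₁ → B₁) × (Ω₂ → B₂)) ⋊[φ] X,
      y ∈ (inl : ((Ω₁ → B₁) × (Ω₂ → B₂)) →* _).range ↔ rightHom y = 1 := by
    intro y
    rw [range_inl_eq_ker_rightHom]
    exact Iff.rfl
  have hKnorm : M = Subgroup.normalizer ((M ⊓ (inl : ((Ω₁ → B₁) × (Ω₂ → B₂)) →* _).range : Subgroup _) : Set _) := by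
    have hle : M ≤ Subgroup.normalizer ((M ⊓ (inl : ((Ω₁ → B₁) × (Ω₂ → B₂)) →* _).range : Subgroup _) : Set _) := by
      intro m hm
      rw [Subgroup.mem_normalizer_iff]
      intro h
      simp only [SetLike.mem_coe, Subgroup.mem_inf]
      constructor
      · rintro ⟨hhM, hhr⟩
        refine ⟨M.mul_mem (M.mul_mem hm hhM) (M.inv_mem hm), ?_⟩
        rw [hrange] at hhr ⊢
        rw [map_mul, map_mul, map_inv, hhr, mul_one, mul_inv_cancel]
      · rintro ⟨hhM, hhr⟩
        rw [hrange] at hhr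
        have hmem : m⁻¹ * (m * h * m⁻¹) * m ∈ M :=
          M.mul_mem (M.mul_mem (M.inv_mem hm) hhM) hm
        have heq : m⁻¹ * (m * h * m⁻¹) * m = h := by group
        rw [heq] at hmem
        refine ⟨hmem, ?_⟩
        rw [hrange]
        have hr2 : rightHom (m * h * m⁻¹) = rightHom m * rightHom h * (rightHom m)⁻¹ := by
          simp
        rw [hr2] at hhr
        calc rightHom h
            = (rightHom m)⁻¹ * (rightHom m * rightHom h * (rightHom m)⁻¹) * rightHom m := by group
          _ = 1 := by rw [hhr]; group
    have hne : Subgroup.normalizer ((M ⊓ (inl : ((Ω₁ → B₁) × (Ω₂ → B₂)) →* _).range : Subgroup _) : Set (((Ω₁ → B₁) × (Ω₂ → B₂)) ⋊[φ] X)) ≠ ⊤ := by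
      intro htop
      obtain ⟨b, hb⟩ := exists_ne (1 : B₂)
      have hbnc : ∃ c : B₂, b * c ≠ c * b := by
        by_contra hcb
        push_neg at hcb
        refine hb (Subgroup.mem_bot.1 ?_)
        rw [← hz₂]
        exact Subgroup.mem_center_iff.2 fun g => (hcb g).symm
      obtain ⟨c, hc⟩ := hbnc
      have hy0 : inl ((F ((Pi.mulSingle ψ₀ b : Ω₂ → B₂))), (1:Ω₂→B₂)) ∈
          Subgroup.normalizer ((M ⊓ (inl : ((Ω₁ → B₁) × (Ω₂ → B₂)) →* _).range : Subgroup _) : Set (((Ω₁ → B₁) × (Ω₂ → B₂)) ⋊[φ] X)) := by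
        rw [htop]; trivial
      rw [Subgroup.mem_normalizer_iff] at hy0
      have hk : inl (F ((Pi.mulSingle ψ₀ c : Ω₂ → B₂)), (Pi.mulSingle ψ₀ c : Ω₂ → B₂)) ∈
          M ⊓ (inl : ((Ω₁ → B₁) × (Ω₂ → B₂)) →* _).range :=
        ⟨(hDmem _).1 (hF _), ⟨_, rfl⟩⟩
      obtain ⟨hk2M, hk2r⟩ := (hy0 _).1 hk
      have hcomp : inl ((F ((Pi.mulSingle ψ₀ b : Ω₂ → B₂))), (1:Ω₂→B₂)) * inl (F ((Pi.mulSingle ψ₀ c : Ω₂ → B₂)), (Pi.mulSingle ψ₀ c : Ω₂ → B₂)) *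
          (inl ((F ((Pi.mulSingle ψ₀ b : Ω₂ → B₂))), (1:Ω₂→B₂)))⁻¹
          = (inl ((F ((Pi.mulSingle ψ₀ b : Ω₂ → B₂)) * F ((Pi.mulSingle ψ₀ c : Ω₂ → B₂)) * (F ((Pi.mulSingle ψ₀ b : Ω₂ → B₂)))⁻¹ : Ω₁ → B₁),
              (Pi.mulSingle ψ₀ c : Ω₂ → B₂)) : ((Ω₁ → B₁) × (Ω₂ → B₂)) ⋊[φ] X) := by
        rw [← map_inv, ← map_mul, ← map_mul]
        congr 1
        simp [Prod.ext_iff, mul_assoc]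
      rw [hcomp] at hk2M
      have hEq := (hgraph _).1 ((hDmem _).2 hk2M)
      simp only [] at hEq
      rw [hEmul, hEmul, hEinv, hEF, hEF] at hEq
      have hpt := congrFun hEq ψ₀
      simp only [Pi.mul_apply, Pi.inv_apply, Pi.mulSingle_eq_same] at hpt
      -- hpt : b * c * b⁻¹ = c
      refine hc ?_
      calc b * c = (b * c * b⁻¹) * b := by group
        _ = c * b := by rw [hpt]
    refine le_antisymm hle ?_
    by_contra hcon
    have hlt : M < Subgroup.normalizer ((M ⊓ (inl : ((Ω₁ → B₁) × (Ω₂ → B₂)) →* _).range : Subgroup _) : Set _) :=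
      lt_of_le_of_ne hle (fun hh => hcon (hh ▸ le_refl _))
    exact hne (hM.2 _ hlt)
  -- the index bound
  haveI hfinY : Finite (((Ω₁ → B₁) × (Ω₂ → B₂)) ⋊[φ] X) := by
    refine Finite.of_injective (fun y => (y.left, y.right)) ?_
    intro a b hab
    rw [Prod.ext_iff] at hab
    exact SemidirectProduct.ext hab.1 hab.2
  have hinj : Function.Injective
      (fun f : Ω₁ → B₁ => ((QuotientGroup.mk (inl (f, (1:Ω₂→B₂)))) :
        (((Ω₁ → B₁) × (Ω₂ → B₂)) ⋊[φ] X) ⧸ M)) := by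
    intro f g hfg
    have h := QuotientGroup.eq.1 hfg
    rw [← map_inv, ← map_mul] at h
    have hD' : (((f, (1:Ω₂→B₂)) : (Ω₁ → B₁) × (Ω₂ → B₂))⁻¹ * (g, (1:Ω₂→B₂))) ∈ D := h
    have he : (((f, (1:Ω₂→B₂)) : (Ω₁ → B₁) × (Ω₂ → B₂))⁻¹ * (g, (1:Ω₂→B₂)))
        = ((f⁻¹ * g : Ω₁ → B₁), (1:Ω₂→B₂)) := by
      simp [Prod.ext_iff]
    rw [he] at hD'
    exact inv_mul_eq_one.1 (hS₁bot _ hD')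
  have hindex : (Fintype.card B₁) ^ (Fintype.card Ω₁) ≤ M.index := by
    calc (Fintype.card B₁) ^ (Fintype.card Ω₁) = Nat.card (Ω₁ → B₁) := by
          simp [Nat.card_eq_fintype_card, Fintype.card_fun]
      _ ≤ Nat.card ((((Ω₁ → B₁) × (Ω₂ → B₂)) ⋊[φ] X) ⧸ M) :=
          Nat.card_le_card_of_injective _ hinj
      _ = M.index := rfl
  exact ⟨⟨hsimple1, hnab1⟩, ⟨hsimple2, hnab2⟩, ⟨e, hclaim2⟩, hKnorm, hindex⟩
end

section
/- Let X act transitively on a finite set Ω, B a finite perfect centerless group, Y = X ⋉ B^Ω, M < Y proper maximal clean with π(M) = X. If M ∩ B^Ω ≠ (e), pr_ω(M ∩ B^Ω) = B for all ω, and there exists a minimal normal subgroup N ⊴ B with M ∩ N^Ω ≠ (e), then N is a direct product of isomorphic non-abelian simple groups, pr_ω(M ∩ N^Ω) = N for all ω ∈ Ω, and M = N_Y(M ∩ N^Ω). -/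
open SemidirectProduct

variable (X : Type*) [Group X] (Ω : Type*) (B : Type*) [MulAction X Ω] [Group B]

/-- The action of `X` on `B^Ω` permuting the coordinates. -/
def permAut : X →* MulAut (Ω → B) where
  toFun x :=
    { toFun := fun f ω => f (x⁻¹ • ω)
      invFun := fun f ω => f (x • ω)
      left_inv := fun f => by ext ω; simp
      right_inv := fun f => by ext ω; simp
      map_mul' := fun f g => rfl }
  map_one' := by ext f ω; simp
  map_mul' := fun x y => by ext f ω; simp [mul_smul]

namespace Aux14


variable {G : Type*} [Group G]

lemma mem_le_foldrSup (L : List (Subgroup G)) {H : Subgroup G} (h : H ∈ L) :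
    H ≤ L.foldr (· ⊔ ·) ⊥ := by
  induction L with
  | nil => simp at h
  | cons A L ih =>
    rcases List.mem_cons.mp h with rfl | h
    · exact le_sup_left
    · exact (ih h).trans le_sup_right

lemma foldrSup_le {L : List (Subgroup G)} {K : Subgroup G} (h : ∀ H ∈ L, H ≤ K) :
    L.foldr (· ⊔ ·) ⊥ ≤ K := by
  induction L with
  | nil => simp
  | cons A L ih =>
    exact sup_le (h A (by simp)) (ih fun H hH => h H (List.mem_cons_of_mem _ hH))

lemma map_foldrSup {G' : Type*} [Group G'] (f : G →* G') (L : List (Subgroup G)) :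
    (L.foldr (· ⊔ ·) ⊥).map f = (L.map (Subgroup.map f)).foldr (· ⊔ ·) ⊥ := by
  induction L with
  | nil => simp
  | cons A L ih => simp [Subgroup.map_sup, ih]

lemma foldrSup_normal {L : List (Subgroup G)} (h : ∀ H ∈ L, H.Normal) :
    (L.foldr (· ⊔ ·) ⊥).Normal := by
  induction L with
  | nil => simpa using (inferInstance : (⊥ : Subgroup G).Normal)
  | cons A L ih =>
    haveI := h A (by simp)
    haveI := ih fun H hH => h H (List.mem_cons_of_mem _ hH)
    exact Subgroup.sup_normal _ _

/-- `T × (Fin r → T) ≃* (Fin (r+1) → T)`. -/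
def piSucc (r : ℕ) (T : Type*) [Group T] : (T × (Fin r → T)) ≃* (Fin (r + 1) → T) where
  toFun p := Fin.cons p.1 p.2
  invFun f := (f 0, fun i => f i.succ)
  left_inv p := by simp
  right_inv f := by
    funext i
    refine Fin.cases ?_ (fun j => ?_) i <;> simp
  map_mul' p q := by
    funext i
    refine Fin.cases ?_ (fun j => ?_) i <;> simp


/-- trivial-group case -/
lemma equiv_of_bot_eq_top {T : Type*} [Group T] (h : (⊥ : Subgroup G) = ⊤) :
    Nonempty (G ≃* (Fin 0 → T)) := by
  have hsub : ∀ x : G, x = 1 := by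
    intro x
    have : x ∈ (⊥ : Subgroup G) := h ▸ Subgroup.mem_top x
    simpa [Subgroup.mem_bot] using this
  letI : Unique G := ⟨⟨1⟩, fun x => hsub x⟩
  exact ⟨MulEquiv.ofUnique⟩

lemma nontrivial_of_noncomm {T : Type*} [Group T] (h : ∃ a b : T, a * b ≠ b * a) :
    Nontrivial T := by
  obtain ⟨a, b, hab⟩ := h
  refine ⟨a, 1, ?_⟩
  rintro rfl
  simp at hab

lemma lemQ {T : Type u} [Group T] (hTna : ∃ a b : T, a * b ≠ b * a) :
    ∀ (n : ℕ) (G : Type v) (_ : Group G) (L : List (Subgroup G)), L.length ≤ n →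
    (∀ H ∈ L, H.Normal) →
    (∀ H ∈ L, ∀ K : Subgroup G, K.Normal → K ≤ H → K = ⊥ ∨ K = H) →
    (∀ H ∈ L, Nonempty (↥H ≃* T)) →
    L.foldr (· ⊔ ·) ⊥ = ⊤ →
    ∃ r : ℕ, Nonempty (G ≃* (Fin r → T)) := by
  intro n
  induction n with
  | zero =>
    intro G _ L hlen _ _ _ hsup
    rw [List.length_eq_zero_iff.mp (Nat.le_zero.mp hlen)] at hsup
    exact ⟨0, equiv_of_bot_eq_top (by simpa using hsup)⟩
  | succ n ih =>
    intro G _ L hlen hnorm hmin hiso hsup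
    classical
    haveI hTnt : Nontrivial T := nontrivial_of_noncomm hTna
    match L with
    | [] => exact ⟨0, equiv_of_bot_eq_top (by simpa using hsup)⟩
    | T₀ :: L' =>
    haveI hT0norm : T₀.Normal := hnorm T₀ (by simp)
    obtain ⟨eT0⟩ := hiso T₀ (by simp)
    -- T₀ ≠ ⊥
    have hT0ne : T₀ ≠ ⊥ := by
      rintro rfl
      obtain ⟨x, y, hxy⟩ := exists_pair_ne T
      apply hxy
      have hx : eT0.symm x = eT0.symm y := by
        ext
        have h1 : (eT0.symm x : G) ∈ (⊥ : Subgroup G) := (eT0.symm x).2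
        have h2 : (eT0.symm y : G) ∈ (⊥ : Subgroup G) := (eT0.symm y).2
        rw [Subgroup.mem_bot] at h1 h2
        rw [h1, h2]
      simpa using congrArg eT0 hx
    -- T₀ is nonabelian
    have hT0nab : ∃ a b : G, a ∈ T₀ ∧ b ∈ T₀ ∧ a * b ≠ b * a := by
      obtain ⟨p, q, hpq⟩ := hTna
      refine ⟨eT0.symm p, eT0.symm q, (eT0.symm p).2, (eT0.symm q).2, fun h => hpq ?_⟩
      have : eT0.symm p * eT0.symm q = eT0.symm q * eT0.symm p := by
        ext; simpa using h
      rw [← map_mul, ← map_mul] at this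
      simpa using congrArg eT0 this
    set C : Subgroup G := Subgroup.centralizer (T₀ : Set G) with hCdef
    haveI hCnorm : C.Normal := by
      constructor
      intro c hc g
      rw [Subgroup.mem_centralizer_iff] at hc ⊢
      intro s hs
      have hmem : g⁻¹ * s * g ∈ T₀ := by
        have := hT0norm.conj_mem s hs g⁻¹
        simpa using this
      have hcs := hc _ hmem
      calc s * (g * c * g⁻¹) = g * ((g⁻¹ * s * g) * c) * g⁻¹ := by group
        _ = g * (c * (g⁻¹ * s * g)) * g⁻¹ := by rw [hcs]
        _ = (g * c * g⁻¹) * s := by group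
    -- intersection with centralizer is trivial
    have hinfnormal : ∀ (H K : Subgroup G), H.Normal → K.Normal → (H ⊓ K).Normal :=
      fun H K hH hK => ⟨fun x hx g => ⟨hH.conj_mem x hx.1 g, hK.conj_mem x hx.2 g⟩⟩
    have hZ : T₀ ⊓ C = ⊥ := by
      rcases hmin T₀ (by simp) (T₀ ⊓ C) (hinfnormal T₀ C hT0norm hCnorm) inf_le_left with h | h
      · exact h
      · exfalso
        obtain ⟨a, b, ha, hb, hab⟩ := hT0nab
        have hbC : b ∈ C := inf_eq_left.mp h hb
        exact hab ((Subgroup.mem_centralizer_iff.mp hbC) a ha)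
    -- commuting of distinct members
    have hcommute : ∀ H : Subgroup G, H.Normal → H ⊓ T₀ = ⊥ →
        ∀ h ∈ H, ∀ t ∈ T₀, t * h = h * t := by
      intro H hHnorm hHT h hh t ht
      have hu : h * t * h⁻¹ * t⁻¹ ∈ H ⊓ T₀ := by
        constructor
        · have : h * (t * h⁻¹ * t⁻¹) ∈ H := H.mul_mem hh (by
            have := hHnorm.conj_mem h⁻¹ (H.inv_mem hh) t
            simpa [mul_assoc] using this)
          simpa [mul_assoc] using this
        · have : (h * t * h⁻¹) * t⁻¹ ∈ T₀ := T₀.mul_mem (hT0norm.conj_mem t ht h) (T₀.inv_mem ht)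
          simpa [mul_assoc] using this
      rw [hHT, Subgroup.mem_bot] at hu
      have : h * t * h⁻¹ = t := by
        have := mul_inv_eq_one.mp hu
        simpa using this
      calc t * h = (h * t * h⁻¹) * h := by rw [this]
        _ = h * t := by group
    have hHC : ∀ H : Subgroup G, H ∈ L' → H ≠ T₀ → H ≤ C := by
      intro H hH hne
      haveI hHnorm : H.Normal := hnorm H (by simp [hH])
      have hHT : H ⊓ T₀ = ⊥ := by
        rcases hmin T₀ (by simp) (H ⊓ T₀) (hinfnormal H T₀ hHnorm hT0norm) inf_le_right with h | h
        · exact h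
        · exfalso
          have hTH : T₀ ≤ H := inf_eq_right.mp h
          rcases hmin H (by simp [hH]) T₀ hT0norm hTH with h' | h'
          · exact hT0ne h'
          · exact hne h'.symm
      intro h hh
      rw [Subgroup.mem_centralizer_iff]
      intro t ht
      exact hcommute H hHnorm hHT h hh t ht
    -- the filtered list and its sup
    set L'' : List (Subgroup G) := L'.filter (fun H => H ≠ T₀) with hL''def
    have hmemL'' : ∀ H : Subgroup G, H ∈ L'' ↔ H ∈ L' ∧ H ≠ T₀ := by
      intro H; simp [hL''def, List.mem_filter]
    set D : Subgroup G := L''.foldr (· ⊔ ·) ⊥ with hDdef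
    have hDC : D ≤ C := foldrSup_le fun H hH =>
      hHC H ((hmemL'' H).mp hH).1 ((hmemL'' H).mp hH).2
    have hTD : T₀ ⊔ D = ⊤ := by
      refine top_unique ?_
      rw [← hsup]
      refine foldrSup_le ?_
      intro H hH
      rcases List.mem_cons.mp hH with rfl | hH'
      · exact le_sup_left
      · by_cases he : H = T₀
        · exact he ▸ le_sup_left
        · exact (mem_le_foldrSup L'' ((hmemL'' H).mpr ⟨hH', he⟩)).trans le_sup_right
    haveI hDnorm : D.Normal := foldrSup_normal fun H hH =>
      hnorm H (by simp [((hmemL'' H).mp hH).1])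
    have hCD : C = D := by
      refine le_antisymm ?_ hDC
      intro c hc
      have hc' : c ∈ (↑(T₀ ⊔ D) : Set G) := hTD.symm ▸ Subgroup.mem_top c
      rw [Subgroup.mul_normal] at hc'
      obtain ⟨t, ht, d, hd, htd⟩ := Set.mem_mul.mp hc'
      have htC : t ∈ T₀ ⊓ C := ⟨ht, by
        have : t = c * d⁻¹ := by rw [← htd]; group
        rw [this]
        exact C.mul_mem hc (C.inv_mem (hDC hd))⟩
      rw [hZ, Subgroup.mem_bot] at htC
      rw [htC, one_mul] at htd
      exact htd ▸ hd
    have hTC : T₀ ⊔ C = ⊤ := by rw [hCD]; exact hTD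
    -- internal direct product G ≃ T₀ × C
    have hcent : ∀ (c : C) (t : T₀), (t : G) * c = c * t := fun c t =>
      Subgroup.mem_centralizer_iff.mp c.2 t t.2
    let ψ : (↥T₀ × ↥C) →* G := MonoidHom.mk' (fun p => (p.1 : G) * p.2) (by
      rintro ⟨t1, c1⟩ ⟨t2, c2⟩
      simp only [Prod.mk_mul_mk, Subgroup.coe_mul]
      calc (t1 : G) * t2 * ((c1 : G) * c2)
          = (t1 : G) * ((t2 : G) * c1) * c2 := by group
        _ = (t1 : G) * ((c1 : G) * t2) * c2 := by rw [hcent c1 t2]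
        _ = (t1 : G) * c1 * ((t2 : G) * c2) := by group)
    have hψinj : Function.Injective ψ := by
      rintro ⟨t1, c1⟩ ⟨t2, c2⟩ h
      simp only [ψ, MonoidHom.mk'_apply] at h
      have hkey : (t2 : G)⁻¹ * t1 = (c2 : G) * (c1 : G)⁻¹ := by
        calc (t2 : G)⁻¹ * t1 = (t2 : G)⁻¹ * ((t1 : G) * c1) * (c1 : G)⁻¹ := by group
          _ = (t2 : G)⁻¹ * ((t2 : G) * c2) * (c1 : G)⁻¹ := by rw [h]
          _ = (c2 : G) * (c1 : G)⁻¹ := by group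
      have hmem : (t2 : G)⁻¹ * t1 ∈ T₀ ⊓ C := ⟨T₀.mul_mem (T₀.inv_mem t2.2) t1.2,
        hkey ▸ C.mul_mem c2.2 (C.inv_mem c1.2)⟩
      rw [hZ, Subgroup.mem_bot] at hmem
      have ht : t1 = t2 := by
        ext
        have := inv_mul_eq_one.mp hmem
        exact this.symm
      have hc : c1 = c2 := by
        ext
        have h2 : (c2 : G) * (c1 : G)⁻¹ = 1 := by rw [← hkey, hmem]
        exact (mul_inv_eq_one.mp h2).symm
      exact Prod.ext ht hc
    have hψsurj : Function.Surjective ψ := by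
      intro g
      have hg : g ∈ (↑(T₀ ⊔ C) : Set G) := hTC.symm ▸ Subgroup.mem_top g
      rw [Subgroup.mul_normal] at hg
      obtain ⟨t, ht, c, hc, htc⟩ := Set.mem_mul.mp hg
      exact ⟨(⟨t, ht⟩, ⟨c, hc⟩), htc⟩
    let e1 : (↥T₀ × ↥C) ≃* G := MulEquiv.ofBijective ψ ⟨hψinj, hψsurj⟩
    -- recurse inside C
    set LC : List (Subgroup ↥C) := L''.map (fun H => H.subgroupOf C) with hLCdef
    have hlenC : LC.length ≤ n := by
      have h1 : L''.length ≤ L'.length := List.length_filter_le _ _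
      have h2 : L'.length ≤ n := by
        have := hlen
        simp only [List.length_cons] at this
        omega
      simpa [hLCdef] using h1.trans h2
    have hsub_le : ∀ H : Subgroup G, H ∈ L'' → H ≤ C := fun H hH =>
      hHC H ((hmemL'' H).mp hH).1 ((hmemL'' H).mp hH).2
    -- map subtype of subgroupOf
    have hmapsub : ∀ H : Subgroup G, H ∈ L'' → (H.subgroupOf C).map C.subtype = H := by
      intro H hH
      rw [Subgroup.subgroupOf_map_subtype, inf_eq_left]
      exact hsub_le H hH
    have hnormC : ∀ HC ∈ LC, HC.Normal := by
      intro HC hHC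
      rw [hLCdef, List.mem_map] at hHC
      obtain ⟨H, hH, rfl⟩ := hHC
      haveI : H.Normal := hnorm H (by simp [((hmemL'' H).mp hH).1])
      exact Subgroup.normal_subgroupOf
    -- normality in G of subgroups of C that are normal in C
    have hnormG : ∀ K : Subgroup ↥C, K.Normal → (K.map C.subtype).Normal := by
      intro K hK
      constructor
      intro x hx g
      obtain ⟨k, hk, rfl⟩ := hx
      have hg : g ∈ (↑(T₀ ⊔ C) : Set G) := hTC.symm ▸ Subgroup.mem_top g
      rw [Subgroup.mul_normal] at hg
      obtain ⟨t, ht, c, hc, htc⟩ := Set.mem_mul.mp hg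
      have hck : (⟨c, hc⟩ : ↥C) * k * (⟨c, hc⟩ : ↥C)⁻¹ ∈ K := hK.conj_mem k hk ⟨c, hc⟩
      set k' : ↥C := (⟨c, hc⟩ : ↥C) * k * (⟨c, hc⟩ : ↥C)⁻¹ with hk'def
      have hkeq : (k' : G) = c * (k : G) * c⁻¹ := rfl
      have hstep2 : t * (k' : G) * t⁻¹ = (k' : G) := by
        have hcomm := Subgroup.mem_centralizer_iff.mp k'.2 t ht
        calc t * (k' : G) * t⁻¹ = ((k' : G) * t) * t⁻¹ := by rw [← hcomm]
          _ = (k' : G) := by group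
      refine ⟨k', hck, ?_⟩
      show (k' : G) = g * (k : G) * g⁻¹
      calc (k' : G) = t * (k' : G) * t⁻¹ := hstep2.symm
        _ = t * (c * (k : G) * c⁻¹) * t⁻¹ := by rw [hkeq]
        _ = (t * c) * (k : G) * (t * c)⁻¹ := by group
        _ = g * (k : G) * g⁻¹ := by rw [htc]
    have hminC : ∀ HC ∈ LC, ∀ K : Subgroup ↥C, K.Normal → K ≤ HC → K = ⊥ ∨ K = HC := by
      intro HC hHC K hKnorm hKle
      rw [hLCdef, List.mem_map] at hHC
      obtain ⟨H, hH, rfl⟩ := hHC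
      have hKG : (K.map C.subtype) ≤ H := by
        rw [← hmapsub H hH]
        exact Subgroup.map_le_map_iff_of_injective C.subtype_injective |>.mpr hKle
      rcases hmin H (by simp [((hmemL'' H).mp hH).1]) (K.map C.subtype) (hnormG K hKnorm) hKG
        with h | h
      · left
        apply Subgroup.map_injective C.subtype_injective
        rw [h, Subgroup.map_bot]
      · right
        apply Subgroup.map_injective C.subtype_injective
        rw [h, hmapsub H hH]
    have hisoC : ∀ HC ∈ LC, Nonempty (↥HC ≃* T) := by
      intro HC hHC
      rw [hLCdef, List.mem_map] at hHC
      obtain ⟨H, hH, rfl⟩ := hHC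
      obtain ⟨e⟩ := hiso H (by simp [((hmemL'' H).mp hH).1])
      exact ⟨(Subgroup.subgroupOfEquivOfLe (hsub_le H hH)).trans e⟩
    have hsupC : LC.foldr (· ⊔ ·) ⊥ = ⊤ := by
      apply Subgroup.map_injective C.subtype_injective
      rw [map_foldrSup]
      have hlist : LC.map (Subgroup.map C.subtype) = L'' := by
        rw [hLCdef, List.map_map]
        conv_rhs => rw [← List.map_id L'']
        refine List.map_congr_left ?_
        intro H hH
        exact hmapsub H hH
      rw [hlist, ← hDdef]
      have : Subgroup.map C.subtype ⊤ = C := by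
        rw [← MonoidHom.range_eq_map, Subgroup.range_subtype]
      rw [this, ← hCD]
    obtain ⟨r, ⟨eC⟩⟩ := ih ↥C inferInstance LC hlenC hnormC hminC hisoC hsupC
    refine ⟨r + 1, ⟨?_⟩⟩
    exact (e1.symm.trans (MulEquiv.prodCongr eT0 eC)).trans (piSucc r T)


/-- Structure theorem: a nonabelian minimal normal subgroup of a finite group is a
direct product of isomorphic nonabelian simple groups. -/
lemma structN {Bg : Type u} [Group Bg] [Finite Bg] (N : Subgroup Bg) (hN : N.Normal)
    (hNbot : N ≠ ⊥)
    (hNmin : ∀ N' : Subgroup Bg, N'.Normal → N' ≤ N → N' = ⊥ ∨ N' = N)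
    (hNA : ∃ a b : ↥N, a * b ≠ b * a) :
    ∃ (T : Type) (_ : Group T), IsSimpleGroup T ∧ (∃ a b : T, a * b ≠ b * a) ∧
      ∃ r : ℕ, 0 < r ∧ Nonempty (↥N ≃* (Fin r → T)) := by
  classical
  haveI := hN
  letI : Fintype Bg := Fintype.ofFinite Bg
  haveI : Finite ↥N := inferInstance
  haveI hNnt : Nontrivial ↥N := by
    rcases N.bot_or_nontrivial with h | h
    · exact absurd h hNbot
    · exact h
  haveI : Finite (Subgroup ↥N) :=
    Finite.of_injective (fun K : Subgroup ↥N => (K : Set ↥N)) SetLike.coe_injective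
  -- a minimal normal subgroup T' of ↥N
  obtain ⟨T', -, hT'min⟩ := exists_minimal_le_of_wellFoundedLT
    (fun K : Subgroup ↥N => K.Normal ∧ K ≠ ⊥) ⊤
    ⟨inferInstance, top_ne_bot⟩
  have hT'norm : T'.Normal := hT'min.1.1
  have hT'ne : T' ≠ ⊥ := hT'min.1.2
  have hT'minimal : ∀ K : Subgroup ↥N, K.Normal → K ≤ T' → K = ⊥ ∨ K = T' := by
    intro K hK hle
    by_cases h : K = ⊥
    · exact Or.inl h
    · exact Or.inr (le_antisymm hle (hT'min.2 ⟨hK, h⟩ hle))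
  -- minimality transfers along automorphisms
  have hmapmin : ∀ (e : ↥N ≃* ↥N),
      ∀ K : Subgroup ↥N, K.Normal → K ≤ T'.map e.toMonoidHom →
        K = ⊥ ∨ K = T'.map e.toMonoidHom := by
    intro e K hK hle
    have h1 : K.comap e.toMonoidHom ≤ T' := by
      have := Subgroup.comap_mono (f := e.toMonoidHom) hle
      rwa [Subgroup.comap_map_eq_self_of_injective e.injective] at this
    have h2 : (K.comap e.toMonoidHom).Normal := hK.comap e.toMonoidHom
    rcases hT'minimal _ h2 h1 with h | h
    · left
      have := congrArg (Subgroup.map e.toMonoidHom) h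
      rwa [Subgroup.map_comap_eq_self_of_surjective e.surjective, Subgroup.map_bot] at this
    · right
      have := congrArg (Subgroup.map e.toMonoidHom) h
      rwa [Subgroup.map_comap_eq_self_of_surjective e.surjective] at this
  -- the list of conjugates
  set cAut : Bg →* MulAut ↥N := MulAut.conjNormal with hcAutdef
  set L : List (Subgroup ↥N) :=
    T' :: ((Finset.univ : Finset Bg).toList.map
      (fun b => T'.map (cAut b).toMonoidHom)) with hLdef
  have hmemL : ∀ H ∈ L, H = T' ∨ ∃ b : Bg, H = T'.map (cAut b).toMonoidHom := by
    intro H hH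
    rcases List.mem_cons.mp hH with rfl | hH'
    · exact Or.inl rfl
    · obtain ⟨b, _, rfl⟩ := List.mem_map.mp hH'
      exact Or.inr ⟨b, rfl⟩
  have hLnorm : ∀ H ∈ L, H.Normal := by
    intro H hH
    rcases hmemL H hH with rfl | ⟨b, rfl⟩
    · exact hT'norm
    · exact hT'norm.map _ (cAut b).surjective
  have hLmin : ∀ H ∈ L, ∀ K : Subgroup ↥N, K.Normal → K ≤ H → K = ⊥ ∨ K = H := by
    intro H hH
    rcases hmemL H hH with rfl | ⟨b, rfl⟩
    · exact hT'minimal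
    · exact hmapmin (cAut b)
  have hLiso : ∀ H ∈ L, Nonempty (↥H ≃* ↥T') := by
    intro H hH
    rcases hmemL H hH with rfl | ⟨b, rfl⟩
    · exact ⟨MulEquiv.refl _⟩
    · exact ⟨(T'.equivMapOfInjective (cAut b).toMonoidHom (cAut b).injective).symm⟩
  -- sup of the list is ⊤
  set S : Subgroup ↥N := L.foldr (· ⊔ ·) ⊥ with hSdef
  have hmapS : ∀ b : Bg, ∀ s : ↥N, s ∈ S → cAut b s ∈ S := by
    intro b s hs
    -- show map (cAut b) S ≤ S by considering each member
    have hle : Subgroup.map (cAut b).toMonoidHom S ≤ S := by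
      rw [hSdef, map_foldrSup]
      refine foldrSup_le ?_
      intro H hH
      obtain ⟨H', hH', rfl⟩ := List.mem_map.mp hH
      rcases hmemL H' hH' with rfl | ⟨b', rfl⟩
      · refine mem_le_foldrSup L ?_
        rw [hLdef]
        refine List.mem_cons_of_mem _ (List.mem_map.mpr ⟨b, ?_, rfl⟩)
        simp [Finset.mem_toList]
      · rw [Subgroup.map_map]
        have hcomp : (cAut b).toMonoidHom.comp (cAut b').toMonoidHom
            = (cAut (b * b')).toMonoidHom := by
          ext n
          simp [map_mul]
        rw [hcomp]
        refine mem_le_foldrSup L ?_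
        rw [hLdef]
        refine List.mem_cons_of_mem _ (List.mem_map.mpr ⟨b * b', ?_, rfl⟩)
        simp [Finset.mem_toList]
    exact hle ⟨s, hs, rfl⟩
  have hSB : (S.map N.subtype) = N := by
    refine (hNmin _ ?_ (Subgroup.map_subtype_le S)).resolve_left ?_
    · constructor
      intro x hx b
      obtain ⟨s, hs, rfl⟩ := hx
      refine ⟨cAut b s, hmapS b s hs, ?_⟩
      show ((cAut b s : ↥N) : Bg) = b * (s : Bg) * b⁻¹
      simp [hcAutdef, MulAut.conjNormal_apply]
    · intro hcon
      obtain ⟨t, ht⟩ := Subgroup.ne_bot_iff_exists_ne_one.mp hT'ne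
      have htS : (t : ↥N) ∈ S := mem_le_foldrSup L (by rw [hLdef]; simp) t.2
      have : ((t : ↥N) : Bg) ∈ S.map N.subtype := ⟨t, htS, rfl⟩
      rw [hcon, Subgroup.mem_bot] at this
      apply ht
      ext
      simpa using this
  have hStop : S = ⊤ := by
    apply Subgroup.map_injective N.subtype_injective
    rw [hSB, ← MonoidHom.range_eq_map, Subgroup.range_subtype]
  -- T' is nonabelian
  have hT'na : ∃ a b : ↥T', a * b ≠ b * a := by
    by_contra habel
    push_neg at habel
    -- all members of L are pairwise commuting abelian subgroups
    have hpair : ∀ H ∈ L, ∀ H' ∈ L, ∀ x ∈ H, ∀ y ∈ H', x * y = y * x := by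
      intro H hH H' hH' x hx y hy
      by_cases he : H = H'
      · subst he
        obtain ⟨e⟩ := hLiso H hH
        have : e ⟨x, hx⟩ * e ⟨y, hy⟩ = e ⟨y, hy⟩ * e ⟨x, hx⟩ := by
          have := habel (e ⟨x, hx⟩) (e ⟨y, hy⟩)
          exact this
        rw [← map_mul, ← map_mul] at this
        have h2 := e.injective this
        have h3 : (⟨x, hx⟩ : ↥H) * ⟨y, hy⟩ = ⟨y, hy⟩ * ⟨x, hx⟩ := h2
        simpa [Subtype.ext_iff] using h3
      · -- distinct members intersect trivially, hence commute
        haveI hHn : H.Normal := hLnorm H hH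
        haveI hH'n : H'.Normal := hLnorm H' hH'
        have hint : H ⊓ H' = ⊥ := by
          rcases hLmin H hH (H ⊓ H') ⟨fun g hg c => ⟨hHn.conj_mem g hg.1 c, hH'n.conj_mem g hg.2 c⟩⟩
            inf_le_left with h | h
          · exact h
          · have h1 : H ≤ H' := by rw [← h]; exact inf_le_right
            rcases hLmin H' hH' H hHn h1 with h2 | h2
            · rw [h2]; simp
            · exact absurd h2 he
        have hu : x * y * x⁻¹ * y⁻¹ ∈ H ⊓ H' := by
          constructor
          · have : x * (y * x⁻¹ * y⁻¹) ∈ H := H.mul_mem hx (by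
              have := hHn.conj_mem x⁻¹ (H.inv_mem hx) y
              simpa [mul_assoc] using this)
            simpa [mul_assoc] using this
          · have : (x * y * x⁻¹) * y⁻¹ ∈ H' := H'.mul_mem (hH'n.conj_mem y hy x) (H'.inv_mem hy)
            simpa [mul_assoc] using this
        rw [hint, Subgroup.mem_bot] at hu
        have h5 : x * y * x⁻¹ = y := by
          have := mul_inv_eq_one.mp hu
          simpa using this
        calc x * y = (x * y * x⁻¹) * x := by group
          _ = y * x := by rw [h5]
    -- hence every member is central, so N is abelian
    have hcentral : ∀ H ∈ L, ∀ x ∈ H, ∀ g : ↥N, g * x = x * g := by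
      intro H hH x hx g
      have hSle : S ≤ Subgroup.centralizer (H : Set ↥N) := by
        refine foldrSup_le ?_
        intro H' hH' y hy
        rw [Subgroup.mem_centralizer_iff]
        intro h hh
        exact hpair H hH H' hH' h hh y hy
      have hg : g ∈ Subgroup.centralizer (H : Set ↥N) := hSle (hStop ▸ Subgroup.mem_top g)
      exact (Subgroup.mem_centralizer_iff.mp hg x hx).symm
    obtain ⟨a, b, hab⟩ := hNA
    apply hab
    have haS : a ∈ S := hStop ▸ Subgroup.mem_top a
    -- a is central: S ≤ center
    have hScen : S ≤ Subgroup.center ↥N := by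
      refine foldrSup_le ?_
      intro H hH x hx
      rw [Subgroup.mem_center_iff]
      intro g
      exact hcentral H hH x hx g
    exact (Subgroup.mem_center_iff.mp (hScen haS) b).symm
  -- members distinct from T' centralize T'
  have hdistinct : ∀ H ∈ L, H ≠ T' → ∀ x ∈ H, ∀ t ∈ T', t * x = x * t := by
    intro H hH he x hx t ht
    haveI hHn : H.Normal := hLnorm H hH
    have hint : H ⊓ T' = ⊥ := by
      rcases hLmin H hH (H ⊓ T') ⟨fun g hg c => ⟨hHn.conj_mem g hg.1 c, hT'norm.conj_mem g hg.2 c⟩⟩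
        inf_le_left with h | h
      · exact h
      · have h1 : H ≤ T' := by rw [← h]; exact inf_le_right
        rcases hT'minimal H hHn h1 with h2 | h2
        · rw [h2]; simp
        · exact absurd h2 he
    have hu : x * t * x⁻¹ * t⁻¹ ∈ H ⊓ T' := by
      constructor
      · have : x * (t * x⁻¹ * t⁻¹) ∈ H := H.mul_mem hx (by
          have := hHn.conj_mem x⁻¹ (H.inv_mem hx) t
          simpa [mul_assoc] using this)
        simpa [mul_assoc] using this
      · have : (x * t * x⁻¹) * t⁻¹ ∈ T' := T'.mul_mem (hT'norm.conj_mem t ht x) (T'.inv_mem ht)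
        simpa [mul_assoc] using this
    rw [hint, Subgroup.mem_bot] at hu
    have h5 : x * t * x⁻¹ = t := by
      have := mul_inv_eq_one.mp hu
      simpa using this
    calc t * x = (x * t * x⁻¹) * x := by rw [h5]
      _ = x * t := by group
  -- T' is simple
  set C : Subgroup ↥N := Subgroup.centralizer (T' : Set ↥N) with hCdef
  haveI hCnorm : C.Normal := by
    constructor
    intro c hc g
    rw [hCdef, Subgroup.mem_centralizer_iff] at hc ⊢
    intro s hs
    have hmem : g⁻¹ * s * g ∈ T' := by
      have := hT'norm.conj_mem s hs g⁻¹
      simpa using this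
    have hcs := hc _ hmem
    calc s * (g * c * g⁻¹) = g * ((g⁻¹ * s * g) * c) * g⁻¹ := by group
      _ = g * (c * (g⁻¹ * s * g)) * g⁻¹ := by rw [hcs]
      _ = (g * c * g⁻¹) * s := by group
  have hTC : T' ⊔ C = ⊤ := by
    have hle : S ≤ T' ⊔ C := by
      refine foldrSup_le ?_
      intro H hH
      by_cases he : H = T'
      · exact he ▸ le_sup_left
      · refine le_trans ?_ le_sup_right
        intro x hx
        rw [hCdef, Subgroup.mem_centralizer_iff]
        intro t ht
        exact hdistinct H hH he x hx t ht
    exact top_unique (hStop ▸ hle)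
  haveI hT'nt : Nontrivial ↥T' := by
    rcases T'.bot_or_nontrivial with h | h
    · exact absurd h hT'ne
    · exact h
  haveI hsimple : IsSimpleGroup ↥T' := by
    constructor
    intro K hK
    have hKGnorm : (K.map T'.subtype).Normal := by
      constructor
      intro x hx g
      obtain ⟨k, hk, rfl⟩ := hx
      have hg : g ∈ (↑(T' ⊔ C) : Set ↥N) := hTC.symm ▸ Subgroup.mem_top g
      rw [Subgroup.mul_normal] at hg
      obtain ⟨t, ht, c, hc, htc⟩ := Set.mem_mul.mp hg
      have hck : (⟨t, ht⟩ : ↥T') * k * (⟨t, ht⟩ : ↥T')⁻¹ ∈ K := hK.conj_mem k hk ⟨t, ht⟩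
      have hcx : c * (k : ↥N) * c⁻¹ = (k : ↥N) := by
        have hcomm := Subgroup.mem_centralizer_iff.mp hc (k : ↥N) (k.2)
        calc c * (k : ↥N) * c⁻¹ = ((k : ↥N) * c) * c⁻¹ := by rw [← hcomm]
          _ = (k : ↥N) := by group
      refine ⟨⟨t, ht⟩ * k * ⟨t, ht⟩⁻¹, hck, ?_⟩
      show (t * (k : ↥N) * t⁻¹ : ↥N) = g * (k : ↥N) * g⁻¹
      calc t * (k : ↥N) * t⁻¹ = t * (c * (k : ↥N) * c⁻¹) * t⁻¹ := by rw [hcx]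
        _ = (t * c) * (k : ↥N) * (t * c)⁻¹ := by group
        _ = g * (k : ↥N) * g⁻¹ := by rw [htc]
    rcases hT'minimal (K.map T'.subtype) hKGnorm (Subgroup.map_subtype_le K) with h | h
    · left
      apply Subgroup.map_injective T'.subtype_injective
      rw [h, Subgroup.map_bot]
    · right
      apply Subgroup.map_injective T'.subtype_injective
      rw [h, ← MonoidHom.range_eq_map, Subgroup.range_subtype]
  -- apply the decomposition lemma
  obtain ⟨r, ⟨e⟩⟩ := lemQ hT'na L.length ↥N inferInstance L le_rfl hLnorm hLmin hLiso hStop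
  have hrpos : 0 < r := by
    rcases Nat.eq_zero_or_pos r with rfl | h
    · exfalso
      haveI : Subsingleton (Fin 0 → ↥T') := inferInstance
      obtain ⟨x, y, hxy⟩ := hNnt
      exact hxy (e.injective (Subsingleton.elim _ _))
    · exact h
  -- shrink the simple group to `Type 0`
  haveI hsmall : Small.{0} ↥T' := small_of_injective (Finite.equivFin ↥T').injective
  let em : Shrink.{0} ↥T' ≃* ↥T' := Shrink.mulEquiv
  haveI : Nontrivial (Shrink.{0} ↥T') := em.toEquiv.nontrivial
  haveI hsimpleFin : IsSimpleGroup (Shrink.{0} ↥T') :=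
    IsSimpleGroup.isSimpleGroup_of_surjective em.symm.toMonoidHom em.symm.surjective
  have hpairFin : ∃ a b : Shrink.{0} ↥T', a * b ≠ b * a := by
    obtain ⟨a, b, hab⟩ := hT'na
    refine ⟨em.symm a, em.symm b, fun h => hab ?_⟩
    rw [← map_mul, ← map_mul] at h
    exact em.symm.injective h
  refine ⟨Shrink.{0} ↥T', inferInstance, hsimpleFin, hpairFin, r, hrpos, ⟨?_⟩⟩
  exact e.trans (MulEquiv.piCongrRight fun _ => em.symm)


variable {X Ω B}

lemma conj_inl (y : (Ω → B) ⋊[permAut X Ω B] X) (f : Ω → B) :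
    y * inl f * y⁻¹ = inl (y.left * (permAut X Ω B y.right f) * y.left⁻¹) := by
  obtain ⟨a, x⟩ := y
  show (⟨a, x⟩ : (Ω → B) ⋊[permAut X Ω B] X) * inl f * (⟨a, x⟩ : (Ω → B) ⋊[permAut X Ω B] X)⁻¹
      = inl (a * permAut X Ω B x f * a⁻¹)
  rw [mk_eq_inl_mul_inr]
  calc inl a * inr x * inl f * (inl a * inr x)⁻¹
      = inl a * (inr x * inl f * (inr x)⁻¹) * (inl a)⁻¹ := by group
    _ = inl a * inl (permAut X Ω B x f) * (inl a)⁻¹ := by rw [← map_inv, ← inl_aut]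
    _ = inl (a * permAut X Ω B x f * a⁻¹) := by rw [← map_inv, ← map_mul, ← map_mul]

lemma permAut_apply (x : X) (f : Ω → B) (ω : Ω) :
    (permAut X Ω B x f) ω = f (x⁻¹ • ω) := rfl

open scoped commutatorElement in
lemma keyL [Fintype Ω] [Nonempty Ω] [MulAction.IsPretransitive X Ω]
    (hz : Subgroup.center B = ⊥)
    (N : Subgroup B) (hN : N.Normal) (hNbot : N ≠ ⊥)
    (hNmin : ∀ N' : Subgroup B, N'.Normal → N' ≤ N → N' = ⊥ ∨ N' = N)
    (K : Subgroup ((Ω → B) ⋊[permAut X Ω B] X)) (hKn : K.Normal)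
    (hle : K ≤ (Subgroup.pi Set.univ fun _ : Ω => N).map (inl : (Ω → B) →* _))
    (hne : K ≠ ⊥) :
    K = (Subgroup.pi Set.univ fun _ : Ω => N).map (inl : (Ω → B) →* _) := by
  classical
  set PN : Subgroup (Ω → B) := Subgroup.pi Set.univ fun _ : Ω => N with hPNdef
  set H : Subgroup (Ω → B) := K.comap (inl : (Ω → B) →* _) with hHdef
  have hHle : H ≤ PN := by
    intro f hf
    have : inl f ∈ K := hf
    obtain ⟨g, hg, hgeq⟩ := hle this
    rwa [← inl_injective hgeq]
  have hmapH : H.map (inl : (Ω → B) →* _) = K := by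
    refine le_antisymm ?_ ?_
    · rintro k ⟨f, hf, rfl⟩
      exact hf
    · intro k hk
      obtain ⟨f, _, rfl⟩ := hle hk
      exact ⟨f, hk, rfl⟩
  have hHconj : ∀ g : Ω → B, ∀ h ∈ H, g * h * g⁻¹ ∈ H := by
    intro g h hh
    have : inl (g * h * g⁻¹) = (inl g : (Ω → B) ⋊[permAut X Ω B] X) * inl h * (inl g)⁻¹ := by
      rw [map_mul, map_mul, map_inv]
    show inl (g * h * g⁻¹) ∈ K
    rw [this]
    exact hKn.conj_mem _ hh (inl g)
  have hHaut : ∀ x : X, ∀ h ∈ H, permAut X Ω B x h ∈ H := by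
    intro x h hh
    show inl (permAut X Ω B x h) ∈ K
    rw [inl_aut]
    have : (inr x : (Ω → B) ⋊[permAut X Ω B] X) * inl h * inr x⁻¹
        = inr x * inl h * (inr x)⁻¹ := by rw [map_inv]
    rw [this]
    exact hKn.conj_mem _ hh (inr x)
  have hex : ∃ h ∈ H, h ≠ 1 := by
    by_contra hcon
    push_neg at hcon
    apply hne
    rw [← hmapH]
    have : H = ⊥ := by
      rw [Subgroup.eq_bot_iff_forall]
      exact hcon
    rw [this, Subgroup.map_bot]
  have hproj_ne : ∀ ω : Ω, ∃ h ∈ H, h ω ≠ 1 := by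
    obtain ⟨h₀, hh₀, h₀ne⟩ := hex
    obtain ⟨ω₀, hω₀⟩ := Function.ne_iff.mp h₀ne
    intro ω
    obtain ⟨x, hx⟩ := MulAction.exists_smul_eq X ω₀ ω
    refine ⟨permAut X Ω B x h₀, hHaut x h₀ hh₀, ?_⟩
    rw [permAut_apply, ← hx, inv_smul_smul]
    simpa using hω₀
  have hKω : ∀ ω : Ω, H.map (Pi.evalMonoidHom (fun _ : Ω => B) ω) = N := by
    intro ω
    have hnormal : (H.map (Pi.evalMonoidHom (fun _ : Ω => B) ω)).Normal := by
      constructor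
      rintro k ⟨h, hh, rfl⟩ b
      refine ⟨(fun _ => b) * h * (fun _ => b)⁻¹, hHconj _ h hh, rfl⟩
    have hlee : H.map (Pi.evalMonoidHom (fun _ : Ω => B) ω) ≤ N := by
      rintro k ⟨h, hh, rfl⟩
      exact (hHle hh) ω trivial
    refine (hNmin _ hnormal hlee).resolve_left ?_
    obtain ⟨h, hh, hne'⟩ := hproj_ne ω
    intro hbot
    apply hne'
    have : h ω ∈ (⊥ : Subgroup B) := hbot ▸ ⟨h, hh, rfl⟩
    simpa [Subgroup.mem_bot] using this
  have hcommN : ⁅(⊤ : Subgroup B), N⁆ = N := by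
    haveI := hN
    refine (hNmin _ (Subgroup.commutator_normal ⊤ N) (Subgroup.commutator_le_right ⊤ N)).resolve_left ?_
    intro hbot
    apply hNbot
    have hcent : N ≤ Subgroup.center B := by
      intro x hx
      rw [Subgroup.mem_center_iff]
      intro g
      have hg : g ∈ Subgroup.centralizer (N : Set B) := by
        have := Subgroup.commutator_eq_bot_iff_le_centralizer.mp hbot
        exact this (Subgroup.mem_top g)
      exact (Subgroup.mem_centralizer_iff.mp hg x hx).symm
    rw [hz] at hcent
    exact le_bot_iff.mp hcent
  have hsingle : ∀ ω : Ω, ∀ n ∈ N, Pi.mulSingle ω n ∈ H := by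
    intro ω n hn
    have hSle : ⁅(⊤ : Subgroup B), N⁆ ≤ H.comap (MonoidHom.mulSingle (fun _ : Ω => B) ω) := by
      rw [Subgroup.commutator_le]
      intro b _ m hm
      have hmm : m ∈ H.map (Pi.evalMonoidHom (fun _ : Ω => B) ω) := (hKω ω).symm ▸ hm
      obtain ⟨h, hh, heq⟩ := hmm
      have hc : Pi.mulSingle ω b * h * (Pi.mulSingle ω b)⁻¹ * h⁻¹ ∈ H :=
        H.mul_mem (hHconj _ h hh) (H.inv_mem hh)
      have hceq : Pi.mulSingle ω b * h * (Pi.mulSingle ω b)⁻¹ * h⁻¹ = Pi.mulSingle ω ⁅b, m⁆ := by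
        funext ω'
        by_cases hωω : ω' = ω
        · subst hωω
          simp only [Pi.mul_apply, Pi.inv_apply, Pi.mulSingle_eq_same]
          rw [← heq]
          rfl
        · simp only [Pi.mul_apply, Pi.inv_apply, Pi.mulSingle_eq_of_ne hωω]
          simp
      show Pi.mulSingle ω ⁅b, m⁆ ∈ H
      rw [← hceq]
      exact hc
    have : n ∈ ⁅(⊤ : Subgroup B), N⁆ := hcommN.symm ▸ hn
    exact hSle this
  have hPNH : PN ≤ H := by
    intro f hf
    rw [← Finset.noncommProd_mulSingle f]
    exact Subgroup.noncommProd_mem H _ fun ω _ => hsingle ω (f ω) (hf ω trivial)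
  rw [← hmapH, le_antisymm hHle hPNH]


end Aux14

open Aux14 in
/-- let `X` act transitively on a finite set `Ω`, `B` a finite perfect
centerless group, `Y = X ⋉ B^Ω`, `M < Y` proper maximal clean with `π(M) = X`.  If
`M ∩ B^Ω ≠ 1`, `pr_ω(M ∩ B^Ω) = B` for all `ω`, and there is a minimal normal
subgroup `N ⊴ B` with `M ∩ N^Ω ≠ 1`, then `N` is a direct product of isomorphic
non-abelian simple groups, `pr_ω(M ∩ N^Ω) = N` for all `ω ∈ Ω`, and
`M = N_Y(M ∩ N^Ω)`. -/
theorem clean_maximal_full_proj_with_minimal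
    [Fintype X] [Fintype Ω] [Nonempty Ω] [MulAction.IsPretransitive X Ω]
    [Fintype B] [Nontrivial B]
    (hperf : ⁅(⊤ : Subgroup B), (⊤ : Subgroup B)⁆ = ⊤)
    (hz : Subgroup.center B = ⊥)
    (M : Subgroup ((Ω → B) ⋊[permAut X Ω B] X))
    (hM : IsCoatom M)
    (hclean : ∀ N' : Subgroup B, N'.Normal →
      Subgroup.map (inl : (Ω → B) →* _) (Subgroup.pi Set.univ fun _ : Ω => N') ≤ M →
      N' = ⊥)
    (hsurj : M.map (rightHom : _ →* X) = ⊤)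
    (hMB : Subgroup.comap (inl : (Ω → B) →* _) M ≠ ⊥)
    (hproj : ∀ ω : Ω, Subgroup.map (Pi.evalMonoidHom (fun _ : Ω => B) ω)
      (Subgroup.comap (inl : (Ω → B) →* _) M) = ⊤)
    (N : Subgroup B) (hN : N.Normal) (hNbot : N ≠ ⊥)
    (hNmin : ∀ N' : Subgroup B, N'.Normal → N' ≤ N → N' = ⊥ ∨ N' = N)
    (hMN : Subgroup.comap (inl : (Ω → B) →* _) M ⊓
      (Subgroup.pi Set.univ fun _ : Ω => N) ≠ ⊥) :
    (∃ (T : Type) (_ : Group T), IsSimpleGroup T ∧ (∃ a b : T, a * b ≠ b * a) ∧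
      ∃ r : ℕ, 0 < r ∧ Nonempty (↥N ≃* (Fin r → T))) ∧
    (∀ ω : Ω, Subgroup.map (Pi.evalMonoidHom (fun _ : Ω => B) ω)
      (Subgroup.comap (inl : (Ω → B) →* _) M ⊓
        (Subgroup.pi Set.univ fun _ : Ω => N)) = N) ∧
    M = Subgroup.normalizer ((M ⊓ Subgroup.map (inl : (Ω → B) →* _)
      (Subgroup.pi Set.univ fun _ : Ω => N) : Subgroup _) : Set _) := by
  classical
  set PN : Subgroup (Ω → B) := Subgroup.pi Set.univ fun _ : Ω => N with hPNdef
  set A : Subgroup ((Ω → B) ⋊[permAut X Ω B] X) := PN.map (inl : (Ω → B) →* _) with hAdef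
  set H0 : Subgroup (Ω → B) := Subgroup.comap (inl : (Ω → B) →* _) M with hH0def
  -- A is normal in Y
  haveI hAnorm : A.Normal := by
    constructor
    rintro a ⟨f, hf, rfl⟩ y
    rw [conj_inl]
    refine ⟨_, ?_, rfl⟩
    intro ω _
    simp only [Pi.mul_apply, Pi.inv_apply]
    exact hN.conj_mem _ (hf (y.right⁻¹ • ω) trivial) (y.left ω)
  -- A is not contained in M
  have hAnotle : ¬ A ≤ M := fun hle => hNbot (hclean N hN hle)
  -- elements of H0 ⊓ PN
  have hSne : M ⊓ A ≠ ⊥ := by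
    obtain ⟨f, hf⟩ := Subgroup.ne_bot_iff_exists_ne_one.mp hMN
    intro hcon
    have hfM : inl (f : Ω → B) ∈ M := f.2.1
    have hfA : inl (f : Ω → B) ∈ A := ⟨f, f.2.2, rfl⟩
    have : inl (f : Ω → B) ∈ M ⊓ A := ⟨hfM, hfA⟩
    rw [hcon, Subgroup.mem_bot] at this
    have hf1 : (f : Ω → B) = 1 :=
      inl_injective (φ := permAut X Ω B) (by rw [this, map_one])
    exact hf (by ext : 1; rw [hf1]; rfl)
  -- M normalizes M ⊓ A
  have hMnorm : M ≤ Subgroup.normalizer ((M ⊓ A : Subgroup _) : Set _) := by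
    intro m hm
    rw [Subgroup.mem_normalizer_iff]
    intro h
    constructor
    · intro hh
      exact ⟨M.mul_mem (M.mul_mem hm hh.1) (M.inv_mem hm), hAnorm.conj_mem h hh.2 m⟩
    · intro hc
      have heq : m⁻¹ * (m * h * m⁻¹) * m⁻¹⁻¹ = h := by group
      have h2 := hAnorm.conj_mem _ hc.2 m⁻¹
      rw [heq] at h2
      have h1 : h = m⁻¹ * (m * h * m⁻¹) * m := by group
      exact ⟨by rw [h1]; exact M.mul_mem (M.mul_mem (M.inv_mem hm) hc.1) hm, h2⟩
  -- the normalizer of M ⊓ A is not ⊤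
  have hnormalizer_ne_top : Subgroup.normalizer ((M ⊓ A : Subgroup ((Ω → B) ⋊[permAut X Ω B] X)) : Set ((Ω → B) ⋊[permAut X Ω B] X)) ≠ ⊤ := by
    intro htop
    have hnorm : (M ⊓ A).Normal := Subgroup.normalizer_eq_top_iff.mp htop
    have heq : M ⊓ A = A := keyL hz N hN hNbot hNmin (M ⊓ A) hnorm inf_le_right hSne
    exact hAnotle (heq ▸ inf_le_left)
  -- conclusion 3
  have hconc3 : M = Subgroup.normalizer ((M ⊓ A : Subgroup _) : Set _) := by
    rcases eq_or_lt_of_le hMnorm with h | h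
    · exact h
    · exact absurd (hM.2 _ h) hnormalizer_ne_top
  -- N is nonabelian
  have hNA : ∃ a b : ↥N, a * b ≠ b * a := by
    by_contra hcon
    push_neg at hcon
    have hAcomm : ∀ a ∈ A, ∀ b ∈ A, a * b = b * a := by
      rintro a ⟨f, hf, rfl⟩ b ⟨g, hg, rfl⟩
      rw [← map_mul, ← map_mul]
      congr 1
      funext ω
      have := hcon ⟨f ω, hf ω trivial⟩ ⟨g ω, hg ω trivial⟩
      simpa [Subtype.ext_iff] using this
    have hAle_norm : A ≤ Subgroup.normalizer ((M ⊓ A : Subgroup _) : Set _) := by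
      intro a ha
      rw [Subgroup.mem_normalizer_iff]
      intro h
      constructor
      · intro hh
        have : a * h * a⁻¹ = h := by rw [hAcomm a ha h hh.2]; group
        rw [this]; exact hh
      · intro hc
        have h1 : h = a⁻¹ * (a * h * a⁻¹) * a := by group
        have hx := hAcomm a ha _ hc.2
        have h2 : a⁻¹ * (a * h * a⁻¹) * a = a * h * a⁻¹ := by
          calc a⁻¹ * (a * h * a⁻¹) * a = a⁻¹ * ((a * h * a⁻¹) * a) := by group
            _ = a⁻¹ * (a * (a * h * a⁻¹)) := by rw [← hx]
            _ = a * h * a⁻¹ := by group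
        rw [h1, h2]; exact hc
    have htop : M ⊔ A = ⊤ := hM.2 _ (left_lt_sup.mpr hAnotle)
    exact hnormalizer_ne_top (top_unique (htop ▸ sup_le hMnorm hAle_norm))
  -- conclusion 2
  have hconc2 : ∀ ω : Ω, Subgroup.map (Pi.evalMonoidHom (fun _ : Ω => B) ω) (H0 ⊓ PN) = N := by
    intro ω
    have hnormal : (Subgroup.map (Pi.evalMonoidHom (fun _ : Ω => B) ω) (H0 ⊓ PN)).Normal := by
      constructor
      rintro k ⟨h, hh, rfl⟩ b
      have hb : b ∈ Subgroup.map (Pi.evalMonoidHom (fun _ : Ω => B) ω) H0 :=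
        (hproj ω).symm ▸ Subgroup.mem_top b
      obtain ⟨g, hg, hgω⟩ := hb
      refine ⟨g * h * g⁻¹, ⟨?_, ?_⟩, ?_⟩
      · show inl (g * h * g⁻¹) ∈ M
        have : inl (g * h * g⁻¹) = (inl g : (Ω → B) ⋊[permAut X Ω B] X) * inl h * (inl g)⁻¹ := by
          rw [map_mul, map_mul, map_inv]
        rw [this]
        exact M.mul_mem (M.mul_mem hg hh.1) (M.inv_mem hg)
      · intro ω' _
        simp only [Pi.mul_apply, Pi.inv_apply]
        exact hN.conj_mem _ (hh.2 ω' trivial) (g ω')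
      · show (g * h * g⁻¹) ω = b * h ω * b⁻¹
        have hgω' : g ω = b := hgω
        simp only [Pi.mul_apply, Pi.inv_apply]
        rw [hgω']
    have hlee : Subgroup.map (Pi.evalMonoidHom (fun _ : Ω => B) ω) (H0 ⊓ PN) ≤ N := by
      rintro k ⟨h, hh, rfl⟩
      exact hh.2 ω trivial
    refine (hNmin _ hnormal hlee).resolve_left ?_
    -- nontrivial: move a nontrivial coordinate using transitivity and hsurj
    obtain ⟨f, hf⟩ := Subgroup.ne_bot_iff_exists_ne_one.mp hMN
    have hfne : (f : Ω → B) ≠ 1 := by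
      intro h1
      apply hf
      ext
      rw [h1]
      rfl
    obtain ⟨ω₀, hω₀⟩ := Function.ne_iff.mp hfne
    obtain ⟨x, hx⟩ := MulAction.exists_smul_eq X ω₀ ω
    have hxM : x ∈ M.map (rightHom : _ →* X) := hsurj.symm ▸ Subgroup.mem_top x
    obtain ⟨m, hm, hmx⟩ := hxM
    set h' : Ω → B := m.left * (permAut X Ω B m.right (f : Ω → B)) * m.left⁻¹ with hh'def
    have hconjM : inl h' ∈ M := by
      rw [← conj_inl]
      exact M.mul_mem (M.mul_mem hm f.2.1) (M.inv_mem hm)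
    have hh'PN : h' ∈ PN := by
      intro ω' _
      simp only [hh'def, Pi.mul_apply, Pi.inv_apply]
      exact hN.conj_mem _ (f.2.2 (m.right⁻¹ • ω') trivial) (m.left ω')
    have hh'ω : h' ω ≠ 1 := by
      have hmr : m.right = x := hmx
      have hval : h' ω = m.left ω * (f : Ω → B) ω₀ * (m.left ω)⁻¹ := by
        simp only [hh'def, Pi.mul_apply, Pi.inv_apply, permAut_apply]
        rw [hmr, ← hx, inv_smul_smul]
      rw [hval]
      intro hone
      apply hω₀
      have : (f : Ω → B) ω₀ = (m.left ω)⁻¹ * (m.left ω * (f : Ω → B) ω₀ * (m.left ω)⁻¹) * m.left ω := by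
        group
      rw [this, hone]
      simp
    intro hbot
    apply hh'ω
    have : h' ω ∈ (⊥ : Subgroup B) := hbot ▸ ⟨h', ⟨hconjM, hh'PN⟩, rfl⟩
    simpa [Subgroup.mem_bot] using this
  haveI : Finite B := inferInstance
  exact ⟨structN N hN hNbot hNmin hNA, hconc2, hconc3⟩
end
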